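/- arXiv:hep-th/0301088 — 7 statements merged into one kernel-verified Lean document; each statement's English description precedes it below -/
import Mathlib

section
/- The series of reciprocal central binomial coefficients satisfies: the sum over k from 1 to infinity of 4^k / (k^2 * binom(2k, k)) equals pi^2/2. (This is the summation of the even-intermediate-state contributions Gamma^2(k)/Gamma(2k+1) * 4^k arising in the short-distance dimension of the order/disorder field of the scaling Ising model.) -/
open scoped Real
open MeasureTheory Real Set Filter


lemma aux_deriv (k : ℕ) (x : ℝ) :
    HasDerivAt (fun x : ℝ => x * (1 - x^2)^(k+1))
      ((2*(k:ℝ)+3) * (1-x^2)^(k+1) - (2*(k:ℝ)+2) * (1-x^2)^k) x := by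
  have h2 : HasDerivAt (fun x : ℝ => (1 - x^2)^(k+1))
      (((k:ℝ)+1) * (1-x^2)^k * (0 - 2*x)) x := by
    have := ((hasDerivAt_pow 2 x).const_sub 1).fun_pow (k+1)
    simpa [pow_one, mul_comm] using this
  have := (hasDerivAt_id x).mul h2
  refine this.congr_deriv ?_
  simp only [id_eq]
  ring

lemma aux_J (k : ℕ) :
    ∫ x in (0:ℝ)..1, (1 - x^2)^k
      = 4^k * (Nat.factorial k : ℝ)^2 / Nat.factorial (2*k+1) := by
  induction k with
  | zero => simp
  | succ k ih =>
    have cont : ∀ m : ℕ, Continuous (fun x : ℝ => (1 - x^2)^m) := by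
      intro m; fun_prop
    have key : ∫ x in (0:ℝ)..1,
        ((2*(k:ℝ)+3) * (1-x^2)^(k+1) - (2*(k:ℝ)+2) * (1-x^2)^k) = 0 := by
      rw [intervalIntegral.integral_eq_sub_of_hasDerivAt
        (fun x _ => aux_deriv k x) (by apply Continuous.intervalIntegrable; fun_prop)]
      norm_num
    rw [intervalIntegral.integral_sub (((cont _).intervalIntegrable _ _).const_mul _)
        (((cont _).intervalIntegrable _ _).const_mul _),
      intervalIntegral.integral_const_mul, intervalIntegral.integral_const_mul, ih,
      sub_eq_zero] at key
    have h1 : (Nat.factorial (2*(k+1)+1) : ℝ)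
        = (2*(k:ℝ)+3) * (2*(k:ℝ)+2) * Nat.factorial (2*k+1) := by
      have : 2*(k+1)+1 = (2*k+1) + 1 + 1 := by ring
      rw [this, Nat.factorial_succ, Nat.factorial_succ]
      push_cast; ring
    have hf : (Nat.factorial (2*k+1) : ℝ) ≠ 0 := by positivity
    have h3 : (2*(k:ℝ)+3) ≠ 0 := by positivity
    have heq : (2*(k:ℝ)+3) * ∫ x in (0:ℝ)..1, (1-x^2)^(k+1)
        = (2*(k:ℝ)+2) * (4^k * (Nat.factorial k : ℝ)^2 / Nat.factorial (2*k+1)) := key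
    have hJ : ∫ x in (0:ℝ)..1, (1-x^2)^(k+1)
        = (2*(k:ℝ)+2) * (4^k * (Nat.factorial k : ℝ)^2 / Nat.factorial (2*k+1)) / (2*(k:ℝ)+3) := by
      rw [eq_div_iff h3]; linarith [key]
    have hk1 : ((Nat.factorial (k+1) : ℝ)) = ((k:ℝ)+1) * Nat.factorial k := by
      rw [Nat.factorial_succ]; push_cast; ring
    rw [hJ, h1, hk1]
    field_simp
    ring


lemma term_eq (k : ℕ) :
    (4 : ℝ) ^ (k + 1) / (((k : ℝ) + 1) ^ 2 * Nat.centralBinom (k + 1))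
      = 2/((k:ℝ)+1) * (4^k * (Nat.factorial k : ℝ)^2 / Nat.factorial (2*k+1)) := by
  have hcb : ((Nat.centralBinom (k+1) : ℝ)) * (((k:ℝ)+1) * Nat.factorial k)^2
      = (2*(k:ℝ)+2) * Nat.factorial (2*k+1) := by
    have h0 : Nat.centralBinom (k+1) * Nat.factorial (k+1) * Nat.factorial (k+1)
        = Nat.factorial (2*(k+1)) := by
      rw [Nat.centralBinom]
      have := Nat.choose_mul_factorial_mul_factorial (by omega : k+1 ≤ 2*(k+1))
      have h2 : 2*(k+1) - (k+1) = k+1 := by omega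
      rw [h2] at this
      exact this
    have h0' : ((Nat.centralBinom (k+1) : ℝ)) * Nat.factorial (k+1) * Nat.factorial (k+1)
        = Nat.factorial (2*(k+1)) := by exact_mod_cast congrArg (Nat.cast : ℕ → ℝ) h0
    have hk1 : ((Nat.factorial (k+1) : ℝ)) = ((k:ℝ)+1) * Nat.factorial k := by
      rw [Nat.factorial_succ]; push_cast; ring
    have h2 : (Nat.factorial (2*(k+1)) : ℝ) = (2*(k:ℝ)+2) * Nat.factorial (2*k+1) := by
      have h3 : 2*(k+1) = (2*k+1) + 1 := by ring
      rw [h3, Nat.factorial_succ]; push_cast; ring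
    rw [hk1, h2] at h0'
    linear_combination h0'
  have hfk : (0:ℝ) < Nat.factorial k := by positivity
  have hfp : (0:ℝ) < Nat.factorial (2*k+1) := by positivity
  have hk : (0:ℝ) < (k:ℝ)+1 := by positivity
  have hCBval : ((Nat.centralBinom (k+1) : ℝ))
      = (2*(k:ℝ)+2) * Nat.factorial (2*k+1) / (((k:ℝ)+1) * Nat.factorial k)^2 := by
    rw [eq_div_iff (by positivity)]
    linear_combination hcb
  rw [hCBval]
  field_simp
  ring

lemma hasSumA {u : ℝ} (h0 : 0 < u) (h1 : u < 1) :
    HasSum (fun k : ℕ => 2/((k:ℝ)+1) * (1-u^2)^k) (-4 * Real.log u / (1-u^2)) := by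
  have hu2 : u^2 < 1 := by nlinarith
  have hx : |1 - u^2| < 1 := by rw [abs_lt]; constructor <;> nlinarith
  have hne : (1:ℝ) - u^2 ≠ 0 := by nlinarith
  have H := (Real.hasSum_pow_div_log_of_abs_lt_one hx).mul_left (2/(1-u^2))
  have h12 : (1:ℝ) - (1 - u^2) = u^2 := by ring
  rw [h12] at H
  have hlog : Real.log (u^2) = 2 * Real.log u := by
    rw [Real.log_pow]; norm_num
  have hfun : (fun k : ℕ => 2/((k:ℝ)+1) * (1-u^2)^k)
      = fun k : ℕ => 2/(1-u^2) * ((1-u^2)^(k+1)/((k:ℝ)+1)) := by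
    funext k
    field_simp
    ring
  have hval : -4 * Real.log u / (1-u^2) = 2/(1-u^2) * -Real.log (u^2) := by
    rw [hlog]; ring
  rw [hfun, hval]
  exact H

lemma hasSumB {u : ℝ} (h0 : 0 < u) (h1 : u < 1) :
    HasSum (fun n : ℕ => 4 * (u^(2*n) * (-Real.log u))) (-4 * Real.log u / (1-u^2)) := by
  have hu2 : u^2 < 1 := by nlinarith
  have hne : (1:ℝ) - u^2 ≠ 0 := by nlinarith
  have H := (hasSum_geometric_of_lt_one (by positivity : (0:ℝ) ≤ u^2) hu2).mul_left
    (4 * (-Real.log u))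
  have hfun : (fun n : ℕ => 4 * (u^(2*n) * (-Real.log u)))
      = fun n : ℕ => 4 * (-Real.log u) * (u^2)^n := by
    funext n; rw [← pow_mul]; ring
  have hval : -4 * Real.log u / (1-u^2) = 4 * (-Real.log u) * (1-u^2)⁻¹ := by
    rw [div_eq_mul_inv]; ring
  rw [hfun, hval]
  exact H

lemma hasSum_odd_sq : HasSum (fun n : ℕ => (1:ℝ)/(2*(n:ℝ)+1)^2) (π^2/8) := by
  have hall : HasSum (fun n : ℕ => (1:ℝ)/(n:ℝ)^2) (π^2/6) := hasSum_zeta_two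
  have he : HasSum (fun k : ℕ => (1:ℝ)/((2*k : ℕ):ℝ)^2) (π^2/24) := by
    have H := hall.mul_left (1/4)
    have hfun : (fun k : ℕ => (1:ℝ)/((2*k : ℕ):ℝ)^2)
        = fun k : ℕ => 1/4 * ((1:ℝ)/(k:ℝ)^2) := by
      funext k
      push_cast
      rw [mul_pow, one_div, one_div, one_div, mul_inv]
      norm_num
    rw [hfun]
    convert H using 1
    exacts [rfl, by ring]
  have hinj : Function.Injective (fun k : ℕ => 2*k+1) := by
    intro a b h
    simp only at h
    omega
  obtain ⟨b, hb⟩ := (hall.summable.comp_injective hinj : Summable _)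
  have hb' : HasSum (fun k : ℕ => (1:ℝ)/((2*k+1 : ℕ):ℝ)^2) b := hb
  have hsum := HasSum.even_add_odd (f := fun n : ℕ => (1:ℝ)/(n:ℝ)^2) he hb'
  have hbeq : b = π^2/8 := by
    have h6 := hall.unique hsum
    linarith
  rw [hbeq] at hb'
  have hfun2 : (fun n : ℕ => (1:ℝ)/(2*(n:ℝ)+1)^2)
      = fun k : ℕ => (1:ℝ)/((2*k+1 : ℕ):ℝ)^2 := by
    funext n
    push_cast
    ring
  rw [hfun2]
  exact hb'


lemma integrableOn_pow_neg_log (m : ℕ) :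
    IntegrableOn (fun x : ℝ => x^m * (-Real.log x)) (Ioc (0:ℝ) 1) := by
  have hg : IntegrableOn (fun x : ℝ => 2 * x ^ (-(1/2) : ℝ)) (Ioc (0:ℝ) 1) := by
    have := intervalIntegral.intervalIntegrable_rpow' (a := 0) (b := 1)
      (by norm_num : (-1:ℝ) < -(1/2))
    have h2 := (intervalIntegrable_iff_integrableOn_Ioc_of_le (by norm_num : (0:ℝ) ≤ 1)).mp this
    exact h2.const_mul 2
  apply Integrable.mono' hg
  · apply Measurable.aestronglyMeasurable
    exact (measurable_id.pow_const m).mul Real.measurable_log.neg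
  · rw [ae_restrict_iff' measurableSet_Ioc]
    refine Filter.Eventually.of_forall (fun x hx => ?_)
    obtain ⟨hx0, hx1⟩ := hx
    have hlog : Real.log x ≤ 0 := Real.log_nonpos hx0.le hx1
    have hxm : x^m ≤ 1 := pow_le_one₀ hx0.le hx1
    have hxmpos : (0:ℝ) < x^m := by positivity
    have hrp : (0:ℝ) < x ^ (-(1/2) : ℝ) := Real.rpow_pos_of_pos hx0 _
    have hkey : -Real.log x ≤ 2 * x ^ (-(1/2) : ℝ) := by
      have h1 : Real.log (x ^ (-(1/2) : ℝ)) = -(1/2) * Real.log x := Real.log_rpow hx0 _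
      have h2 : Real.log (x ^ (-(1/2) : ℝ)) ≤ x ^ (-(1/2) : ℝ) - 1 :=
        Real.log_le_sub_one_of_pos hrp
      nlinarith
    rw [Real.norm_eq_abs, abs_of_nonneg (by nlinarith : (0:ℝ) ≤ x^m * (-Real.log x))]
    nlinarith

lemma integral_pow_neg_log (m : ℕ) :
    ∫ x in (0:ℝ)..1, x^m * (-Real.log x) = 1/((m:ℝ)+1)^2 := by
  set F : ℝ → ℝ := fun x => (x^(m+1) * (1 - ((m:ℝ)+1) * Real.log x)) / ((m:ℝ)+1)^2 with hF
  have hm1 : ((m:ℝ)+1) ≠ 0 := by positivity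
  have hF0 : F 0 = 0 := by simp [hF, zero_pow (Nat.succ_ne_zero m)]
  have hF1 : F 1 = 1/((m:ℝ)+1)^2 := by simp [hF]
  have hderiv : ∀ x ∈ Ioo (0:ℝ) 1, HasDerivAt F (x^m * (-Real.log x)) x := by
    intro x hx
    have hx0 : (0:ℝ) < x := hx.1
    have h1 : HasDerivAt (fun x : ℝ => x^(m+1)) (((m:ℝ)+1) * x^m) x := by
      simpa using hasDerivAt_pow (m+1) x
    have h2 : HasDerivAt (fun x : ℝ => 1 - ((m:ℝ)+1) * Real.log x)
        (-(((m:ℝ)+1) * x⁻¹)) x :=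
      ((Real.hasDerivAt_log hx0.ne').const_mul ((m:ℝ)+1)).const_sub 1
    have h3 := (h1.mul h2).div_const (((m:ℝ)+1)^2)
    refine h3.congr_deriv ?_
    field_simp
    ring
  have hcont : ContinuousOn F (Icc (0:ℝ) 1) := by
    intro x hx
    rcases eq_or_ne x 0 with rfl | hxne
    · apply ContinuousWithinAt.mono _ (Icc_subset_Ici_self)
      rw [← continuousWithinAt_Ioi_iff_Ici]
      rw [ContinuousWithinAt, hF0]
      have t2 : Tendsto (fun x : ℝ => Real.log x * x ^ (m+1)) (nhdsWithin 0 (Ioi 0)) (nhds 0) := by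
        have h := tendsto_log_mul_rpow_nhdsGT_zero
          (by positivity : (0:ℝ) < (m:ℝ)+1)
        apply h.congr'
        filter_upwards [self_mem_nhdsWithin] with y hy
        rw [show ((m:ℝ)+1) = ((m+1 : ℕ):ℝ) by push_cast; ring, Real.rpow_natCast]
      have t1 : Tendsto (fun x : ℝ => x ^ (m+1)) (nhdsWithin 0 (Ioi 0)) (nhds 0) := by
        apply Filter.Tendsto.mono_left _ nhdsWithin_le_nhds
        have := (continuous_pow (m+1)).tendsto (0:ℝ)
        simpa [zero_pow (Nat.succ_ne_zero m)] using this
      have comb := (t1.sub (t2.const_mul ((m:ℝ)+1))).div_const (((m:ℝ)+1)^2)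
      have : Tendsto F (nhdsWithin 0 (Ioi 0)) (nhds ((0 - ((m:ℝ)+1)*0)/((m:ℝ)+1)^2)) := by
        apply comb.congr
        intro y
        simp only [hF]
        ring
      simpa using this
    · apply ContinuousAt.continuousWithinAt
      exact (((continuous_pow (m+1)).continuousAt).mul
        (continuousAt_const.sub (continuousAt_const.mul (Real.continuousAt_log hxne)))).div_const _
  have := intervalIntegral.integral_eq_sub_of_hasDerivAt_of_le (by norm_num : (0:ℝ) ≤ 1)
    hcont hderiv ?_
  · rw [this, hF0, hF1, sub_zero]
  · rw [intervalIntegrable_iff_integrableOn_Ioc_of_le (by norm_num : (0:ℝ) ≤ 1)]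
    exact integrableOn_pow_neg_log m


lemma lintA (k : ℕ) :
    ∫⁻ u in Ioo (0:ℝ) 1, ENNReal.ofReal (2/((k:ℝ)+1) * (1-u^2)^k)
      = ENNReal.ofReal ((4:ℝ)^(k+1) / (((k:ℝ)+1)^2 * Nat.centralBinom (k+1))) := by
  rw [← MeasureTheory.ofReal_integral_eq_lintegral_ofReal]
  · congr 1
    rw [← MeasureTheory.integral_Ioc_eq_integral_Ioo,
        ← intervalIntegral.integral_of_le (by norm_num : (0:ℝ) ≤ 1),
        intervalIntegral.integral_const_mul, aux_J, term_eq]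
  · apply Integrable.const_mul
    exact (Continuous.integrableOn_Icc (by fun_prop)).mono_set Ioo_subset_Icc_self
  · filter_upwards [ae_restrict_mem measurableSet_Ioo] with u hu
    simp only [Pi.zero_apply]
    have h1 : (0:ℝ) ≤ 1 - u^2 := by nlinarith [hu.1, hu.2]
    have := pow_nonneg h1 k
    positivity

lemma lintB (n : ℕ) :
    ∫⁻ u in Ioo (0:ℝ) 1, ENNReal.ofReal (4 * (u^(2*n) * (-Real.log u)))
      = ENNReal.ofReal (4 / (2*(n:ℝ)+1)^2) := by
  rw [← MeasureTheory.ofReal_integral_eq_lintegral_ofReal]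
  · congr 1
    rw [← MeasureTheory.integral_Ioc_eq_integral_Ioo,
        ← intervalIntegral.integral_of_le (by norm_num : (0:ℝ) ≤ 1),
        intervalIntegral.integral_const_mul, integral_pow_neg_log]
    push_cast
    rw [mul_one_div]
  · exact ((integrableOn_pow_neg_log (2*n)).mono_set Ioo_subset_Ioc_self).const_mul 4
  · filter_upwards [ae_restrict_mem measurableSet_Ioo] with u hu
    simp only [Pi.zero_apply]
    have h1 : Real.log u ≤ 0 := Real.log_nonpos hu.1.le hu.2.le
    have h2 : (0:ℝ) ≤ u^(2*n) := pow_nonneg hu.1.le _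
    nlinarith

lemma claim1 :
    ∑' k : ℕ, ENNReal.ofReal ((4:ℝ)^(k+1) / (((k:ℝ)+1)^2 * Nat.centralBinom (k+1)))
      = ∫⁻ u in Ioo (0:ℝ) 1, ENNReal.ofReal (-4 * Real.log u / (1-u^2)) := by
  have hmeas : ∀ k : ℕ, AEMeasurable
      (fun u : ℝ => ENNReal.ofReal (2/((k:ℝ)+1) * (1-u^2)^k))
      (volume.restrict (Ioo (0:ℝ) 1)) := fun k =>
    ((Continuous.measurable (by fun_prop)).ennreal_ofReal).aemeasurable
  calc ∑' k : ℕ, ENNReal.ofReal ((4:ℝ)^(k+1) / (((k:ℝ)+1)^2 * Nat.centralBinom (k+1)))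
      = ∑' k : ℕ, ∫⁻ u in Ioo (0:ℝ) 1, ENNReal.ofReal (2/((k:ℝ)+1) * (1-u^2)^k) :=
        tsum_congr fun k => (lintA k).symm
    _ = ∫⁻ u in Ioo (0:ℝ) 1, ∑' k : ℕ, ENNReal.ofReal (2/((k:ℝ)+1) * (1-u^2)^k) :=
        (MeasureTheory.lintegral_tsum hmeas).symm
    _ = ∫⁻ u in Ioo (0:ℝ) 1, ENNReal.ofReal (-4 * Real.log u / (1-u^2)) := by
        refine MeasureTheory.setLIntegral_congr_fun measurableSet_Ioo
          (fun u hu => ?_)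
        have hs := hasSumA hu.1 hu.2
        have h1 : (0:ℝ) ≤ 1 - u^2 := by nlinarith [hu.1, hu.2]
        have hnn : ∀ k : ℕ, 0 ≤ 2/((k:ℝ)+1) * (1-u^2)^k := fun k => by
          have := pow_nonneg h1 k
          positivity
        rw [← ENNReal.ofReal_tsum_of_nonneg hnn hs.summable, hs.tsum_eq]

lemma claim2 :
    ∫⁻ u in Ioo (0:ℝ) 1, ENNReal.ofReal (-4 * Real.log u / (1-u^2))
      = ∑' n : ℕ, ENNReal.ofReal (4 / (2*(n:ℝ)+1)^2) := by
  have hmeas : ∀ n : ℕ, AEMeasurable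
      (fun u : ℝ => ENNReal.ofReal (4 * (u^(2*n) * (-Real.log u))))
      (volume.restrict (Ioo (0:ℝ) 1)) := fun n =>
    ((((measurable_id.pow_const (2*n)).mul Real.measurable_log.neg).const_mul
      4).ennreal_ofReal).aemeasurable
  calc ∫⁻ u in Ioo (0:ℝ) 1, ENNReal.ofReal (-4 * Real.log u / (1-u^2))
      = ∫⁻ u in Ioo (0:ℝ) 1, ∑' n : ℕ, ENNReal.ofReal (4 * (u^(2*n) * (-Real.log u))) := by
        refine MeasureTheory.setLIntegral_congr_fun measurableSet_Ioo
          (fun u hu => ?_)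
        have hs := hasSumB hu.1 hu.2
        have h1 : Real.log u ≤ 0 := Real.log_nonpos hu.1.le hu.2.le
        have hnn : ∀ n : ℕ, 0 ≤ 4 * (u^(2*n) * (-Real.log u)) := fun n => by
          have h2 : (0:ℝ) ≤ u^(2*n) := pow_nonneg hu.1.le _
          nlinarith
        rw [← ENNReal.ofReal_tsum_of_nonneg hnn hs.summable, hs.tsum_eq]
    _ = ∑' n : ℕ, ∫⁻ u in Ioo (0:ℝ) 1, ENNReal.ofReal (4 * (u^(2*n) * (-Real.log u))) :=
        MeasureTheory.lintegral_tsum hmeas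
    _ = ∑' n : ℕ, ENNReal.ofReal (4 / (2*(n:ℝ)+1)^2) := tsum_congr fun n => lintB n

/-- The sum of the even-intermediate-state contributions in the short-distance
dimension of the order/disorder field of the scaling Ising model:
`∑_{k≥1} 4^k / (k² binom(2k,k)) = π²/2`. -/
theorem ising_even_sum :
    ∑' k : ℕ, (4 : ℝ) ^ (k + 1) / (((k : ℝ) + 1) ^ 2 * Nat.centralBinom (k + 1)) = π ^ 2 / 2 := by
  set a : ℕ → ℝ := fun k => (4 : ℝ) ^ (k + 1) / (((k : ℝ) + 1) ^ 2 * Nat.centralBinom (k + 1))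
    with ha
  have hnn : ∀ k, 0 ≤ a k := fun k => by
    have : (0:ℝ) < Nat.centralBinom (k+1) := by exact_mod_cast Nat.centralBinom_pos (k+1)
    positivity
  have htail : ∑' n : ℕ, ENNReal.ofReal (4 / (2*(n:ℝ)+1)^2) = ENNReal.ofReal (π^2/2) := by
    have hs : HasSum (fun n : ℕ => 4 / (2*(n:ℝ)+1)^2) (π^2/2) := by
      have := hasSum_odd_sq.mul_left 4
      have hfun : (fun n : ℕ => 4 * ((1:ℝ)/(2*(n:ℝ)+1)^2)) = fun n : ℕ => 4/(2*(n:ℝ)+1)^2 := by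
        funext n; rw [mul_one_div]
      rw [hfun] at this
      convert this using 1
      exacts [rfl, by ring]
    rw [← ENNReal.ofReal_tsum_of_nonneg (fun n => by positivity) hs.summable, hs.tsum_eq]
  have hT : ∑' k : ℕ, ENNReal.ofReal (a k) = ENNReal.ofReal (π^2/2) := by
    rw [ha]
    rw [claim1, claim2, htail]
  have hne : ∑' k : ℕ, ENNReal.ofReal (a k) ≠ ⊤ := by
    rw [hT]; exact ENNReal.ofReal_ne_top
  have h1 := ENNReal.tsum_toReal_eq (f := fun k => ENNReal.ofReal (a k))
    (fun k => ENNReal.ofReal_ne_top)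
  rw [hT] at h1
  have h2 : ∑' k : ℕ, (ENNReal.ofReal (a k)).toReal = ∑' k : ℕ, a k :=
    tsum_congr fun k => ENNReal.toReal_ofReal (hnn k)
  rw [h2, ENNReal.toReal_ofReal (by positivity : (0:ℝ) ≤ π^2/2)] at h1
  exact h1.symm
end

section
/- The anomalous dimension of the order/disorder field of the scaling Ising model equals 1/16: (1/(4*pi)) * (sum over k >= 0 of binom(2k,k)/((2k+1)*4^k)) - (1/(8*pi^2)) * (sum over k >= 1 of 4^k/(k^2*binom(2k,k))) = 1/8 - 1/16 = 1/16. -/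
open scoped Real
open Filter Topology Set

namespace IsingAux

noncomputable def A (k : ℕ) : ℝ := (Nat.centralBinom k : ℝ) / 4 ^ k

lemma A_pos (k : ℕ) : 0 < A k := by
  apply div_pos (by exact_mod_cast Nat.centralBinom_pos k) (by positivity)

lemma A_zero : A 0 = 1 := by simp [A, Nat.centralBinom]

lemma A_succ (k : ℕ) : A (k + 1) = A k * ((2 * k + 1) / (2 * k + 2)) := by
  have h := Nat.succ_mul_centralBinom_succ k
  have h' : ((k : ℝ) + 1) * (Nat.centralBinom (k + 1) : ℝ)
      = 2 * (2 * k + 1) * Nat.centralBinom k := by exact_mod_cast h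
  simp only [A, pow_succ]
  field_simp
  nlinarith [h', pow_pos (show (0:ℝ) < 4 by norm_num) k,
    mul_pos (Nat.cast_pos.mpr (Nat.centralBinom_pos k)) (pow_pos (show (0:ℝ) < 4 by norm_num) k)]

lemma A_le_one (k : ℕ) : A k ≤ 1 := by
  induction k with
  | zero => simp [A_zero]
  | succ n ih =>
    rw [A_succ]
    have h1 : ((2 * n + 1 : ℝ)) / (2 * n + 2) ≤ 1 := by
      rw [div_le_one (by positivity)]; linarith
    nlinarith [A_pos n, div_nonneg (show (0:ℝ) ≤ 2*n+1 by positivity) (show (0:ℝ) ≤ 2*n+2 by positivity)]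

lemma A_sq_mul_le_one (k : ℕ) : A k ^ 2 * (2 * k + 1) ≤ 1 := by
  induction k with
  | zero => simp [A_zero]
  | succ n ih =>
    rw [A_succ]
    refine le_trans ?_ ih
    push_cast
    have h2 : (0:ℝ) < (2 * (n:ℝ) + 2) ^ 2 := by positivity
    rw [mul_pow, div_pow, mul_assoc, mul_comm ((2*(n:ℝ)+1)^2 / (2*(n:ℝ)+2)^2)]
    rw [← mul_div_assoc, ← mul_div_assoc, div_le_iff₀ h2]
    nlinarith [sq_nonneg (A n), A_pos n]

lemma one_le_four_mul_A_sq (k : ℕ) (hk : 1 ≤ k) : 1 ≤ 4 * k * A k ^ 2 := by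
  induction k with
  | zero => omega
  | succ n ih =>
    rcases Nat.eq_or_lt_of_le hk with h | h
    · have : n = 0 := by omega
      subst this
      rw [A_succ, A_zero]
      norm_num
    · have hn : 1 ≤ n := by omega
      have := ih hn
      rw [A_succ]
      push_cast
      have h2 : (0:ℝ) < (2 * (n:ℝ) + 2) ^ 2 := by positivity
      rw [mul_pow, div_pow, show 4 * ((n:ℝ) + 1) * (A n ^ 2 * ((2 * n + 1) ^ 2 / (2 * n + 2) ^ 2))
        = (4 * ((n:ℝ) + 1) * (A n ^ 2 * (2 * n + 1) ^ 2)) / (2 * n + 2) ^ 2 from by ring,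
        le_div_iff₀ h2]
      nlinarith [sq_nonneg (A n), A_pos n, (show (1:ℝ) ≤ (n:ℝ) by exact_mod_cast hn)]

noncomputable def C (k : ℕ) : ℝ := 1 / (k * A k)
noncomputable def B (k : ℕ) : ℝ := 1 / ((k:ℝ) ^ 2 * A k)

lemma C_pos (k : ℕ) (hk : 1 ≤ k) : 0 < C k := by
  have h1 := A_pos k
  have : (0:ℝ) < k := by exact_mod_cast hk
  unfold C; positivity

lemma A_ge (k : ℕ) (hk : 1 ≤ k) : 1 / (2 * Real.sqrt k) ≤ A k := by
  have h4 := one_le_four_mul_A_sq k hk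
  have hk' : (0:ℝ) < k := by exact_mod_cast hk
  have hs : 0 < Real.sqrt k := Real.sqrt_pos.mpr hk'
  have hkk : Real.sqrt k * Real.sqrt k = k := Real.mul_self_sqrt hk'.le
  rw [div_le_iff₀ (by positivity)]
  have key : 1 ≤ (A k * (2 * Real.sqrt k)) ^ 2 := by
    calc (1:ℝ) ≤ 4 * k * A k ^ 2 := h4
    _ = (A k * (2 * Real.sqrt k)) ^ 2 := by rw [mul_pow, mul_pow, Real.sq_sqrt hk'.le]; ring
  nlinarith [key, mul_pos (A_pos k) (show (0:ℝ) < 2 * Real.sqrt k by positivity)]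

lemma C_le (k : ℕ) (hk : 1 ≤ k) : C k ≤ 2 / Real.sqrt k := by
  have hk' : (0:ℝ) < k := by exact_mod_cast hk
  have hs : 0 < Real.sqrt k := Real.sqrt_pos.mpr hk'
  have hkk : Real.sqrt k * Real.sqrt k = k := Real.mul_self_sqrt hk'.le
  have hA := A_ge k hk
  rw [div_le_iff₀ (by positivity)] at hA
  have hApos := A_pos k
  rw [C, div_le_div_iff₀ (by positivity) hs]
  nlinarith [mul_le_mul_of_nonneg_right hA hs.le, hkk, hApos]

lemma C_le_two (k : ℕ) (hk : 1 ≤ k) : C k ≤ 2 := by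
  refine (C_le k hk).trans ?_
  have hk' : (1:ℝ) ≤ k := by exact_mod_cast hk
  have : (1:ℝ) ≤ Real.sqrt k := by
    rw [show (1:ℝ) = Real.sqrt 1 from (Real.sqrt_one).symm]
    exact Real.sqrt_le_sqrt hk'
  rw [div_le_iff₀ (by linarith)]; nlinarith

lemma B_eq (k : ℕ) : B k = C k / k := by
  unfold B C; rcases Nat.eq_zero_or_pos k with h | h
  · simp [h]
  · have : (0:ℝ) < k := by exact_mod_cast h
    field_simp

lemma B_le (k : ℕ) (hk : 1 ≤ k) : B k ≤ 2 / (k * Real.sqrt k) := by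
  have hk' : (0:ℝ) < k := by exact_mod_cast hk
  rw [B_eq, div_le_div_iff₀ hk' (by positivity)]
  have hs : 0 < Real.sqrt k := Real.sqrt_pos.mpr hk'
  have h2 := C_le k hk
  rw [le_div_iff₀ hs] at h2
  nlinarith [mul_le_mul_of_nonneg_right h2 hk'.le]

lemma C_rec (k : ℕ) : (2 * k + 3) * C (k + 2) = (2 * k + 2) * C (k + 1) := by
  have h1 := A_succ (k + 1)
  have hA1 := A_pos (k+1)
  have hA2 := A_pos (k+2)
  push_cast at h1
  unfold C
  rw [h1]
  push_cast
  have hk1 : ((k:ℝ) + 1) ≠ 0 := by positivity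
  have hk2 : ((k:ℝ) + 2) ≠ 0 := by positivity
  have h3 : (2*(k:ℝ) + 3) ≠ 0 := by positivity
  have h4 : (2*(k:ℝ) + 4) ≠ 0 := by positivity
  field_simp
  ring

lemma C_one : C 1 = 2 := by
  have h := A_succ 0
  rw [A_zero] at h
  norm_num at h
  rw [C, h]
  norm_num

lemma B_succ_eq (k : ℕ) : (2 * (k:ℝ) + 2) * B (k + 1) = 2 * C (k + 1) := by
  rw [B_eq]
  push_cast
  have : ((k:ℝ) + 1) ≠ 0 := by positivity
  field_simp

lemma summable_invsqrt : Summable (fun k : ℕ => 1 / (((k:ℝ) + 1) * Real.sqrt ((k:ℝ) + 1))) := by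
  have h : Summable (fun n : ℕ => 1 / (n:ℝ) ^ ((3:ℝ)/2)) :=
    (Real.summable_one_div_nat_rpow).mpr (by norm_num)
  have h' := (summable_nat_add_iff 1).mpr h
  refine h'.congr fun k => ?_
  push_cast
  rw [show ((3:ℝ)/2) = 1 + 1/2 by norm_num, Real.rpow_add (by positivity), Real.rpow_one,
    ← Real.sqrt_eq_rpow]

lemma summable_linear_geom {q : ℝ} (hq : |q| < 1) (c₀ c₁ : ℝ) :
    Summable (fun k : ℕ => (c₀ + c₁ * k) * q ^ k) := by
  have h1 : Summable (fun k : ℕ => (k:ℝ) * q ^ k) := by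
    simpa using summable_pow_mul_geometric_of_norm_lt_one 1 (r := q) (by rwa [Real.norm_eq_abs])
  have h0 : Summable (fun k : ℕ => q ^ k) := summable_geometric_of_abs_lt_one hq
  exact ((h0.mul_left c₀).add (h1.mul_left c₁)).congr fun k => by ring

lemma hasDerivAt_tsum_Ioo (g g' : ℕ → ℝ → ℝ)
    (hg : ∀ k (x : ℝ), HasDerivAt (g k) (g' k x) x)
    (hg0 : Summable (fun k => g k 0))
    (hb : ∀ r : ℝ, r ∈ Ioo (0:ℝ) 1 → ∃ u : ℕ → ℝ, Summable u ∧
        ∀ (k : ℕ) (x : ℝ), |x| ≤ r → |g' k x| ≤ u k)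
    {x : ℝ} (hx : x ∈ Ioo (-1:ℝ) 1) :
    HasDerivAt (fun y => ∑' k, g k y) (∑' k, g' k x) x := by
  have hxabs : |x| < 1 := abs_lt.mpr ⟨hx.1, hx.2⟩
  set r : ℝ := (1 + |x|) / 2 with hr
  have hr0 : 0 < r := by positivity
  have hr1 : r < 1 := by rw [hr]; linarith
  have hxr : |x| < r := by rw [hr]; linarith [abs_nonneg x]
  obtain ⟨u, hu, hub⟩ := hb r ⟨hr0, hr1⟩
  have h0m : (0:ℝ) ∈ Ioo (-r) r := ⟨by linarith, hr0⟩
  have hxm : x ∈ Ioo (-r) r := ⟨(abs_lt.mp hxr).1, (abs_lt.mp hxr).2⟩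
  exact hasDerivAt_tsum_of_isPreconnected hu isOpen_Ioo (convex_Ioo _ _).isPreconnected
    (fun k y _ => hg k y)
    (fun k y hy => by
      rw [Real.norm_eq_abs]
      exact hub k y (le_of_lt (abs_lt.mpr ⟨hy.1, hy.2⟩)))
    h0m hg0 hxm

lemma const_of_hasDerivAt_zero (F : ℝ → ℝ)
    (hF : ∀ x ∈ Ioo (-1:ℝ) 1, HasDerivAt F 0 x) :
    ∀ x ∈ Ioo (-1:ℝ) 1, F x = F 0 := by
  intro x hx
  rcases le_or_gt 0 x with h | h
  · have key := constant_of_has_deriv_right_zero (f := F) (a := 0) (b := x)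
      (fun y hy => (hF y ⟨by linarith [hy.1], by linarith [hy.2, hx.2]⟩).continuousAt.continuousWithinAt)
      (fun y hy => (hF y ⟨by linarith [hy.1], by linarith [hy.2, hx.2]⟩).hasDerivWithinAt)
    exact key x ⟨h, le_refl x⟩
  · have key := constant_of_has_deriv_right_zero (f := F) (a := x) (b := 0)
      (fun y hy => (hF y ⟨by linarith [hy.1, hx.1], by linarith [hy.2]⟩).continuousAt.continuousWithinAt)
      (fun y hy => (hF y ⟨by linarith [hy.1, hx.1], by linarith [hy.2]⟩).hasDerivWithinAt)
    exact (key 0 ⟨le_of_lt h, le_refl 0⟩).symm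

/-! ### the function `fhat y = ∑ A k y^k = 1/√(1-y)` -/

noncomputable def fhat (y : ℝ) : ℝ := ∑' k, A k * y ^ k
noncomputable def Df (y : ℝ) : ℝ := ∑' k, A k * ((k:ℝ) * y ^ (k - 1))

lemma summable_fhat {y : ℝ} (hy : |y| < 1) : Summable (fun k => A k * y ^ k) := by
  refine Summable.of_norm_bounded (summable_geometric_of_abs_lt_one hy).abs fun k => ?_
  rw [Real.norm_eq_abs, abs_mul, abs_pow, ← abs_pow]
  exact mul_le_of_le_one_left (abs_nonneg _) (by rw [abs_of_nonneg (A_pos k).le]; exact A_le_one k)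

lemma summable_Df {y : ℝ} (hy : |y| < 1) : Summable (fun k => A k * ((k:ℝ) * y ^ (k - 1))) := by
  have h1 : Summable (fun k : ℕ => (k:ℝ) * |y| ^ (k - 1)) := by
    refine (summable_nat_add_iff 1).mp ?_
    refine ((summable_linear_geom (q := |y|) (by rwa [abs_abs]) 1 1).congr fun k => ?_)
    push_cast
    simp [add_comm 1 (k:ℝ)]
  refine Summable.of_norm_bounded h1 fun k => ?_
  rw [Real.norm_eq_abs, abs_mul, abs_mul, abs_pow, Nat.abs_cast, abs_of_nonneg (A_pos k).le]
  exact mul_le_of_le_one_left (by positivity) (A_le_one k)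

lemma hasDerivAt_fhat {y : ℝ} (hy : y ∈ Ioo (-1:ℝ) 1) : HasDerivAt fhat (Df y) y := by
  refine hasDerivAt_tsum_Ioo _ (fun k x => A k * ((k:ℝ) * x ^ (k-1)))
    (fun k x => (hasDerivAt_pow k x).const_mul (A k)) ?_ ?_ hy
  · exact (summable_fhat (by norm_num)).congr fun k => rfl
  · intro r hr
    refine ⟨fun k => (k:ℝ) * r ^ (k - 1), ?_, ?_⟩
    · refine (summable_nat_add_iff 1).mp ?_
      refine ((summable_linear_geom (q := r) (by rw [abs_of_nonneg hr.1.le]; exact hr.2) 1 1).congr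
        fun k => ?_)
      push_cast
      simp [add_comm 1 (k:ℝ)]
    · intro k x hx
      rw [abs_mul, abs_mul, abs_pow, Nat.abs_cast, abs_of_nonneg (A_pos k).le]
      have hpow : |x| ^ (k-1) ≤ r ^ (k-1) := pow_le_pow_left₀ (abs_nonneg x) hx _
      calc A k * ((k:ℝ) * |x| ^ (k-1)) ≤ 1 * ((k:ℝ) * r ^ (k-1)) :=
            mul_le_mul (A_le_one k) (mul_le_mul_of_nonneg_left hpow (Nat.cast_nonneg k))
              (by positivity) zero_le_one
        _ = (k:ℝ) * r ^ (k-1) := one_mul _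

lemma coeff_id (k : ℕ) : ((k:ℝ) + 1) * A (k + 1) = (k:ℝ) * A k + A k / 2 := by
  rw [A_succ]
  push_cast
  have : (2*(k:ℝ) + 2) ≠ 0 := by positivity
  field_simp

lemma Df_ode {y : ℝ} (hy : y ∈ Ioo (-1:ℝ) 1) : (1 - y) * Df y = fhat y / 2 := by
  have hy' : |y| < 1 := abs_lt.mpr ⟨hy.1, hy.2⟩
  have s1 := summable_Df hy'
  have s3 := summable_fhat hy'
  have step1 : Df y = ∑' (k : ℕ), ((k:ℝ) + 1) * A (k + 1) * y ^ k := by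
    rw [Df, s1.tsum_eq_zero_add]
    simp only [Nat.cast_zero, zero_mul, mul_zero, zero_add, Nat.cast_add, Nat.cast_one,
      Nat.add_sub_cancel]
    exact tsum_congr fun k => by ring
  have step2 : ∑' (k : ℕ), ((k:ℝ) + 1) * A (k + 1) * y ^ k
      = y * Df y + (1/2) * fhat y := by
    have e1 : ∀ k : ℕ, ((k:ℝ) + 1) * A (k + 1) * y ^ k
        = y * (A k * ((k:ℝ) * y ^ (k-1))) + (1/2) * (A k * y ^ k) := by
      intro k
      rw [coeff_id]
      rcases Nat.eq_zero_or_pos k with h | h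
      · subst h; norm_num; ring
      · obtain ⟨m, rfl⟩ := Nat.exists_eq_add_of_le h
        rw [show 1 + m - 1 = m from by omega, show 1 + m = m + 1 from by omega, pow_succ]
        push_cast
        ring
    rw [tsum_congr e1, (s1.mul_left y).tsum_add (s3.mul_left (1/2)), tsum_mul_left,
      tsum_mul_left]
    rfl
  have key := step1.trans step2
  linear_combination key

lemma fhat_zero : fhat 0 = 1 := by
  rw [fhat, tsum_eq_single 0 (fun k hk => by simp [zero_pow hk])]
  simp [A_zero]

lemma fhat_sq {y : ℝ} (hy : y ∈ Ioo (-1:ℝ) 1) : (1 - y) * fhat y ^ 2 = 1 := by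
  have hconst := const_of_hasDerivAt_zero (fun y => (1 - y) * fhat y ^ 2) ?_ y hy
  · have key' : (1 - y) * fhat y ^ 2 = (1 - 0) * fhat 0 ^ 2 := hconst
    rw [fhat_zero] at key'
    simpa using key'
  · intro z hz
    have hf := hasDerivAt_fhat hz
    have h1 : HasDerivAt (fun y : ℝ => 1 - y) (-1) z := (hasDerivAt_id z).const_sub 1
    have h2 : HasDerivAt (fun y => fhat y ^ 2) (2 * fhat z * Df z) z := by
      simpa using hf.fun_pow 2
    have h3 := h1.mul h2
    refine h3.congr_deriv ?_
    have ode := Df_ode hz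
    linear_combination (2 * fhat z) * ode

lemma fhat_eq {y : ℝ} (hy : y ∈ Ico (0:ℝ) 1) : fhat y = 1 / Real.sqrt (1 - y) := by
  have hy' : y ∈ Ioo (-1:ℝ) 1 := ⟨by linarith [hy.1], hy.2⟩
  have h1 := fhat_sq hy'
  have h1y : 0 < 1 - y := by linarith [hy.2]
  have hnn : 0 ≤ fhat y :=
    tsum_nonneg fun k => mul_nonneg (A_pos k).le (pow_nonneg hy.1 k)
  have hsq : fhat y ^ 2 = 1 / (1 - y) := by
    rw [eq_div_iff h1y.ne']; linarith [h1]
  have h2 : fhat y = Real.sqrt (1 / (1 - y)) := by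
    rw [← hsq, Real.sqrt_sq hnn]
  rw [h2, one_div, Real.sqrt_inv, one_div]

/-! ### `G = arcsin` -/

noncomputable def G (x : ℝ) : ℝ := ∑' (k : ℕ), A k / (2 * (k:ℝ) + 1) * x ^ (2 * k + 1)

lemma summable_G {x : ℝ} (hx : |x| < 1) :
    Summable (fun k : ℕ => A k / (2 * (k:ℝ) + 1) * x ^ (2 * k + 1)) := by
  refine Summable.of_norm_bounded (g := fun k => |x| ^ k)
    (summable_geometric_of_abs_lt_one (by rwa [abs_abs])) fun k => ?_
  rw [Real.norm_eq_abs, abs_mul, abs_pow]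
  have hc : |A k / (2 * (k:ℝ) + 1)| ≤ 1 := by
    rw [abs_of_nonneg (div_nonneg (A_pos k).le (by positivity))]
    rw [div_le_one (by positivity)]
    have hk0 : (0:ℝ) ≤ (k:ℝ) := Nat.cast_nonneg k
    linarith [A_le_one k]
  calc |A k / (2 * (k:ℝ) + 1)| * |x| ^ (2*k+1) ≤ 1 * |x| ^ (2*k+1) :=
        mul_le_mul_of_nonneg_right hc (by positivity)
    _ = |x| ^ (2*k+1) := one_mul _
    _ ≤ |x| ^ k := pow_le_pow_of_le_one (abs_nonneg x) hx.le (by omega)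

lemma hasDerivAt_Gterm (k : ℕ) (x : ℝ) :
    HasDerivAt (fun x : ℝ => A k / (2 * (k:ℝ) + 1) * x ^ (2 * k + 1)) (A k * x ^ (2 * k)) x := by
  have h := (hasDerivAt_pow (2 * k + 1) x).const_mul (A k / (2 * (k:ℝ) + 1))
  refine h.congr_deriv ?_
  rw [Nat.add_sub_cancel]
  push_cast
  have h2 : (2 * (k:ℝ) + 1) ≠ 0 := by positivity
  field_simp

lemma hasDerivAt_G {x : ℝ} (hx : x ∈ Ioo (-1:ℝ) 1) :
    HasDerivAt G (∑' (k : ℕ), A k * x ^ (2 * k)) x := by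
  refine hasDerivAt_tsum_Ioo _ (fun k x => A k * x ^ (2 * k))
    (fun k x => hasDerivAt_Gterm k x) ?_ ?_ hx
  · refine summable_zero.congr fun k => ?_
    simp [zero_pow (show 2*k+1 ≠ 0 by omega)]
  · intro r hr
    have hr2 : r ^ 2 < 1 := by nlinarith [hr.1, hr.2]
    refine ⟨fun k => (r ^ 2) ^ k,
      summable_geometric_of_abs_lt_one (by rw [abs_of_nonneg (by positivity)]; exact hr2),
      fun k x hxr => ?_⟩
    rw [abs_mul, abs_pow, abs_of_nonneg (A_pos k).le]
    calc A k * |x| ^ (2*k) ≤ 1 * |x| ^ (2*k) :=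
          mul_le_mul_of_nonneg_right (A_le_one k) (by positivity)
      _ = (|x| ^ 2) ^ k := by rw [one_mul, ← pow_mul]
      _ ≤ (r ^ 2) ^ k := by
          refine pow_le_pow_left₀ (by positivity) ?_ k
          refine pow_le_pow_left₀ (abs_nonneg x) hxr 2

lemma tsum_A_even_pow {x : ℝ} (hx : x ∈ Ioo (-1:ℝ) 1) :
    ∑' (k : ℕ), A k * x ^ (2 * k) = 1 / Real.sqrt (1 - x ^ 2) := by
  have h1 : ∑' (k : ℕ), A k * x ^ (2 * k) = fhat (x ^ 2) := by
    rw [fhat]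
    exact tsum_congr fun k => by rw [pow_mul]
  rw [h1, fhat_eq ⟨sq_nonneg x, by nlinarith [hx.1, hx.2]⟩]

lemma G_eq_arcsin {x : ℝ} (hx : x ∈ Ioo (-1:ℝ) 1) : G x = Real.arcsin x := by
  have key := const_of_hasDerivAt_zero (fun x => G x - Real.arcsin x) ?_ x hx
  · have hG0 : G 0 = 0 := by
      rw [G]
      refine (tsum_congr fun (k:ℕ) => ?_).trans tsum_zero
      simp [zero_pow (show 2*k+1 ≠ 0 by omega)]
    have key' : G x - Real.arcsin x = G 0 - Real.arcsin 0 := key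
    rw [hG0, Real.arcsin_zero, sub_zero] at key'
    linarith [key']
  · intro z hz
    have h1 := hasDerivAt_G hz
    have h2 := Real.hasDerivAt_arcsin hz.1.ne' hz.2.ne
    have h3 := h1.sub h2
    refine h3.congr_deriv ?_
    rw [tsum_A_even_pow hz]
    ring

/-! ### value of the first sum -/

lemma summable_S1 : Summable (fun k : ℕ => A k / (2 * (k:ℝ) + 1)) := by
  refine Summable.of_nonneg_of_le
    (fun k => div_nonneg (A_pos k).le (by positivity)) (fun k => ?_) summable_invsqrt
  have hp : (0:ℝ) < 2 * (k:ℝ) + 1 := by positivity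
  have hs2 : 0 < Real.sqrt (2 * (k:ℝ) + 1) := Real.sqrt_pos.mpr hp
  have hA : A k ≤ 1 / Real.sqrt (2 * (k:ℝ) + 1) := by
    have h := A_sq_mul_le_one k
    have hkk : Real.sqrt (2*(k:ℝ)+1) * Real.sqrt (2*(k:ℝ)+1) = 2*(k:ℝ)+1 :=
      Real.mul_self_sqrt hp.le
    rw [le_div_iff₀ hs2]
    have h2 : A k ^ 2 * (Real.sqrt (2*(k:ℝ)+1) * Real.sqrt (2*(k:ℝ)+1)) = A k ^ 2 * (2*(k:ℝ)+1) := by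
      rw [hkk]
    nlinarith [sq_nonneg (A k * Real.sqrt (2*(k:ℝ)+1) - 1), h2, h]
  have e1 : A k / (2*(k:ℝ)+1) ≤ 1 / ((2*(k:ℝ)+1) * Real.sqrt (2*(k:ℝ)+1)) := by
    rw [div_le_div_iff₀ hp (by positivity)]
    rw [le_div_iff₀ hs2] at hA
    nlinarith [hA, hp]
  refine e1.trans (one_div_le_one_div_of_le (by positivity) ?_)
  have hm : ((k:ℝ)+1) ≤ 2*(k:ℝ)+1 := by
    have : (0:ℝ) ≤ (k:ℝ) := Nat.cast_nonneg k
    linarith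
  exact mul_le_mul hm (Real.sqrt_le_sqrt hm) (Real.sqrt_nonneg _) hp.le

lemma mem_Ioo_of_Ioo01 {x : ℝ} (hx : x ∈ Ioo (0:ℝ) 1) : x ∈ Ioo (-1:ℝ) 1 :=
  ⟨by linarith [hx.1], hx.2⟩

lemma Ioo01_mem : Ioo (0:ℝ) 1 ∈ 𝓝[<] (1:ℝ) :=
  Ioo_mem_nhdsLT_of_mem (by constructor <;> norm_num)

lemma S1_eq : ∑' (k : ℕ), A k / (2 * (k:ℝ) + 1) = π / 2 := by
  refine le_antisymm ?_ ?_
  · refine Real.tsum_le_of_sum_range_le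
      (fun k => div_nonneg (A_pos k).le (by positivity)) fun n => ?_
    have hc : Continuous fun x : ℝ =>
        ∑ k ∈ Finset.range n, A k / (2*(k:ℝ)+1) * x ^ (2*k+1) :=
      continuous_finset_sum _ fun k _ => continuous_const.mul (continuous_pow _)
    have cont : Tendsto (fun x : ℝ => ∑ k ∈ Finset.range n, A k / (2*(k:ℝ)+1) * x ^ (2*k+1))
        (𝓝[<] (1:ℝ)) (𝓝 (∑ k ∈ Finset.range n, A k / (2*(k:ℝ)+1))) := by
      have h := hc.tendsto 1
      simp only [one_pow, mul_one] at h
      exact h.mono_left nhdsWithin_le_nhds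
    refine le_of_tendsto cont ?_
    filter_upwards [Ioo01_mem] with x hx
    have hxI := mem_Ioo_of_Ioo01 hx
    calc ∑ k ∈ Finset.range n, A k / (2*(k:ℝ)+1) * x ^ (2*k+1)
        ≤ G x := (summable_G (abs_lt.mpr ⟨hxI.1, hxI.2⟩)).sum_le_tsum _
          (fun k _ => mul_nonneg (div_nonneg (A_pos k).le (by positivity))
            (pow_nonneg hx.1.le _))
      _ = Real.arcsin x := G_eq_arcsin hxI
      _ ≤ π/2 := Real.arcsin_le_pi_div_two x
  · have harc : Tendsto Real.arcsin (𝓝[<] (1:ℝ)) (𝓝 (π/2)) := by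
      have h := Real.continuous_arcsin.tendsto 1
      rw [Real.arcsin_one] at h
      exact h.mono_left nhdsWithin_le_nhds
    refine le_of_tendsto harc ?_
    filter_upwards [Ioo01_mem] with x hx
    have hxI := mem_Ioo_of_Ioo01 hx
    rw [← G_eq_arcsin hxI]
    refine (summable_G (abs_lt.mpr ⟨hxI.1, hxI.2⟩)).tsum_le_tsum (fun k => ?_) summable_S1
    exact mul_le_of_le_one_right (div_nonneg (A_pos k).le (by positivity))
      (pow_le_one₀ hx.1.le hx.2.le)

/-! ### the odd series `p` and its closed form -/

noncomputable def p (x : ℝ) : ℝ := ∑' (k : ℕ), C (k + 1) * x ^ (2 * k + 1)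
noncomputable def P (x : ℝ) : ℝ := ∑' (k : ℕ), (2 * (k:ℝ) + 1) * C (k + 1) * x ^ (2 * k)

lemma summable_p {x : ℝ} (hx : |x| < 1) :
    Summable (fun k : ℕ => C (k + 1) * x ^ (2 * k + 1)) := by
  refine Summable.of_norm_bounded (g := fun k => 2 * |x| ^ k)
    ((summable_geometric_of_abs_lt_one (by rwa [abs_abs])).mul_left 2) fun k => ?_
  rw [Real.norm_eq_abs, abs_mul, abs_pow, abs_of_nonneg (C_pos (k+1) (by omega)).le]
  calc C (k+1) * |x| ^ (2*k+1) ≤ 2 * |x| ^ (2*k+1) :=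
        mul_le_mul_of_nonneg_right (C_le_two (k+1) (by omega)) (by positivity)
    _ ≤ 2 * |x| ^ k := by
        exact mul_le_mul_of_nonneg_left (pow_le_pow_of_le_one (abs_nonneg x) hx.le (by omega))
          (by norm_num)

lemma summable_P {x : ℝ} (hx : |x| < 1) :
    Summable (fun k : ℕ => (2 * (k:ℝ) + 1) * C (k + 1) * x ^ (2 * k)) := by
  have hx2 : |x ^ 2| < 1 := by
    rw [abs_pow]
    exact pow_lt_one₀ (abs_nonneg x) hx (by norm_num)
  refine Summable.of_norm_bounded (g := fun k => (2 + 4 * (k:ℝ)) * (x ^ 2) ^ k)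
    (summable_linear_geom hx2 2 4) fun k => ?_
  rw [Real.norm_eq_abs, abs_mul, abs_mul, abs_pow]
  rw [abs_of_nonneg (C_pos (k+1) (by omega)).le, abs_of_nonneg (show (0:ℝ) ≤ 2*(k:ℝ)+1 by positivity)]
  have h1 : |x| ^ (2*k) = |x ^ 2| ^ k := by rw [abs_pow, ← pow_mul]
  rw [h1]
  rw [abs_of_nonneg (sq_nonneg x)]
  show (2 * (k:ℝ) + 1) * C (k + 1) * (x ^ 2) ^ k ≤ (2 + 4 * (k:ℝ)) * (x ^ 2) ^ k
  have hC1 := C_le_two (k+1) (by omega)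
  have hC0 := (C_pos (k+1) (by omega)).le
  have hq0 : (0:ℝ) ≤ (x^2) ^ k := by positivity
  nlinarith [mul_le_mul_of_nonneg_left (mul_le_mul_of_nonneg_right hC1 hq0)
    (show (0:ℝ) ≤ 2*(k:ℝ)+1 by positivity), Nat.cast_nonneg (α := ℝ) k, mul_nonneg hC0 hq0]

lemma hasDerivAt_pterm (k : ℕ) (x : ℝ) :
    HasDerivAt (fun x : ℝ => C (k + 1) * x ^ (2 * k + 1))
      ((2 * (k:ℝ) + 1) * C (k + 1) * x ^ (2 * k)) x := by
  have h := (hasDerivAt_pow (2 * k + 1) x).const_mul (C (k + 1))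
  refine h.congr_deriv ?_
  rw [Nat.add_sub_cancel]
  push_cast
  ring

lemma hasDerivAt_p {x : ℝ} (hx : x ∈ Ioo (-1:ℝ) 1) : HasDerivAt p (P x) x := by
  refine hasDerivAt_tsum_Ioo _ (fun k x => (2 * (k:ℝ) + 1) * C (k + 1) * x ^ (2 * k))
    (fun k x => hasDerivAt_pterm k x) ?_ ?_ hx
  · refine summable_zero.congr fun k => ?_
    simp [zero_pow (show 2*k+1 ≠ 0 by omega)]
  · intro r hr
    have hr2 : |r ^ 2| < 1 := by
      rw [abs_of_nonneg (sq_nonneg r)]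
      nlinarith [hr.1, hr.2]
    refine ⟨fun k => (2 + 4 * (k:ℝ)) * (r ^ 2) ^ k, summable_linear_geom hr2 2 4,
      fun k x hxr => ?_⟩
    show |(2 * (k:ℝ) + 1) * C (k + 1) * x ^ (2 * k)| ≤ (2 + 4 * (k:ℝ)) * (r ^ 2) ^ k
    rw [abs_mul, abs_mul, abs_pow, abs_of_nonneg (C_pos (k+1) (by omega)).le,
      abs_of_nonneg (show (0:ℝ) ≤ 2*(k:ℝ)+1 by positivity)]
    have h1 : |x| ^ (2*k) ≤ (r ^ 2) ^ k := by
      rw [← pow_mul]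
      exact pow_le_pow_left₀ (abs_nonneg x) hxr (2*k)
    calc (2*(k:ℝ)+1) * C (k+1) * |x| ^ (2*k) ≤ (2*(k:ℝ)+1) * 2 * (r^2) ^ k := by
          have hC1 := C_le_two (k+1) (by omega)
          have hC0 := (C_pos (k+1) (by omega)).le
          have hp0 : (0:ℝ) ≤ |x| ^ (2*k) := by positivity
          have hq0 : (0:ℝ) ≤ (r^2) ^ k := by positivity
          nlinarith [mul_le_mul hC1 h1 hp0 (by norm_num : (0:ℝ) ≤ 2),
            (show (0:ℝ) ≤ 2*(k:ℝ)+1 by positivity)]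
      _ ≤ (2 + 4*(k:ℝ)) * (r^2) ^ k := by
          have hq0 : (0:ℝ) ≤ (r^2) ^ k := by positivity
          nlinarith [Nat.cast_nonneg (α := ℝ) k]

lemma p_zero : p 0 = 0 := by
  rw [p]
  refine (tsum_congr fun (k:ℕ) => ?_).trans tsum_zero
  simp [zero_pow (show 2*k+1 ≠ 0 by omega)]

lemma P_ode {x : ℝ} (hx : x ∈ Ioo (-1:ℝ) 1) : (1 - x ^ 2) * P x = 2 + x * p x := by
  have hx' : |x| < 1 := abs_lt.mpr ⟨hx.1, hx.2⟩
  have sP := summable_P hx'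
  have sp := summable_p hx'
  have step1 : P x = 2 + ∑' (k : ℕ),
      (x ^ 2 * ((2 * (k:ℝ) + 1) * C (k + 1) * x ^ (2 * k)) + x * (C (k + 1) * x ^ (2 * k + 1))) := by
    rw [P, sP.tsum_eq_zero_add]
    congr 1
    · norm_num [C_one]
    · refine tsum_congr fun k => ?_
      have h := C_rec k
      push_cast
      linear_combination (x ^ (2 * k) * x * x) * h
  have step2 : ∑' (k : ℕ),
      (x ^ 2 * ((2 * (k:ℝ) + 1) * C (k + 1) * x ^ (2 * k)) + x * (C (k + 1) * x ^ (2 * k + 1)))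
      = x ^ 2 * P x + x * p x := by
    rw [(sP.mul_left (x ^ 2)).tsum_add (sp.mul_left x), tsum_mul_left, tsum_mul_left]
    rfl
  rw [step2] at step1
  linear_combination step1

lemma p_closed {x : ℝ} (hx : x ∈ Ioo (-1:ℝ) 1) :
    Real.sqrt (1 - x ^ 2) * p x = 2 * Real.arcsin x := by
  have key := const_of_hasDerivAt_zero
    (fun x => Real.sqrt (1 - x ^ 2) * p x - 2 * Real.arcsin x) ?_ x hx
  · have key' : Real.sqrt (1 - x ^ 2) * p x - 2 * Real.arcsin x
        = Real.sqrt (1 - 0 ^ 2) * p 0 - 2 * Real.arcsin 0 := key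
    rw [p_zero, Real.arcsin_zero] at key'
    simp at key'
    linarith [key']
  · intro z hz
    have hz2 : (0:ℝ) < 1 - z ^ 2 := by nlinarith [hz.1, hz.2]
    have hs : 0 < Real.sqrt (1 - z ^ 2) := Real.sqrt_pos.mpr hz2
    have hsq : Real.sqrt (1 - z ^ 2) ^ 2 = 1 - z ^ 2 := Real.sq_sqrt hz2.le
    have h1 : HasDerivAt (fun x : ℝ => 1 - x ^ 2) (-(2 * z)) z := by
      simpa using (hasDerivAt_pow 2 z).const_sub 1
    have h2 : HasDerivAt (fun x : ℝ => Real.sqrt (1 - x ^ 2))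
        (1 / (2 * Real.sqrt (1 - z ^ 2)) * (-(2 * z))) z :=
      (Real.hasDerivAt_sqrt hz2.ne').comp z h1
    have h3 := h2.mul (hasDerivAt_p hz)
    have h4 := (Real.hasDerivAt_arcsin hz.1.ne' hz.2.ne).const_mul 2
    have h5 := h3.sub h4
    refine h5.congr_deriv ?_
    have hs' : Real.sqrt (1 - z^2) ≠ 0 := hs.ne'
    rw [show 1/(2*Real.sqrt (1-z^2))*(-(2*z))*p z + Real.sqrt (1-z^2)*P z - 2*(1/Real.sqrt (1-z^2))
        = (-z*p z + Real.sqrt (1-z^2)^2*P z - 2)/Real.sqrt (1-z^2) from by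
          field_simp,
      hsq, show -z*p z + (1-z^2)*P z - 2 = 0 from by linear_combination P_ode hz, zero_div]

/-! ### the even series `U` and its closed form -/

noncomputable def U (x : ℝ) : ℝ := ∑' (k : ℕ), B (k + 1) * x ^ (2 * k + 2)

lemma B_succ_le_two (k : ℕ) : B (k + 1) ≤ 2 := by
  rw [B_eq]
  have h1 := C_le_two (k+1) (by omega)
  have h2 := (C_pos (k+1) (by omega)).le
  have h3 : (1:ℝ) ≤ ((k+1 : ℕ) : ℝ) := by push_cast; linarith [Nat.cast_nonneg (α := ℝ) k]
  calc C (k+1) / ((k+1 : ℕ) : ℝ) ≤ C (k+1) := by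
        rw [div_le_iff₀ (by linarith)]
        nlinarith
    _ ≤ 2 := h1

lemma B_succ_pos (k : ℕ) : 0 < B (k + 1) := by
  have h := A_pos (k + 1)
  rw [B]
  have : (0:ℝ) < ((k+1 : ℕ) : ℝ) := by exact_mod_cast Nat.succ_pos k
  positivity

lemma summable_U {x : ℝ} (hx : |x| < 1) :
    Summable (fun k : ℕ => B (k + 1) * x ^ (2 * k + 2)) := by
  refine Summable.of_norm_bounded (g := fun k => 2 * |x| ^ k)
    ((summable_geometric_of_abs_lt_one (by rwa [abs_abs])).mul_left 2) fun k => ?_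
  rw [Real.norm_eq_abs, abs_mul, abs_pow, abs_of_nonneg (B_succ_pos k).le]
  calc B (k+1) * |x| ^ (2*k+2) ≤ 2 * |x| ^ (2*k+2) :=
        mul_le_mul_of_nonneg_right (B_succ_le_two k) (by positivity)
    _ ≤ 2 * |x| ^ k :=
        mul_le_mul_of_nonneg_left (pow_le_pow_of_le_one (abs_nonneg x) hx.le (by omega))
          (by norm_num)

lemma hasDerivAt_Uterm (k : ℕ) (x : ℝ) :
    HasDerivAt (fun x : ℝ => B (k + 1) * x ^ (2 * k + 2))
      (2 * (C (k + 1) * x ^ (2 * k + 1))) x := by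
  have h := (hasDerivAt_pow (2 * k + 2) x).const_mul (B (k + 1))
  refine h.congr_deriv ?_
  rw [show 2*k+2-1 = 2*k+1 from rfl]
  have hB := B_succ_eq k
  push_cast
  linear_combination (x ^ (2 * k + 1)) * hB

lemma hasDerivAt_U {x : ℝ} (hx : x ∈ Ioo (-1:ℝ) 1) : HasDerivAt U (2 * p x) x := by
  have h : HasDerivAt U (∑' (k : ℕ), 2 * (C (k + 1) * x ^ (2 * k + 1))) x := by
    refine hasDerivAt_tsum_Ioo _ (fun k x => 2 * (C (k + 1) * x ^ (2 * k + 1)))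
      (fun k x => hasDerivAt_Uterm k x) ?_ ?_ hx
    · refine summable_zero.congr fun k => ?_
      simp [zero_pow (show 2*k+2 ≠ 0 by omega)]
    · intro r hr
      refine ⟨fun k => 4 * r ^ k,
        ((summable_geometric_of_abs_lt_one (by rw [abs_of_nonneg hr.1.le]; exact hr.2)).mul_left 4),
        fun k x hxr => ?_⟩
      show |2 * (C (k + 1) * x ^ (2 * k + 1))| ≤ 4 * r ^ k
      rw [abs_mul, abs_mul, abs_pow, abs_of_nonneg (C_pos (k+1) (by omega)).le]
      have h1 : |x| ^ (2*k+1) ≤ r ^ k := by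
        calc |x| ^ (2*k+1) ≤ |x| ^ k :=
              pow_le_pow_of_le_one (abs_nonneg x) (le_of_lt (lt_of_le_of_lt hxr hr.2)) (by omega)
          _ ≤ r ^ k := pow_le_pow_left₀ (abs_nonneg x) hxr k
      have hC1 := C_le_two (k+1) (by omega)
      have hC0 := (C_pos (k+1) (by omega)).le
      rw [abs_of_nonneg (by norm_num : (0:ℝ) ≤ 2)]
      have hp0 : (0:ℝ) ≤ |x| ^ (2*k+1) := by positivity
      nlinarith [mul_le_mul hC1 h1 hp0 (by norm_num : (0:ℝ) ≤ 2)]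
  convert h using 1
  rw [p]
  exact tsum_mul_left.symm

lemma U_zero : U 0 = 0 := by
  rw [U]
  refine (tsum_congr fun (k:ℕ) => ?_).trans tsum_zero
  simp [zero_pow (show 2*k+2 ≠ 0 by omega)]

lemma U_closed {x : ℝ} (hx : x ∈ Ioo (-1:ℝ) 1) : U x = 2 * Real.arcsin x ^ 2 := by
  have key := const_of_hasDerivAt_zero (fun x => U x - 2 * Real.arcsin x ^ 2) ?_ x hx
  · have key' : U x - 2 * Real.arcsin x ^ 2 = U 0 - 2 * Real.arcsin 0 ^ 2 := key
    rw [U_zero, Real.arcsin_zero] at key'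
    simp at key'
    linarith [key']
  · intro z hz
    have hz2 : (0:ℝ) < 1 - z ^ 2 := by nlinarith [hz.1, hz.2]
    have hs : 0 < Real.sqrt (1 - z ^ 2) := Real.sqrt_pos.mpr hz2
    have h1 := hasDerivAt_U hz
    have h2 := ((Real.hasDerivAt_arcsin hz.1.ne' hz.2.ne).pow 2).const_mul 2
    have h3 := h1.sub h2
    refine h3.congr_deriv ?_
    have hps := p_closed hz
    field_simp
    linear_combination (2:ℝ) * hps

lemma summable_S2 : Summable (fun k : ℕ => B (k + 1)) := by
  refine Summable.of_nonneg_of_le (fun k => (B_succ_pos k).le) (fun k => ?_)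
    (summable_invsqrt.mul_left 2)
  have h := B_le (k+1) (by omega)
  push_cast at h
  calc B (k+1) ≤ 2 / (((k:ℝ)+1) * Real.sqrt ((k:ℝ)+1)) := h
    _ = 2 * (1 / (((k:ℝ)+1) * Real.sqrt ((k:ℝ)+1))) := by ring

lemma two_arcsin_sq_le {x : ℝ} (hx : x ∈ Ioo (0:ℝ) 1) :
    2 * Real.arcsin x ^ 2 ≤ π ^ 2 / 2 := by
  have ha1 : Real.arcsin x ≤ π / 2 := Real.arcsin_le_pi_div_two x
  have ha0 : 0 ≤ Real.arcsin x := Real.arcsin_nonneg.mpr hx.1.le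
  nlinarith

lemma S2_eq : ∑' (k : ℕ), B (k + 1) = π ^ 2 / 2 := by
  refine le_antisymm ?_ ?_
  · refine Real.tsum_le_of_sum_range_le (fun k => (B_succ_pos k).le) fun n => ?_
    have hc : Continuous fun x : ℝ => ∑ k ∈ Finset.range n, B (k+1) * x ^ (2*k+2) :=
      continuous_finset_sum _ fun k _ => continuous_const.mul (continuous_pow _)
    have cont : Tendsto (fun x : ℝ => ∑ k ∈ Finset.range n, B (k+1) * x ^ (2*k+2))
        (𝓝[<] (1:ℝ)) (𝓝 (∑ k ∈ Finset.range n, B (k+1))) := by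
      have h := hc.tendsto 1
      simp only [one_pow, mul_one] at h
      exact h.mono_left nhdsWithin_le_nhds
    refine le_of_tendsto cont ?_
    filter_upwards [Ioo01_mem] with x hx
    have hxI := mem_Ioo_of_Ioo01 hx
    calc ∑ k ∈ Finset.range n, B (k+1) * x ^ (2*k+2)
        ≤ U x := (summable_U (abs_lt.mpr ⟨hxI.1, hxI.2⟩)).sum_le_tsum _
          (fun k _ => mul_nonneg (B_succ_pos k).le (pow_nonneg hx.1.le _))
      _ = 2 * Real.arcsin x ^ 2 := U_closed hxI
      _ ≤ π ^ 2 / 2 := two_arcsin_sq_le hx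
  · have harc : Tendsto (fun x : ℝ => 2 * Real.arcsin x ^ 2) (𝓝[<] (1:ℝ)) (𝓝 (π ^ 2 / 2)) := by
      have hcont : Continuous (fun x : ℝ => 2 * Real.arcsin x ^ 2) :=
        continuous_const.mul (Real.continuous_arcsin.pow 2)
      have h := hcont.tendsto (1:ℝ)
      rw [Real.arcsin_one] at h
      have : (2:ℝ) * (π/2) ^ 2 = π ^ 2 / 2 := by ring
      rw [this] at h
      exact h.mono_left nhdsWithin_le_nhds
    refine le_of_tendsto harc ?_
    filter_upwards [Ioo01_mem] with x hx
    have hxI := mem_Ioo_of_Ioo01 hx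
    rw [← U_closed hxI]
    refine (summable_U (abs_lt.mpr ⟨hxI.1, hxI.2⟩)).tsum_le_tsum (fun k => ?_) summable_S2
    exact mul_le_of_le_one_right (B_succ_pos k).le (pow_le_one₀ hx.1.le hx.2.le)

end IsingAux

open scoped Real

/-- The anomalous dimension of the order/disorder field of the scaling Ising model:
`(1/(4π)) ∑_{k≥0} binom(2k,k)/((2k+1)4^k) - (1/(8π²)) ∑_{k≥1} 4^k/(k² binom(2k,k))
  = 1/8 - 1/16 = 1/16`. -/
theorem ising_dimension_eq :
    (1 / (4 * π)) * (∑' k : ℕ, (Nat.centralBinom k : ℝ) / ((2 * k + 1) * 4 ^ k))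
      - (1 / (8 * π ^ 2)) *
        (∑' k : ℕ, (4 : ℝ) ^ (k + 1) / (((k : ℝ) + 1) ^ 2 * Nat.centralBinom (k + 1)))
      = 1 / 16 := by
  have h1 : (∑' k : ℕ, (Nat.centralBinom k : ℝ) / ((2 * k + 1) * 4 ^ k)) = π / 2 := by
    rw [← IsingAux.S1_eq]
    refine tsum_congr fun k => ?_
    rw [IsingAux.A, div_div, mul_comm]
  have h2 : (∑' k : ℕ, (4 : ℝ) ^ (k + 1) / (((k : ℝ) + 1) ^ 2 * Nat.centralBinom (k + 1)))
      = π ^ 2 / 2 := by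
    rw [← IsingAux.S2_eq]
    refine tsum_congr fun k => ?_
    rw [IsingAux.B, IsingAux.A, ← mul_div_assoc, one_div_div]
    push_cast
    ring
  rw [h1, h2]
  have hπ : (π:ℝ) ≠ 0 := Real.pi_ne_zero
  field_simp
  ring
end

section
/- The third Ising intermediate-state integral evaluates to I_3 = double integral over (theta_1, theta_2) in R^2 of { tanh^2((theta_1-theta_2)/2) * tanh^2(theta_1/2) * tanh^2(theta_2/2) - tanh^2((theta_1-theta_2)/2) - tanh^2(theta_1/2) - tanh^2(theta_2/2) + 2 } d theta_1 d theta_2 = 4*pi^2. -/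
open scoped Real

open MeasureTheory Real Set Filter Topology

lemma tanh_sq_lt_one (x : ℝ) : Real.tanh x ^ 2 < 1 := by
  rw [Real.tanh_eq_sinh_div_cosh, div_pow, div_lt_one (by positivity)]
  nlinarith [Real.cosh_sq_sub_sinh_sq x, Real.cosh_pos x]

lemma abs_tanh_lt_one (x : ℝ) : |Real.tanh x| < 1 := by
  rw [← Real.sqrt_one, ← Real.sqrt_sq_eq_abs]
  exact Real.sqrt_lt_sqrt (sq_nonneg _) (_root_.tanh_sq_lt_one x)

lemma one_sub_tanh_mul_tanh_pos (x y : ℝ) : 0 < 1 - Real.tanh x * Real.tanh y := by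
  have h1 := _root_.abs_tanh_lt_one x
  have h2 := _root_.abs_tanh_lt_one y
  have : |Real.tanh x * Real.tanh y| < 1 := by
    rw [abs_mul]
    calc |Real.tanh x| * |Real.tanh y| ≤ |Real.tanh x| * 1 :=
          mul_le_mul_of_nonneg_left h2.le (abs_nonneg _)
      _ < 1 := by simpa using h1
  linarith [(abs_lt.mp this).1, (abs_lt.mp this).2]

lemma tanh_sub' (a b : ℝ) :
    Real.tanh (a - b) = (Real.tanh a - Real.tanh b) / (1 - Real.tanh a * Real.tanh b) := by
  have h := one_sub_tanh_mul_tanh_pos a b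
  rw [Real.tanh_eq_sinh_div_cosh, Real.tanh_eq_sinh_div_cosh, Real.tanh_eq_sinh_div_cosh] at *
  rw [Real.sinh_sub, Real.cosh_sub]
  have ha := (Real.cosh_pos a).ne'
  have hb := (Real.cosh_pos b).ne'
  have hab : Real.cosh a * Real.cosh b - Real.sinh a * Real.sinh b ≠ 0 := by
    rw [← Real.cosh_sub]; exact (Real.cosh_pos _).ne'
  field_simp at h ⊢

lemma hasDerivAt_tanh (x : ℝ) : HasDerivAt Real.tanh (1 - Real.tanh x ^ 2) x := by
  have h : HasDerivAt (fun y => Real.sinh y / Real.cosh y)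
      ((Real.cosh x * Real.cosh x - Real.sinh x * Real.sinh x) / Real.cosh x ^ 2) x :=
    (Real.hasDerivAt_sinh x).div (Real.hasDerivAt_cosh x) (Real.cosh_pos x).ne'
  have : Real.tanh = fun y => Real.sinh y / Real.cosh y := by
    funext y; exact Real.tanh_eq_sinh_div_cosh y
  rw [this]
  convert h using 1
  have h2 := Real.cosh_sq_sub_sinh_sq x
  have hc := (Real.cosh_pos x).ne'
  show 1 - (Real.sinh x / Real.cosh x) ^ 2 = _
  field_simp

lemma continuous_tanh : Continuous Real.tanh := by
  have : Real.tanh = fun y => Real.sinh y / Real.cosh y := by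
    funext y; exact Real.tanh_eq_sinh_div_cosh y
  rw [this]
  exact Real.continuous_sinh.div Real.continuous_cosh fun x => (Real.cosh_pos x).ne'

lemma tendsto_tanh_atTop : Tendsto Real.tanh atTop (𝓝 1) := by
  have h : ∀ x : ℝ, Real.tanh x = 1 - 2 * (Real.exp (-x) / (Real.exp x + Real.exp (-x))) := by
    intro x
    rw [Real.tanh_eq_sinh_div_cosh x, Real.sinh_eq, Real.cosh_eq]
    have : Real.exp x + Real.exp (-x) > 0 := by positivity
    field_simp
    ring
  have h1 : Tendsto (fun x : ℝ => Real.exp (-x) / (Real.exp x + Real.exp (-x))) atTop (𝓝 0) := by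
    apply squeeze_zero (fun x => by positivity) (g := fun x => Real.exp (-x))
    · intro x
      apply div_le_of_le_mul₀ (by positivity) (by positivity)
      have hm : Real.exp (-x) * Real.exp x = 1 := by
        rw [← Real.exp_add]; simp
      nlinarith [sq_nonneg (Real.exp (-x) - 1)]
    · exact Real.tendsto_exp_neg_atTop_nhds_zero
  have h2 := h1.const_mul (2:ℝ)
  have h3 := (tendsto_const_nhds (x := (1:ℝ))).sub h2
  simp only [mul_zero, sub_zero] at h3
  exact h3.congr fun x => (h x).symm

lemma tendsto_tanh_atBot : Tendsto Real.tanh atBot (𝓝 (-1)) := by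
  have : Tendsto (fun x : ℝ => -Real.tanh (-x)) atBot (𝓝 (-1)) := by
    have h2 : Tendsto (fun x : ℝ => -x) atBot atTop := tendsto_neg_atBot_atTop
    have := (tendsto_tanh_atTop.comp h2).neg
    simpa using this
  refine this.congr fun x => by rw [Real.tanh_neg, neg_neg]

lemma key_identity (θ₁ θ₂ : ℝ) :
    Real.tanh ((θ₁ - θ₂) / 2) ^ 2 * Real.tanh (θ₁ / 2) ^ 2 * Real.tanh (θ₂ / 2) ^ 2
        - Real.tanh ((θ₁ - θ₂) / 2) ^ 2 - Real.tanh (θ₁ / 2) ^ 2 - Real.tanh (θ₂ / 2) ^ 2 + 2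
    = 2 * (1 - Real.tanh (θ₁ / 2) ^ 2) * (1 - Real.tanh (θ₂ / 2) ^ 2)
        / (1 - Real.tanh (θ₁ / 2) * Real.tanh (θ₂ / 2)) := by
  have h : (θ₁ - θ₂) / 2 = θ₁ / 2 - θ₂ / 2 := by ring
  rw [h, tanh_sub']
  have huv := one_sub_tanh_mul_tanh_pos (θ₁ / 2) (θ₂ / 2)
  set u := Real.tanh (θ₁ / 2)
  set v := Real.tanh (θ₂ / 2)
  have h0 : 1 - u * v ≠ 0 := huv.ne'
  field_simp
  ring

lemma exp_abs_le_two_cosh (x : ℝ) : Real.exp |x| ≤ 2 * Real.cosh x := by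
  rw [Real.cosh_eq]
  rcases abs_cases x with ⟨h, _⟩ | ⟨h, _⟩ <;> rw [h] <;>
    nlinarith [Real.exp_pos x, Real.exp_pos (-x)]

lemma sech_sq_half_le (θ : ℝ) : 1 - Real.tanh (θ / 2) ^ 2 ≤ 4 * Real.exp (-|θ|) := by
  have h1 : 1 - Real.tanh (θ / 2) ^ 2 = 1 / Real.cosh (θ / 2) ^ 2 := by
    rw [Real.tanh_eq_sinh_div_cosh]
    have h := Real.cosh_sq_sub_sinh_sq (θ / 2)
    have hc := (Real.cosh_pos (θ / 2)).ne'
    field_simp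
    exact h
  rw [h1]
  have h2 : Real.exp (|θ| / 2) ≤ 2 * Real.cosh (θ / 2) := by
    have := exp_abs_le_two_cosh (θ / 2)
    rwa [abs_div, abs_two] at this
  have h3 : Real.exp (|θ| / 2) ^ 2 = Real.exp |θ| := by
    rw [pow_two, ← Real.exp_add, add_halves]
  have h4 : Real.exp (-|θ|) * Real.exp |θ| = 1 := by rw [← Real.exp_add]; simp
  rw [div_le_iff₀ (by positivity)]
  nlinarith [Real.cosh_pos (θ / 2), Real.exp_pos (|θ| / 2), Real.exp_pos (-|θ|),
    Real.exp_pos (|θ|)]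

lemma integrable_exp_neg_abs' : Integrable (fun x : ℝ => Real.exp (-|x|)) := by
  rw [← integrableOn_univ, ← Set.Iic_union_Ioi (a := (0 : ℝ)), integrableOn_union]
  constructor
  · refine (integrableOn_exp_Iic 0).congr_fun ?_ measurableSet_Iic
    intro x hx
    simp only [Set.mem_Iic] at hx
    show Real.exp x = Real.exp (-|x|)
    rw [abs_of_nonpos hx, neg_neg]
  · refine (exp_neg_integrableOn_Ioi 0 one_pos).congr_fun ?_ measurableSet_Ioi
    intro x hx
    simp only [Set.mem_Ioi] at hx
    show Real.exp (-1 * x) = Real.exp (-|x|)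
    rw [abs_of_pos hx]; ring_nf

lemma continuous_sech_sq_half : Continuous (fun θ : ℝ => 1 - Real.tanh (θ / 2) ^ 2) :=
  continuous_const.sub ((continuous_tanh.comp (continuous_id.div_const 2)).pow 2)

lemma integrable_sech_sq_half : Integrable (fun θ : ℝ => 1 - Real.tanh (θ / 2) ^ 2) := by
  refine (integrable_exp_neg_abs'.const_mul 4).mono
    continuous_sech_sq_half.aestronglyMeasurable ?_
  refine Eventually.of_forall fun θ => ?_
  have h1 := sech_sq_half_le θ
  have h2 := _root_.tanh_sq_lt_one (θ / 2)
  rw [Real.norm_eq_abs, Real.norm_eq_abs, abs_of_nonneg (by linarith),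
    abs_of_nonneg (by positivity)]
  exact h1

lemma tanh_ne_zero_of_ne_zero {x : ℝ} (hx : x ≠ 0) : Real.tanh x ≠ 0 := by
  rw [Real.tanh_eq_sinh_div_cosh]
  exact div_ne_zero (Real.sinh_ne_zero.mpr hx) (Real.cosh_pos x).ne'

lemma inner_integral (θ₁ : ℝ) (h₁ : θ₁ ≠ 0) :
    ∫ θ₂ : ℝ, (Real.tanh ((θ₁ - θ₂) / 2) ^ 2 * Real.tanh (θ₁ / 2) ^ 2 * Real.tanh (θ₂ / 2) ^ 2
        - Real.tanh ((θ₁ - θ₂) / 2) ^ 2 - Real.tanh (θ₁ / 2) ^ 2 - Real.tanh (θ₂ / 2) ^ 2 + 2)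
      = 8 * θ₁ / Real.sinh θ₁ := by
  set u := Real.tanh (θ₁ / 2) with hu_def
  have hu1 : |u| < 1 := _root_.abs_tanh_lt_one _
  have hu1' : u < 1 := (abs_lt.mp hu1).2
  have hu1'' : -1 < u := (abs_lt.mp hu1).1
  have hu0 : u ≠ 0 := tanh_ne_zero_of_ne_zero (div_ne_zero h₁ two_ne_zero)
  set c : ℝ := 4 * (1 - u ^ 2) / u with hc_def
  set F : ℝ → ℝ := fun θ => -c * Real.log (1 - u * Real.tanh (θ / 2)) with hF_def
  have hpos : ∀ θ : ℝ, 0 < 1 - u * Real.tanh (θ / 2) := fun θ =>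
    one_sub_tanh_mul_tanh_pos (θ₁ / 2) (θ / 2)
  -- derivative of the inner function
  have ht : ∀ θ : ℝ, HasDerivAt (fun θ : ℝ => Real.tanh (θ / 2))
      ((1 - Real.tanh (θ / 2) ^ 2) * (1 / 2)) θ := by
    intro θ
    have h := (hasDerivAt_tanh (θ / 2)).comp θ ((hasDerivAt_id θ).div_const 2)
    simpa [Function.comp_def] using h
  have hderiv : ∀ θ : ℝ, HasDerivAt F
      (Real.tanh ((θ₁ - θ) / 2) ^ 2 * Real.tanh (θ₁ / 2) ^ 2 * Real.tanh (θ / 2) ^ 2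
        - Real.tanh ((θ₁ - θ) / 2) ^ 2 - Real.tanh (θ₁ / 2) ^ 2 - Real.tanh (θ / 2) ^ 2 + 2) θ := by
    intro θ
    have h2 : HasDerivAt (fun θ : ℝ => 1 - u * Real.tanh (θ / 2))
        (-(u * ((1 - Real.tanh (θ / 2) ^ 2) * (1 / 2)))) θ := ((ht θ).const_mul u).const_sub 1
    have h3 : HasDerivAt (fun θ : ℝ => Real.log (1 - u * Real.tanh (θ / 2)))
        ((1 - u * Real.tanh (θ / 2))⁻¹ * -(u * ((1 - Real.tanh (θ / 2) ^ 2) * (1 / 2)))) θ :=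
      (Real.hasDerivAt_log (hpos θ).ne').comp (h₂ := Real.log) θ h2
    have h4 : HasDerivAt F (-c * ((1 - u * Real.tanh (θ / 2))⁻¹ * -(u * ((1 - Real.tanh (θ / 2) ^ 2) * (1 / 2))))) θ :=
      h3.const_mul (-c)
    convert h4 using 1
    rw [key_identity θ₁ θ, ← hu_def, hc_def]
    have h5 := (hpos θ).ne'
    field_simp
    ring
  -- integrability
  have hbound : Integrable (fun θ : ℝ =>
      (2 * (1 - u ^ 2) / (1 - |u|)) * (1 - Real.tanh (θ / 2) ^ 2)) :=
    integrable_sech_sq_half.const_mul _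
  have hcont : Continuous (fun θ : ℝ =>
      (Real.tanh ((θ₁ - θ) / 2) ^ 2 * Real.tanh (θ₁ / 2) ^ 2 * Real.tanh (θ / 2) ^ 2
        - Real.tanh ((θ₁ - θ) / 2) ^ 2 - Real.tanh (θ₁ / 2) ^ 2 - Real.tanh (θ / 2) ^ 2 + 2)) := by
    have c1 : Continuous (fun θ : ℝ => Real.tanh ((θ₁ - θ) / 2)) :=
      continuous_tanh.comp ((continuous_const.sub continuous_id).div_const 2)
    have c2 : Continuous (fun θ : ℝ => Real.tanh (θ / 2)) :=
      continuous_tanh.comp (continuous_id.div_const 2)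
    fun_prop
  have hint : Integrable (fun θ : ℝ =>
      (Real.tanh ((θ₁ - θ) / 2) ^ 2 * Real.tanh (θ₁ / 2) ^ 2 * Real.tanh (θ / 2) ^ 2
        - Real.tanh ((θ₁ - θ) / 2) ^ 2 - Real.tanh (θ₁ / 2) ^ 2 - Real.tanh (θ / 2) ^ 2 + 2)) := by
    refine hbound.mono hcont.aestronglyMeasurable (Eventually.of_forall fun θ => ?_)
    rw [key_identity θ₁ θ, ← hu_def]
    set v := Real.tanh (θ / 2) with hv_def
    have hv1 : |v| < 1 := _root_.abs_tanh_lt_one _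
    have hv2 : v ^ 2 < 1 := _root_.tanh_sq_lt_one (θ / 2)
    have hu2 : u ^ 2 < 1 := _root_.tanh_sq_lt_one (θ₁ / 2)
    have hvpos := hpos θ
    rw [← hv_def] at hvpos
    have hN : 0 ≤ 2 * (1 - u ^ 2) * (1 - v ^ 2) := by
      have := _root_.tanh_sq_lt_one (θ₁ / 2)
      have := _root_.tanh_sq_lt_one (θ / 2)
      rw [← hu_def] at *
      nlinarith [_root_.tanh_sq_lt_one (θ₁ / 2), _root_.tanh_sq_lt_one (θ / 2)]
    have huabs : 0 < 1 - |u| := by linarith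
    have hle : 1 - |u| ≤ 1 - u * v := by
      have : u * v ≤ |u| := by
        calc u * v ≤ |u * v| := le_abs_self _
          _ = |u| * |v| := abs_mul u v
          _ ≤ |u| * 1 := mul_le_mul_of_nonneg_left hv1.le (abs_nonneg u)
          _ = |u| := mul_one _
      linarith
    have hM : (2 * (1 - u ^ 2) / (1 - |u|)) * (1 - |u|) = 2 * (1 - u ^ 2) := by
      field_simp
    rw [Real.norm_eq_abs, Real.norm_eq_abs, abs_of_nonneg (by positivity),
      abs_of_nonneg]
    · rw [div_le_iff₀ hvpos]
      have hMnn : 0 ≤ 2 * (1 - u ^ 2) / (1 - |u|) := by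
        have h2 : (0:ℝ) ≤ 2 * (1 - u ^ 2) := by nlinarith [_root_.tanh_sq_lt_one (θ₁ / 2)]
        positivity
      nlinarith [mul_le_mul_of_nonneg_left hle (mul_nonneg hMnn (by linarith : (0:ℝ) ≤ 1 - v ^ 2))]
    · have h2 : (0:ℝ) ≤ 2 * (1 - u ^ 2) := by nlinarith [_root_.tanh_sq_lt_one (θ₁ / 2)]
      have h3 : (0:ℝ) ≤ 1 - v ^ 2 := by nlinarith [_root_.tanh_sq_lt_one (θ / 2)]
      positivity
  -- limits
  have hdiv : Tendsto (fun θ : ℝ => θ / 2) atTop atTop :=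
    tendsto_id.atTop_div_const (by norm_num)
  have hdiv' : Tendsto (fun θ : ℝ => θ / 2) atBot atBot :=
    tendsto_id.atBot_div_const (by norm_num)
  have htop : Tendsto F atTop (𝓝 (-c * Real.log (1 - u))) := by
    have h1 : Tendsto (fun θ : ℝ => 1 - u * Real.tanh (θ / 2)) atTop (𝓝 (1 - u * 1)) :=
      tendsto_const_nhds.sub ((tendsto_tanh_atTop.comp hdiv).const_mul u)
    rw [mul_one] at h1
    exact (((Real.continuousAt_log (by linarith)).tendsto.comp h1).const_mul (-c))
  have hbot : Tendsto F atBot (𝓝 (-c * Real.log (1 + u))) := by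
    have h1 : Tendsto (fun θ : ℝ => 1 - u * Real.tanh (θ / 2)) atBot (𝓝 (1 - u * (-1))) :=
      tendsto_const_nhds.sub ((tendsto_tanh_atBot.comp hdiv').const_mul u)
    have h2 : 1 - u * (-1) = 1 + u := by ring
    rw [h2] at h1
    exact (((Real.continuousAt_log (by linarith)).tendsto.comp h1).const_mul (-c))
  have hFTC := MeasureTheory.integral_of_hasDerivAt_of_tendsto hderiv hint hbot htop
  rw [hFTC]
  -- evaluate
  have hcosh := (Real.cosh_pos (θ₁ / 2)).ne'
  have e1 : 1 + u = Real.exp (θ₁ / 2) / Real.cosh (θ₁ / 2) := by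
    rw [hu_def, Real.tanh_eq_sinh_div_cosh, ← Real.cosh_add_sinh]
    field_simp
  have e2 : 1 - u = Real.exp (-(θ₁ / 2)) / Real.cosh (θ₁ / 2) := by
    rw [hu_def, Real.tanh_eq_sinh_div_cosh, ← Real.cosh_sub_sinh]
    field_simp
  have hlog : Real.log (1 + u) - Real.log (1 - u) = θ₁ := by
    rw [e1, e2, Real.log_div (Real.exp_ne_zero _) hcosh,
      Real.log_div (Real.exp_ne_zero _) hcosh, Real.log_exp, Real.log_exp]
    ring
  have hsinh : Real.sinh θ₁ = 2 * Real.sinh (θ₁ / 2) * Real.cosh (θ₁ / 2) := by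
    have h := Real.sinh_two_mul (θ₁ / 2)
    rw [show 2 * (θ₁ / 2) = θ₁ by ring] at h
    exact h
  have hs0 : Real.sinh (θ₁ / 2) ≠ 0 := Real.sinh_ne_zero.mpr (div_ne_zero h₁ two_ne_zero)
  have hkey : c = 8 / Real.sinh θ₁ := by
    have hus : u = Real.sinh (θ₁ / 2) / Real.cosh (θ₁ / 2) := Real.tanh_eq_sinh_div_cosh _
    have h2 := Real.cosh_sq_sub_sinh_sq (θ₁ / 2)
    have h1u : 1 - u ^ 2 = 1 / Real.cosh (θ₁ / 2) ^ 2 := by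
      rw [hus]
      field_simp
      exact h2
    rw [hc_def, h1u, hus, hsinh]
    rw [div_eq_div_iff (by positivity) (by
      simp only [ne_eq]
      intro hz
      rcases mul_eq_zero.mp hz with hz' | hz'
      · rcases mul_eq_zero.mp hz' with hz'' | hz''
        · norm_num at hz''
        · exact hs0 hz''
      · exact hcosh hz')]
    field_simp
    ring
  calc -c * Real.log (1 - u) - -c * Real.log (1 + u)
      = c * (Real.log (1 + u) - Real.log (1 - u)) := by ring
    _ = c * θ₁ := by rw [hlog]
    _ = 8 * θ₁ / Real.sinh θ₁ := by rw [hkey]; ring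

lemma hasSum_odd_inv_sq : HasSum (fun n : ℕ => (1 : ℝ) / (2 * n + 1) ^ 2) (π ^ 2 / 8) := by
  have h := hasSum_zeta_two
  have heven : HasSum (fun k : ℕ => (1 : ℝ) / (2 * k : ℕ) ^ 2) (π ^ 2 / 6 / 4) := by
    have h4 := h.div_const 4
    refine h4.congr_fun fun k => ?_
    push_cast
    rw [div_div, mul_pow]
    ring
  have hodd : Summable (fun k : ℕ => (1 : ℝ) / (2 * k + 1 : ℕ) ^ 2) :=
    h.summable.comp_injective fun a b hab => by omega
  have hodd' := hodd.hasSum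
  have htot := HasSum.even_add_odd (f := fun n : ℕ => (1 : ℝ) / (n : ℝ) ^ 2) heven hodd'
  have := h.unique htot
  have heq : ∑' k : ℕ, (1 : ℝ) / (2 * k + 1 : ℕ) ^ 2 = π ^ 2 / 8 := by linarith
  rw [heq] at hodd'
  refine hodd'.congr_fun fun k => ?_
  push_cast
  ring_nf

lemma integrableOn_id_mul_exp {a : ℝ} (ha : 0 < a) :
    IntegrableOn (fun x : ℝ => x * Real.exp (-a * x)) (Ioi 0) := by
  have h := integrableOn_rpow_mul_exp_neg_mul_rpow (p := 1) (s := 1) (b := a)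
    (by norm_num) one_pos ha
  refine h.congr_fun (fun x hx => ?_) measurableSet_Ioi
  simp only [Real.rpow_one]

lemma integral_id_mul_exp {a : ℝ} (ha : 0 < a) :
    ∫ x in Ioi (0 : ℝ), x * Real.exp (-a * x) = 1 / a ^ 2 := by
  have h := integral_rpow_mul_exp_neg_mul_rpow (p := 1) (q := 1) (b := a)
    one_pos (by norm_num) ha
  simp only [Real.rpow_one] at h
  rw [h]
  rw [show (-(1 + 1) / 1 : ℝ) = -2 by norm_num, show ((1 + 1) / 1 : ℝ) = 2 by norm_num,
    Real.Gamma_two]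
  rw [Real.rpow_neg ha.le, show ((2:ℝ) = ((2:ℕ):ℝ)) by norm_num, Real.rpow_natCast]
  simp [one_div]

lemma sinh_series {θ : ℝ} (hθ : 0 < θ) :
    8 * θ / Real.sinh θ = ∑' n : ℕ, 16 * θ * Real.exp (-(2 * n + 1) * θ) := by
  have hr : Real.exp (-2 * θ) < 1 := by
    rw [Real.exp_lt_one_iff]
    linarith
  have hr0 : 0 ≤ Real.exp (-2 * θ) := (Real.exp_pos _).le
  have hgeo := tsum_geometric_of_lt_one hr0 hr
  have hterm : ∀ n : ℕ, 16 * θ * Real.exp (-(2 * n + 1) * θ)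
      = (16 * θ * Real.exp (-θ)) * Real.exp (-2 * θ) ^ n := by
    intro n
    rw [← Real.exp_nat_mul,
      show (16:ℝ) * θ * Real.exp (-θ) * Real.exp ((n:ℝ) * (-2 * θ))
        = 16 * θ * (Real.exp (-θ) * Real.exp ((n:ℝ) * (-2 * θ))) from by ring,
      ← Real.exp_add, show (-θ + (n : ℝ) * (-2 * θ)) = -(2 * (n:ℝ) + 1) * θ from by ring]
  rw [tsum_congr hterm, tsum_mul_left, hgeo]
  have h1 : Real.exp (-2 * θ) ≠ 1 := hr.ne
  have h2 : (1 : ℝ) - Real.exp (-2 * θ) ≠ 0 := by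
    intro hz
    exact h1 (by linarith)
  have hs : Real.sinh θ = (Real.exp θ - Real.exp (-θ)) / 2 := Real.sinh_eq θ
  have hsn : Real.sinh θ ≠ 0 := Real.sinh_ne_zero.mpr hθ.ne'
  rw [hs]
  have hexp : Real.exp (-2 * θ) = Real.exp (-θ) * Real.exp (-θ) := by
    rw [← Real.exp_add]; ring_nf
  have hene : Real.exp θ - Real.exp (-θ) ≠ 0 := by
    rw [hs] at hsn
    intro hz
    rw [hz] at hsn
    norm_num at hsn
  have hei : Real.exp (-θ) * Real.exp θ = 1 := by rw [← Real.exp_add]; simp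
  rw [hexp] at h2 ⊢
  have h2' : 1 - Real.exp (-θ) ^ 2 ≠ 0 := by rwa [sq]
  field_simp
  linear_combination -16 * hei

lemma integral_F (n : ℕ) :
    ∫ θ in Ioi (0:ℝ), 16 * θ * Real.exp (-(2 * n + 1) * θ) = 16 * (1 / (2 * n + 1) ^ 2) := by
  have ha : (0:ℝ) < 2 * n + 1 := by positivity
  have h1 : (fun θ : ℝ => 16 * θ * Real.exp (-(2 * (n:ℝ) + 1) * θ))
      = fun θ : ℝ => 16 * (θ * Real.exp (-(2 * (n:ℝ) + 1) * θ)) := by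
    funext θ; ring
  rw [h1, integral_const_mul, integral_id_mul_exp ha]

lemma integrable_F (n : ℕ) :
    Integrable (fun θ : ℝ => 16 * θ * Real.exp (-(2 * n + 1) * θ))
      (volume.restrict (Ioi 0)) := by
  have ha : (0:ℝ) < 2 * n + 1 := by positivity
  have h := (integrableOn_id_mul_exp ha).const_mul 16
  have h1 : (fun θ : ℝ => 16 * θ * Real.exp (-(2 * (n:ℝ) + 1) * θ))
      = fun θ : ℝ => 16 * (θ * Real.exp (-(2 * (n:ℝ) + 1) * θ)) := by
    funext θ; ring
  rw [h1]
  exact h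

lemma outer_integral : ∫ θ : ℝ, 8 * θ / Real.sinh θ = 4 * π ^ 2 := by
  have habs : ∀ θ : ℝ, 8 * θ / Real.sinh θ = 8 * |θ| / Real.sinh |θ| := by
    intro θ
    rcases le_or_gt 0 θ with h | h
    · rw [abs_of_nonneg h]
    · rw [abs_of_neg h, Real.sinh_neg, show (8:ℝ) * -θ = -(8 * θ) by ring, neg_div_neg_eq]
  rw [show (fun θ : ℝ => 8 * θ / Real.sinh θ)
      = (fun θ : ℝ => 8 * |θ| / Real.sinh |θ|) from funext habs]
  rw [integral_comp_abs (f := fun x : ℝ => 8 * x / Real.sinh x)]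
  have hser : ∀ θ ∈ Ioi (0:ℝ), 8 * θ / Real.sinh θ
      = ∑' n : ℕ, 16 * θ * Real.exp (-(2 * n + 1) * θ) := fun θ hθ => sinh_series hθ
  rw [setIntegral_congr_fun measurableSet_Ioi hser]
  have hF_sum : Summable fun n : ℕ =>
      ∫ θ in Ioi (0:ℝ), ‖16 * θ * Real.exp (-(2 * n + 1) * θ)‖ := by
    have heq : ∀ n : ℕ, (∫ θ in Ioi (0:ℝ), ‖16 * θ * Real.exp (-(2 * n + 1) * θ)‖)
        = 16 * (1 / (2 * n + 1) ^ 2) := by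
      intro n
      rw [setIntegral_congr_fun measurableSet_Ioi (g := fun θ : ℝ =>
          16 * θ * Real.exp (-(2 * n + 1) * θ)) (fun θ hθ => ?_), integral_F n]
      rw [Real.norm_eq_abs, abs_of_nonneg]
      exact mul_nonneg (mul_nonneg (by norm_num) (le_of_lt hθ)) (Real.exp_pos _).le
    refine Summable.congr ((hasSum_odd_inv_sq.mul_left 16).summable) fun n => (heq n).symm
  have has := MeasureTheory.hasSum_integral_of_summable_integral_norm
    (F := fun (n : ℕ) (θ : ℝ) => 16 * θ * Real.exp (-(2 * n + 1) * θ))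
    (μ := volume.restrict (Ioi 0)) integrable_F hF_sum
  rw [← has.tsum_eq]
  have : ∑' n : ℕ, (∫ θ in Ioi (0:ℝ), 16 * θ * Real.exp (-(2 * n + 1) * θ)) = 2 * π ^ 2 := by
    rw [tsum_congr integral_F, (hasSum_odd_inv_sq.mul_left 16).tsum_eq]
    ring
  rw [this]
  ring

/-- The third Ising intermediate-state integral:
`I₃ = ∬ { tanh²(θ₁₂/2) tanh²(θ₁/2) tanh²(θ₂/2) - tanh²(θ₁₂/2) - tanh²(θ₁/2)
  - tanh²(θ₂/2) + 2 } dθ₁ dθ₂ = 4π²`. -/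
theorem ising_I3 :
    ∫ θ₁ : ℝ, ∫ θ₂ : ℝ,
      (Real.tanh ((θ₁ - θ₂) / 2) ^ 2 * Real.tanh (θ₁ / 2) ^ 2 * Real.tanh (θ₂ / 2) ^ 2
        - Real.tanh ((θ₁ - θ₂) / 2) ^ 2 - Real.tanh (θ₁ / 2) ^ 2 - Real.tanh (θ₂ / 2) ^ 2 + 2)
      = 4 * π ^ 2 := by
  have h0 : ∀ᵐ x : ℝ, x ≠ 0 := by
    rw [MeasureTheory.ae_iff]
    simp only [ne_eq, not_not]
    rw [Set.setOf_eq_eq_singleton]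
    exact measure_singleton 0
  have hae : (fun θ₁ : ℝ => ∫ θ₂ : ℝ,
      (Real.tanh ((θ₁ - θ₂) / 2) ^ 2 * Real.tanh (θ₁ / 2) ^ 2 * Real.tanh (θ₂ / 2) ^ 2
        - Real.tanh ((θ₁ - θ₂) / 2) ^ 2 - Real.tanh (θ₁ / 2) ^ 2 - Real.tanh (θ₂ / 2) ^ 2 + 2))
      =ᵐ[volume] fun θ₁ : ℝ => 8 * θ₁ / Real.sinh θ₁ := by
    filter_upwards [h0] with θ₁ hθ₁
    exact inner_integral θ₁ hθ₁
  rw [MeasureTheory.integral_congr_ae hae, outer_integral]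
end

section
/- Let I : positive integers -> R be defined by I_1 = 1, I_2 = -4, and I_n = (n-2)^2 * 4*pi^2 * I_{n-2} for n >= 3. Then the series sum over n >= 1 of I_n / (n! * (2*pi)^n) converges absolutely and equals 1/8 (so that the dimension Delta = (1/2) * sum = 1/16 for the scaling Ising model). -/
open scoped Real

namespace IsingAux

/-- normalized central binomial coefficient `(2k choose k)/4^k` -/
noncomputable def cc (k : ℕ) : ℝ := (Nat.centralBinom k : ℝ) / 4 ^ k

lemma cc_pos (k : ℕ) : 0 < cc k :=
  div_pos (by exact_mod_cast Nat.centralBinom_pos k) (by positivity)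

lemma cc_zero : cc 0 = 1 := by simp [cc, Nat.centralBinom]

lemma cc_succ (k : ℕ) : (2 * (k : ℝ) + 2) * cc (k + 1) = (2 * k + 1) * cc k := by
  have h := Nat.succ_mul_centralBinom_succ k
  have h' : ((k : ℝ) + 1) * (Nat.centralBinom (k + 1) : ℝ)
      = 2 * (2 * k + 1) * (Nat.centralBinom k : ℝ) := by exact_mod_cast h
  have h4 : (4 : ℝ) ^ (k + 1) ≠ 0 := by positivity
  have h2 : ((k:ℝ) + 1) * (Nat.centralBinom (k+1) : ℝ) * 4 ^ k
      = 2 * (2 * k + 1) * (Nat.centralBinom k : ℝ) * 4 ^ k := by rw [h']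
  unfold cc
  field_simp
  linear_combination 2 * h2

lemma cc_le_one (k : ℕ) : cc k ≤ 1 := by
  induction k with
  | zero => simp [cc_zero]
  | succ k ih =>
    have h := cc_succ k
    have hp : (0:ℝ) < 2 * (k:ℝ) + 2 := by positivity
    have : cc (k+1) = (2 * (k:ℝ) + 1) * cc k / (2 * k + 2) := by
      field_simp at h ⊢; linarith
    rw [this]
    rw [div_le_one hp]
    nlinarith [cc_pos k]

lemma cc_sq_mul_le (k : ℕ) : cc k ^ 2 * (2 * (k : ℝ) + 1) ≤ 1 := by
  induction k with
  | zero => simp [cc_zero]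
  | succ k ih =>
    have h := cc_succ k
    have hp : (0:ℝ) < 2 * (k:ℝ) + 2 := by positivity
    have hke : cc (k+1) = (2 * (k:ℝ) + 1) * cc k / (2 * k + 2) := by
      field_simp at h ⊢; linarith
    rw [hke]
    rw [div_pow]
    rw [div_mul_eq_mul_div, div_le_one (by positivity)]
    push_cast
    nlinarith [cc_pos k, sq_nonneg (cc k)]

lemma one_le_cc_sq_mul (k : ℕ) : 1 ≤ cc k ^ 2 * (4 * (k : ℝ) + 1) := by
  induction k with
  | zero => simp [cc_zero]
  | succ k ih =>
    have h := cc_succ k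
    have hp : (0:ℝ) < 2 * (k:ℝ) + 2 := by positivity
    have hke : cc (k+1) = (2 * (k:ℝ) + 1) * cc k / (2 * k + 2) := by
      field_simp at h ⊢; linarith
    rw [hke, div_pow, div_mul_eq_mul_div, le_div_iff₀ (by positivity)]
    push_cast
    nlinarith [cc_pos k, sq_nonneg (cc k)]

noncomputable def uu (k : ℕ) : ℝ := cc k / (2 * k + 1)
noncomputable def ww (k : ℕ) : ℝ := 1 / (cc k * ((2 * k + 1) * (2 * k + 2)))

lemma uu_pos (k : ℕ) : 0 < uu k := div_pos (cc_pos k) (by positivity)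
lemma ww_pos (k : ℕ) : 0 < ww k := by
  have := cc_pos k; unfold ww; positivity

lemma ww_zero : ww 0 = 1 / 2 := by simp [ww, cc_zero]

lemma ww_succ (k : ℕ) :
    (2 * (k : ℝ) + 4) * ((2 * k + 3) * ww (k + 1)) = (2 * k + 2) ^ 2 * ww k := by
  have h := cc_succ k
  have h1 := cc_pos k
  have h2 := cc_pos (k + 1)
  unfold ww
  rw [← sub_eq_zero]
  have e1 : cc (k+1) * ((2 * ((k:ℝ)+1) + 1) * (2 * ((k:ℝ)+1) + 2)) ≠ 0 := by positivity
  have e2 : cc k * ((2 * (k:ℝ) + 1) * (2 * (k:ℝ) + 2)) ≠ 0 := by positivity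
  push_cast
  field_simp
  linear_combination (-(2*(k:ℝ)+4) * (2*(k:ℝ)+3)) * h

/-- the summable majorant -/
noncomputable def MM (k : ℕ) : ℝ := 2 / (Real.sqrt ((k : ℝ) + 1)) ^ 3

lemma summable_MM : Summable MM := by
  have h : Summable (fun n : ℕ => 1 / (n : ℝ) ^ ((3:ℝ)/2)) :=
    Real.summable_one_div_nat_rpow.mpr (by norm_num)
  have h2 : Summable (fun n : ℕ => 1 / ((n + 1 : ℕ) : ℝ) ^ ((3:ℝ)/2)) :=
    (summable_nat_add_iff 1).mpr h
  have key : ∀ n : ℕ, 1 / (((n + 1 : ℕ)) : ℝ) ^ ((3:ℝ)/2)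
      = 1 / (Real.sqrt ((n : ℝ) + 1)) ^ 3 := by
    intro n
    have hn : (0:ℝ) ≤ (n : ℝ) + 1 := by positivity
    rw [Real.sqrt_eq_rpow, ← Real.rpow_natCast (((n:ℝ)+1) ^ ((1:ℝ)/2)) 3,
      ← Real.rpow_mul hn]
    norm_num
  have : Summable (fun n : ℕ => 1 / (Real.sqrt ((n : ℝ) + 1)) ^ 3) := by
    refine h2.congr fun n => ?_
    rw [key n]
  show Summable fun k : ℕ => 2 / (Real.sqrt ((k : ℝ) + 1)) ^ 3
  simpa [MM, div_eq_mul_inv, mul_comm] using this.mul_left 2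

lemma sq_le_imp (a b : ℝ) (ha : 0 ≤ a) (hb : 0 ≤ b) (h : a ^ 2 ≤ b ^ 2) : a ≤ b :=
  (pow_le_pow_iff_left₀ ha hb two_ne_zero).mp h

lemma uu_le_MM (k : ℕ) : uu k ≤ MM k := by
  have h1 := cc_sq_mul_le k
  have hs : Real.sqrt ((k:ℝ)+1) ^ 2 = (k:ℝ) + 1 := Real.sq_sqrt (by positivity)
  have hs0 : (0:ℝ) ≤ Real.sqrt ((k:ℝ)+1) := Real.sqrt_nonneg _
  refine sq_le_imp _ _ (uu_pos k).le (by unfold MM; positivity) ?_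
  unfold uu MM
  rw [div_pow, div_pow, div_le_div_iff₀ (by positivity) (by positivity)]
  have h6 : ((Real.sqrt ((k:ℝ)+1)) ^ 3) ^ 2 = ((k:ℝ)+1) ^ 3 := by
    rw [← pow_mul, show 3 * 2 = 2 * 3 from rfl, pow_mul, hs]
  rw [h6]
  have hck := cc_pos k
  nlinarith [sq_nonneg (cc k), sq_nonneg ((k:ℝ)), sq_nonneg (cc k * (k:ℝ))]

lemma ww_le_MM (k : ℕ) : ww k ≤ MM k := by
  have h1 := one_le_cc_sq_mul k
  have hs : Real.sqrt ((k:ℝ)+1) ^ 2 = (k:ℝ) + 1 := Real.sq_sqrt (by positivity)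
  refine sq_le_imp _ _ (ww_pos k).le (by unfold MM; positivity) ?_
  unfold ww MM
  rw [div_pow, div_pow, div_le_div_iff₀ (by have := cc_pos k; positivity) (by positivity)]
  have h6 : ((Real.sqrt ((k:ℝ)+1)) ^ 3) ^ 2 = ((k:ℝ)+1) ^ 3 := by
    rw [← pow_mul, show 3 * 2 = 2 * 3 from rfl, pow_mul, hs]
  rw [h6]
  have hck := cc_pos k
  nlinarith [sq_nonneg (cc k), sq_nonneg ((k:ℝ)), sq_nonneg (cc k * ((k:ℝ)+1)),
    mul_pos hck hck, sq_nonneg (cc k * (k:ℝ))]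

lemma summable_uu : Summable uu :=
  summable_MM.of_nonneg_of_le (fun k => (uu_pos k).le) uu_le_MM

lemma summable_ww : Summable ww :=
  summable_MM.of_nonneg_of_le (fun k => (ww_pos k).le) ww_le_MM

lemma ww_le_two (k : ℕ) : ww k ≤ 2 := by
  refine (ww_le_MM k).trans ?_
  unfold MM
  rw [div_le_iff₀ (by positivity)]
  have : (1:ℝ) ≤ Real.sqrt ((k:ℝ)+1) := by
    rw [show (1:ℝ) = Real.sqrt 1 by simp]
    exact Real.sqrt_le_sqrt (by norm_num)
  have h3 : (1:ℝ) ^ 3 ≤ Real.sqrt ((k:ℝ)+1) ^ 3 := pow_le_pow_left₀ (by norm_num) this 3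
  norm_num at h3
  linarith

lemma uu_le_one (k : ℕ) : uu k ≤ 1 := by
  unfold uu
  rw [div_le_one (by positivity)]
  have := cc_le_one k; linarith

/-- summability of `k ↦ a k * x ^ m k` for `|x| < 1` with polynomially bounded
coefficients and `m k ≥ 2k - 1`. -/
lemma summable_aux (a : ℕ → ℝ) (m : ℕ → ℕ) (C : ℝ) (ha : ∀ k, |a k| ≤ C * (k + 1) ^ 2)
    (hm1 : ∀ k, 2 * k ≤ m k + 1) {x : ℝ} (hx : |x| < 1) :
    Summable fun k => a k * x ^ m k := by
  rcases eq_or_ne x 0 with rfl | hx0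
  · refine summable_of_ne_finset_zero (s := {0}) fun k hk => ?_
    have hk0 : k ≠ 0 := by simpa using hk
    have : m k ≠ 0 := by have := hm1 k; omega
    simp [zero_pow this]
  have hax : (0:ℝ) < |x| := abs_pos.mpr hx0
  have hx2 : |x ^ 2| < 1 := by
    rw [abs_pow]; exact pow_lt_one₀ (abs_nonneg x) hx two_ne_zero
  have hgeo : Summable (fun k : ℕ => ((k:ℝ) ^ 2) * |x ^ 2| ^ k) := by
    simpa using summable_pow_mul_geometric_of_norm_lt_one 2 (by simpa using hx2)
  have hgeo1 : Summable (fun k : ℕ => ((k:ℝ)) * |x ^ 2| ^ k) := by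
    simpa using summable_pow_mul_geometric_of_norm_lt_one 1 (by simpa using hx2)
  have hgeo2 : Summable (fun k : ℕ => |x ^ 2| ^ k) :=
    summable_geometric_of_lt_one (abs_nonneg _) hx2
  have hmaj : Summable (fun k : ℕ => (|C|/|x|) * (((k:ℝ)^2) * |x^2|^k)
      + (2*|C|/|x|) * (((k:ℝ)) * |x^2|^k) + (|C|/|x|) * |x^2|^k) :=
    ((hgeo.mul_left _).add (hgeo1.mul_left _)).add (hgeo2.mul_left _)
  refine Summable.of_norm ?_
  refine Summable.of_nonneg_of_le (fun k => norm_nonneg _) (fun k => ?_) hmaj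
  have hCnn : C * ((k:ℝ)+1)^2 ≤ |C| * ((k:ℝ)+1)^2 := by
    have : C ≤ |C| := le_abs_self C
    nlinarith [sq_nonneg ((k:ℝ)+1)]
  have h1 : ‖a k * x ^ m k‖ ≤ |C| * ((k:ℝ) + 1) ^ 2 * |x| ^ m k := by
    rw [norm_mul, norm_pow]
    exact mul_le_mul_of_nonneg_right ((ha k).trans hCnn) (by positivity)
  refine h1.trans ?_
  have h2 : |x| ^ m k ≤ |x| ^ (2 * k) / |x| := by
    rw [le_div_iff₀ hax, ← pow_succ]
    exact pow_le_pow_of_le_one (abs_nonneg x) hx.le (hm1 k)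
  have h3 : |x| ^ (2 * k) = |x ^ 2| ^ k := by
    rw [abs_pow, ← pow_mul, mul_comm]
  calc |C| * ((k : ℝ) + 1) ^ 2 * |x| ^ m k
      ≤ |C| * ((k : ℝ) + 1) ^ 2 * (|x ^ 2| ^ k / |x|) := by
        rw [← h3]; exact mul_le_mul_of_nonneg_left h2 (by positivity)
    _ = _ := by field_simp; ring

lemma hasDerivAt_aux (a : ℕ → ℝ) (m : ℕ → ℕ) (ha : ∀ k, |a k| ≤ 4 * (k + 1))
    (hm1 : ∀ k, 2 * k ≤ m k) (hm2 : ∀ k, m k ≤ 2 * k + 2) {x : ℝ} (hx : |x| < 1) :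
    HasDerivAt (fun y => ∑' k, a k * y ^ m k)
      (∑' k, a k * ((m k : ℝ) * x ^ (m k - 1))) x := by
  set r : ℝ := (|x| + 1) / 2 with hr
  have hr0 : 0 < r := by positivity
  have hxr : |x| < r := by rw [hr]; linarith
  have hr1 : r < 1 := by rw [hr]; linarith
  have hr2 : |r ^ 2| < 1 := by
    rw [abs_of_nonneg (by positivity)]
    exact pow_lt_one₀ hr0.le hr1 two_ne_zero
  -- bound sequence
  set u : ℕ → ℝ := fun k => (4 * (k + 1) * (2 * k + 2) / r) * (r ^ 2) ^ k with hu
  have husum : Summable u := by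
    have h1 : Summable (fun k : ℕ => ((k:ℝ) ^ 2) * (r ^ 2) ^ k) := by
      simpa using summable_pow_mul_geometric_of_norm_lt_one 2 (by simpa using hr2)
    have h2 : Summable (fun k : ℕ => ((k:ℝ)) * (r ^ 2) ^ k) := by
      simpa using summable_pow_mul_geometric_of_norm_lt_one 1 (by simpa using hr2)
    have h3 : Summable (fun k : ℕ => (r ^ 2) ^ k) :=
      summable_geometric_of_lt_one (by positivity) (by
        calc r ^ 2 ≤ |r ^ 2| := le_abs_self _
          _ < 1 := hr2)
    have h4 : Summable (fun k : ℕ =>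
        (8/r) * ((k:ℝ)^2 * (r^2)^k) + (16/r) * ((k:ℝ) * (r^2)^k) + (8/r) * (r^2)^k) :=
      ((h1.mul_left _).add (h2.mul_left _)).add (h3.mul_left _)
    refine h4.congr fun k => ?_
    rw [hu]; field_simp; ring
  have hopen : IsOpen (Set.Ioo (-r) r) := isOpen_Ioo
  have hconn : IsPreconnected (Set.Ioo (-r) r) := (convex_Ioo _ _).isPreconnected
  have hmem : x ∈ Set.Ioo (-r) r := by
    constructor <;> [linarith [neg_abs_le x]; linarith [le_abs_self x]]
  have h0mem : (0:ℝ) ∈ Set.Ioo (-r) r := by constructor <;> linarith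
  refine hasDerivAt_tsum_of_isPreconnected (g' := fun k y => a k * ((m k : ℝ) * y ^ (m k - 1))) husum hopen hconn
    (fun k y _ => ?_) (fun k y hy => ?_) h0mem ?_ hmem
  · exact (hasDerivAt_pow (m k) y).const_mul (a k)
  · -- derivative bound
    rcases Nat.eq_zero_or_pos (m k) with h0 | h0
    · simp only [h0, Nat.cast_zero, zero_mul, mul_zero, norm_zero]
      rw [hu]; positivity
    · have hy' : |y| ≤ r := by
        rw [abs_le]; exact ⟨hy.1.le, hy.2.le⟩
      have hyp : |y| ^ (m k - 1) ≤ r ^ (m k - 1) :=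
        pow_le_pow_left₀ (abs_nonneg _) hy' _
      have h2k : r ^ (m k - 1) ≤ r ^ (2 * k - 1) :=
        pow_le_pow_of_le_one hr0.le hr1.le (by have := hm1 k; omega)
      have h2k' : r ^ (2 * k - 1) ≤ (r ^ 2) ^ k / r := by
        rw [le_div_iff₀ hr0, ← pow_mul]
        rcases Nat.eq_zero_or_pos k with hk | hk
        · simpa [hk] using hr1.le
        · have he : r ^ (2 * k) = r ^ (2 * k - 1) * r := by
            rw [← pow_succ]; congr 1; omega
          rw [he]
      have hbound : ‖a k * ((m k : ℝ) * y ^ (m k - 1))‖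
          ≤ 4 * (k + 1) * (2 * k + 2) * ((r ^ 2) ^ k / r) := by
        rw [norm_mul, norm_mul, norm_pow, Real.norm_natCast]
        have hmk : (m k : ℝ) ≤ 2 * k + 2 := by exact_mod_cast hm2 k
        have := ha k
        calc |a k| * ((m k : ℝ) * ‖y‖ ^ (m k - 1))
            ≤ (4 * (k + 1)) * ((2 * k + 2) * ((r ^ 2) ^ k / r)) := by
              refine mul_le_mul this ?_ (by positivity) (by positivity)
              refine mul_le_mul hmk ?_ (by positivity) (by positivity)
              exact (hyp.trans h2k).trans h2k'
          _ = 4 * (k + 1) * (2 * k + 2) * ((r ^ 2) ^ k / r) := by ring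
      refine hbound.trans_eq ?_
      rw [hu]; field_simp
  · -- summability at the base point 0
    refine summable_of_ne_finset_zero (s := {0}) fun k hk => ?_
    have hk0 : k ≠ 0 := by simpa using hk
    have : m k ≠ 0 := by have := hm1 k; omega
    simp [zero_pow this]

lemma summable_deriv_aux (a : ℕ → ℝ) (m : ℕ → ℕ) (ha : ∀ k, |a k| ≤ 4 * (k + 1))
    (hm1 : ∀ k, 2 * k ≤ m k) (hm2 : ∀ k, m k ≤ 2 * k + 2) {x : ℝ} (hx : |x| < 1) :
    Summable fun k => a k * ((m k : ℝ) * x ^ (m k - 1)) := by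
  refine (summable_aux (fun k => a k * (m k : ℝ)) (fun k => m k - 1) 12
    (fun k => ?_) (fun k => ?_) hx).congr fun k => by ring
  case refine_2 => show 2 * k ≤ m k - 1 + 1; have := hm1 k; omega
  case refine_1 => ?_
  rw [abs_mul, Nat.abs_cast]
  have h1 := ha k
  have h2 : (m k : ℝ) ≤ 2 * k + 2 := by exact_mod_cast hm2 k
  have h3 : (0:ℝ) ≤ (m k : ℝ) := by positivity
  nlinarith [abs_nonneg (a k), sq_nonneg ((k:ℝ)+1)]

noncomputable def Hh (x : ℝ) : ℝ := ∑' k, cc k * x ^ (2 * k)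
noncomputable def dH (x : ℝ) : ℝ := ∑' k, cc k * (((2 * k : ℕ) : ℝ) * x ^ (2 * k - 1))
noncomputable def Ff (x : ℝ) : ℝ := ∑' k, uu k * x ^ (2 * k + 1)
noncomputable def Pp (x : ℝ) : ℝ := ∑' k, (((2 * k + 2 : ℕ) : ℝ) * ww k) * x ^ (2 * k + 1)
noncomputable def dP (x : ℝ) : ℝ :=
  ∑' k, (((2 * k + 2 : ℕ) : ℝ) * ww k) * (((2 * k + 1 : ℕ) : ℝ) * x ^ (2 * k))
noncomputable def Gg (x : ℝ) : ℝ := ∑' k, ww k * x ^ (2 * k + 2)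

lemma abs_cc_le (k : ℕ) : |cc k| ≤ 4 * ((k:ℝ) + 1) := by
  rw [abs_of_pos (cc_pos k)]
  have := cc_le_one k; nlinarith [Nat.cast_nonneg (α := ℝ) k]

lemma abs_uu_le (k : ℕ) : |uu k| ≤ 4 * ((k:ℝ) + 1) := by
  rw [abs_of_pos (uu_pos k)]
  have := uu_le_one k; nlinarith [Nat.cast_nonneg (α := ℝ) k]

lemma abs_pw_le (k : ℕ) : |((2 * k + 2 : ℕ) : ℝ) * ww k| ≤ 4 * ((k:ℝ) + 1) := by
  rw [abs_of_pos (by have := ww_pos k; positivity)]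
  have h1 := ww_le_two k
  have h2 := ww_pos k
  push_cast
  nlinarith [Nat.cast_nonneg (α := ℝ) k]

lemma abs_ww_le (k : ℕ) : |ww k| ≤ 4 * ((k:ℝ) + 1) := by
  rw [abs_of_pos (ww_pos k)]
  have := ww_le_two k; nlinarith [Nat.cast_nonneg (α := ℝ) k]

section pointwise
variable {x : ℝ}

lemma hasDerivAt_Hh (hx : |x| < 1) : HasDerivAt Hh (dH x) x :=
  hasDerivAt_aux cc (fun k => 2 * k) abs_cc_le (fun k => le_rfl) (fun k => Nat.le_add_right _ 2) hx

lemma hasDerivAt_Ff (hx : |x| < 1) : HasDerivAt Ff (Hh x) x := by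
  have h := hasDerivAt_aux uu (fun k => 2 * k + 1) abs_uu_le
    (fun k => Nat.le_succ_of_le le_rfl) (fun k => by show 2*k+1 ≤ 2*k+2; omega) hx
  have he : (∑' k, uu k * (((2 * k + 1 : ℕ) : ℝ) * x ^ (2 * k + 1 - 1))) = Hh x := by
    refine tsum_congr fun k => ?_
    have h21 : (2 * (k:ℝ) + 1) ≠ 0 := by positivity
    unfold uu
    push_cast
    field_simp
  rwa [he] at h

lemma hasDerivAt_Pp (hx : |x| < 1) : HasDerivAt Pp (dP x) x :=
  hasDerivAt_aux (fun k => ((2 * k + 2 : ℕ) : ℝ) * ww k) (fun k => 2 * k + 1) abs_pw_le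
    (fun k => Nat.le_succ_of_le le_rfl) (fun k => by show 2*k+1 ≤ 2*k+2; omega) hx

lemma hasDerivAt_Gg (hx : |x| < 1) : HasDerivAt Gg (Pp x) x := by
  have h := hasDerivAt_aux ww (fun k => 2 * k + 2) abs_ww_le
    (fun k => by show 2*k ≤ 2*k+2; omega) (fun k => le_rfl) hx
  have he : (∑' k, ww k * (((2 * k + 2 : ℕ) : ℝ) * x ^ (2 * k + 2 - 1))) = Pp x := by
    refine tsum_congr fun k => ?_
    push_cast
    ring
  rwa [he] at h

/-- the key recurrence identity for `dH` -/
lemma dH_identity (hx : |x| < 1) : dH x = x * Hh x + x ^ 2 * dH x := by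
  have hsum_dH : Summable fun k => cc k * (((2 * k : ℕ) : ℝ) * x ^ (2 * k - 1)) :=
    summable_deriv_aux cc (fun k => 2 * k) abs_cc_le (fun k => le_rfl) (fun k => Nat.le_add_right _ 2) hx
  have hsum_H1 : Summable fun k => cc k * x ^ (2 * k + 1) :=
    summable_aux cc (fun k => 2 * k + 1) 4 (fun k => by
        have := abs_cc_le k; nlinarith [abs_nonneg (cc k), sq_nonneg ((k:ℝ)+1),
          Nat.cast_nonneg (α := ℝ) k]) (fun k => by show 2*k ≤ 2*k+1+1; omega) hx
  have hsum_T : Summable fun k : ℕ => (2 * (k:ℝ) + 1) * cc k * x ^ (2 * k + 1) :=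
    summable_aux (fun k : ℕ => (2 * (k:ℝ) + 1) * cc k) (fun k => 2 * k + 1) 12 (fun k => by
        rw [abs_mul, abs_of_pos (by positivity : (0:ℝ) < 2 * (k:ℝ) + 1)]
        have := abs_cc_le k
        have := abs_nonneg (cc k)
        nlinarith [Nat.cast_nonneg (α := ℝ) k]) (fun k => by show 2*k ≤ 2*k+1+1; omega) hx
  have step1 : dH x = ∑' k : ℕ, (2 * (k:ℝ) + 1) * cc k * x ^ (2 * k + 1) := by
    unfold dH
    rw [Summable.tsum_eq_zero_add hsum_dH]
    simp only [Nat.mul_zero, Nat.cast_zero, zero_mul, mul_zero, zero_add]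
    refine tsum_congr fun k => ?_
    have hcs := cc_succ k
    have he : 2 * (k + 1) - 1 = 2 * k + 1 := by omega
    rw [he]
    push_cast
    linear_combination (x ^ (2*k+1)) * hcs
  have step2 : x * Hh x = ∑' k, cc k * x ^ (2 * k + 1) := by
    unfold Hh
    rw [← tsum_mul_left]
    refine tsum_congr fun k => by ring
  have step3 : x ^ 2 * dH x = ∑' k : ℕ, 2 * (k:ℝ) * cc k * x ^ (2 * k + 1) := by
    unfold dH
    rw [← tsum_mul_left]
    refine tsum_congr fun k => ?_
    rcases Nat.eq_zero_or_pos k with rfl | hk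
    · simp
    · have he : 2 * k - 1 + 2 = 2 * k + 1 := by omega
      push_cast
      rw [mul_comm (x^2), mul_assoc, mul_assoc, ← pow_add, he]
      ring
  have hsum_T2 : Summable fun k : ℕ => 2 * (k:ℝ) * cc k * x ^ (2 * k + 1) :=
    summable_aux (fun k : ℕ => 2 * (k:ℝ) * cc k) (fun k => 2 * k + 1) 12 (fun k => by
        rw [abs_mul, abs_of_nonneg (by positivity : (0:ℝ) ≤ 2 * (k:ℝ))]
        have := abs_cc_le k
        have := abs_nonneg (cc k)
        nlinarith [Nat.cast_nonneg (α := ℝ) k]) (fun k => by show 2*k ≤ 2*k+1+1; omega) hx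
  calc dH x = ∑' k : ℕ, (2 * (k:ℝ) + 1) * cc k * x ^ (2 * k + 1) := step1
    _ = (∑' k : ℕ, cc k * x ^ (2 * k + 1)) + ∑' k : ℕ, 2 * (k:ℝ) * cc k * x ^ (2 * k + 1) := by
        rw [← Summable.tsum_add hsum_H1 hsum_T2]
        exact tsum_congr fun k => by ring
    _ = x * Hh x + x ^ 2 * dH x := by rw [← step2, ← step3]

/-- the key recurrence identity for `dP` -/
lemma dP_identity (hx : |x| < 1) : dP x = 1 + x * Pp x + x ^ 2 * dP x := by
  have habsT : ∀ k : ℕ, |((2 * k + 2 : ℕ) : ℝ) * ww k * (2 * (k:ℝ) + 1)| ≤ 12 * ((k:ℝ) + 1) ^ 2 := by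
    intro k
    have h2 := ww_pos k
    have h3 := ww_le_two k
    rw [abs_of_pos (by positivity)]
    push_cast
    nlinarith [Nat.cast_nonneg (α := ℝ) k, sq_nonneg ((k:ℝ)+1)]
  have hsum_dP : Summable fun k : ℕ => ((2 * k + 2 : ℕ) : ℝ) * ww k * (2 * (k:ℝ) + 1) * x ^ (2 * k) :=
    summable_aux _ (fun k => 2 * k) 12 habsT (fun k => by show 2*k ≤ 2*k+1; omega) hx
  have hsum_P : Summable fun k : ℕ => ((2 * k + 2 : ℕ) : ℝ) * ww k * x ^ (2 * k + 1) :=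
    summable_aux _ (fun k => 2 * k + 1) 12 (fun k => by
      have := abs_pw_le k
      have h0 := abs_nonneg (((2 * k + 2 : ℕ) : ℝ) * ww k)
      nlinarith [Nat.cast_nonneg (α := ℝ) k, sq_nonneg ((k:ℝ)+1)]) (fun k => by show 2*k ≤ 2*k+1+1; omega) hx
  have hdP : dP x = ∑' k : ℕ, ((2 * k + 2 : ℕ) : ℝ) * ww k * (2 * (k:ℝ) + 1) * x ^ (2 * k) := by
    unfold dP
    exact tsum_congr fun k => by push_cast; ring
  have step0 : dP x = (1 : ℝ)
      + ∑' k : ℕ, ((2 * (k+1) + 2 : ℕ) : ℝ) * ww (k+1) * (2 * ((k:ℝ)+1) + 1) * x ^ (2 * (k+1)) := by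
    rw [hdP, Summable.tsum_eq_zero_add (by exact hsum_dP)]
    congr 1
    · simp [ww_zero]
    · exact tsum_congr fun k => by push_cast; ring_nf
  have key : ∀ k : ℕ, ((2 * (k+1) + 2 : ℕ) : ℝ) * ww (k+1) * (2 * ((k:ℝ)+1) + 1) * x ^ (2 * (k+1))
      = ((2 * k + 2 : ℕ) : ℝ) * ww k * x ^ (2 * k + 1) * x
        + ((2 * k + 2 : ℕ) : ℝ) * ww k * (2 * (k:ℝ) + 1) * x ^ (2 * k) * x ^ 2 := by
    intro k
    have h := ww_succ k
    push_cast
    have hexp : x ^ (2 * (k + 1)) = x ^ (2 * k) * x ^ 2 := by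
      rw [← pow_add]; congr 1
    rw [hexp]
    linear_combination (x ^ (2*k) * x^2) * h
  have step2 : x * Pp x = ∑' k : ℕ, ((2 * k + 2 : ℕ) : ℝ) * ww k * x ^ (2 * k + 1) * x := by
    unfold Pp
    rw [← tsum_mul_left]
    exact tsum_congr fun k => by ring
  have step3 : x ^ 2 * dP x
      = ∑' k : ℕ, ((2 * k + 2 : ℕ) : ℝ) * ww k * (2 * (k:ℝ) + 1) * x ^ (2 * k) * x ^ 2 := by
    rw [hdP, ← tsum_mul_left]
    exact tsum_congr fun k => by ring
  calc dP x = (1:ℝ) + ∑' k : ℕ, ((2 * (k+1) + 2 : ℕ) : ℝ) * ww (k+1) * (2 * ((k:ℝ)+1) + 1)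
        * x ^ (2 * (k+1)) := step0
    _ = 1 + ((∑' k : ℕ, ((2 * k + 2 : ℕ) : ℝ) * ww k * x ^ (2 * k + 1) * x)
        + ∑' k : ℕ, ((2 * k + 2 : ℕ) : ℝ) * ww k * (2 * (k:ℝ) + 1) * x ^ (2 * k) * x ^ 2) := by
        congr 1
        rw [← Summable.tsum_add (hsum_P.mul_right x) (hsum_dP.mul_right (x^2))]
        exact tsum_congr fun k => key k
    _ = 1 + x * Pp x + x ^ 2 * dP x := by rw [← step2, ← step3]; ring

end pointwise

lemma Hh_zero : Hh 0 = 1 := by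
  unfold Hh
  rw [tsum_eq_single 0 (fun k hk => by
    have : 2 * k ≠ 0 := by omega
    simp [zero_pow this])]
  simp [cc_zero]

lemma Ff_zero : Ff 0 = 0 := by
  unfold Ff
  simp

lemma Pp_zero : Pp 0 = 0 := by
  unfold Pp
  simp

lemma Gg_zero : Gg 0 = 0 := by
  unfold Gg
  simp

/-- a function with zero derivative on `(-1,1)` is constant there -/
lemma eq_at_zero_of_deriv_zero (f : ℝ → ℝ)
    (hf : ∀ x ∈ Set.Ioo (-1:ℝ) 1, HasDerivAt f 0 x) {x : ℝ}
    (hx : x ∈ Set.Ioo (-1:ℝ) 1) : f x = f 0 := by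
  have h0 : (0:ℝ) ∈ Set.Ioo (-1:ℝ) 1 := by constructor <;> norm_num
  have := (convex_Ioo (-1:ℝ) 1).norm_image_sub_le_of_norm_hasDerivWithin_le
    (C := 0) (f' := fun _ => (0:ℝ)) (fun y hy => (hf y hy).hasDerivWithinAt)
    (fun y hy => by simp) h0 hx
  have h2 : f x - f 0 = 0 := by simpa [norm_sub_eq_zero_iff] using this
  linarith

lemma mem_abs {x : ℝ} (hx : x ∈ Set.Ioo (-1:ℝ) 1) : |x| < 1 :=
  abs_lt.mpr ⟨hx.1, hx.2⟩

lemma Hh_sq (x : ℝ) (hx : x ∈ Set.Ioo (-1:ℝ) 1) : Hh x ^ 2 * (1 - x ^ 2) = 1 := by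
  have key : ∀ y ∈ Set.Ioo (-1:ℝ) 1,
      HasDerivAt (fun y => Hh y ^ 2 * (1 - y ^ 2)) 0 y := by
    intro y hy
    have hy' := mem_abs hy
    have hH := hasDerivAt_Hh hy'
    have h1 : HasDerivAt (fun y => Hh y ^ 2) (2 * Hh y * dH y) y := by
      simpa using hH.fun_pow 2
    have h2 : HasDerivAt (fun y : ℝ => 1 - y ^ 2) (-(2 * y)) y := by
      simpa using (hasDerivAt_pow 2 y).const_sub 1
    have h3 := h1.mul h2
    have hid := dH_identity hy'
    refine HasDerivAt.congr_deriv h3 (Eq.symm ?_)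
    linear_combination (-2 * Hh y) * hid
  have := eq_at_zero_of_deriv_zero _ key hx
  rw [this, Hh_zero]
  norm_num

lemma Hh_pos (x : ℝ) (hx : x ∈ Set.Ioo (-1:ℝ) 1) : 1 ≤ Hh x := by
  have hx' := mem_abs hx
  have hsum : Summable fun k => cc k * x ^ (2 * k) :=
    summable_aux cc (fun k => 2 * k) 4 (fun k => by
      have := abs_cc_le k
      nlinarith [abs_nonneg (cc k), Nat.cast_nonneg (α := ℝ) k, sq_nonneg ((k:ℝ)+1)])
      (fun k => Nat.le_succ _) hx'
  have h0 : cc 0 * x ^ (2 * 0) ≤ Hh x := by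
    refine Summable.le_tsum hsum 0 fun k hk => ?_
    have h1 := (cc_pos k).le
    have h2 : (0:ℝ) ≤ x ^ (2 * k) := by rw [pow_mul]; positivity
    exact mul_nonneg h1 h2
  simpa [cc_zero] using h0

lemma Hh_eq (x : ℝ) (hx : x ∈ Set.Ioo (-1:ℝ) 1) :
    Hh x * Real.sqrt (1 - x ^ 2) = 1 := by
  have h1 : (0:ℝ) < 1 - x ^ 2 := by nlinarith [hx.1, hx.2]
  have hsq := Hh_sq x hx
  have h2 : (Hh x * Real.sqrt (1 - x ^ 2)) ^ 2 = 1 := by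
    rw [mul_pow, Real.sq_sqrt h1.le]
    exact hsq
  have h3 : 0 ≤ Hh x * Real.sqrt (1 - x ^ 2) := by
    have := Hh_pos x hx
    positivity
  nlinarith [h2, h3]

lemma Ff_eq (x : ℝ) (hx : x ∈ Set.Ioo (-1:ℝ) 1) : Ff x = Real.arcsin x := by
  have key : ∀ y ∈ Set.Ioo (-1:ℝ) 1,
      HasDerivAt (fun y => Ff y - Real.arcsin y) 0 y := by
    intro y hy
    have hy' := mem_abs hy
    have h1 : (0:ℝ) < 1 - y ^ 2 := by nlinarith [hy.1, hy.2]
    have hF := hasDerivAt_Ff hy'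
    have hne1 : y ≠ -1 := ne_of_gt hy.1
    have hne2 : y ≠ 1 := ne_of_lt hy.2
    have hA := Real.hasDerivAt_arcsin hne1 hne2
    have h2 := hF.sub hA
    refine HasDerivAt.congr_deriv h2 (Eq.symm ?_)
    have h3 := Hh_eq y hy
    have h4 : Real.sqrt (1 - y ^ 2) ≠ 0 := (Real.sqrt_pos.mpr h1).ne'
    have h5 : Hh y = 1 / Real.sqrt (1 - y ^ 2) := by
      rw [eq_div_iff h4]; exact h3
    rw [h5]; ring
  have := eq_at_zero_of_deriv_zero _ key hx
  rw [Ff_zero, Real.arcsin_zero] at this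
  linarith [this]

lemma psi_eq (x : ℝ) (hx : x ∈ Set.Ioo (-1:ℝ) 1) :
    (1 - x ^ 2) * Hh x * Pp x = Ff x := by
  have key : ∀ y ∈ Set.Ioo (-1:ℝ) 1,
      HasDerivAt (fun y => (1 - y ^ 2) * Hh y * Pp y - Ff y) 0 y := by
    intro y hy
    have hy' := mem_abs hy
    have hH := hasDerivAt_Hh hy'
    have hP := hasDerivAt_Pp hy'
    have hF := hasDerivAt_Ff hy'
    have h2 : HasDerivAt (fun y : ℝ => 1 - y ^ 2) (-(2 * y)) y := by
      simpa using (hasDerivAt_pow 2 y).const_sub 1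
    have h3 := ((h2.fun_mul hH).fun_mul hP).sub hF
    have hidH := dH_identity hy'
    have hidP := dP_identity hy'
    refine HasDerivAt.congr_deriv h3 (Eq.symm ?_)
    linear_combination (-(Pp y)) * hidH - (Hh y) * hidP
  have := eq_at_zero_of_deriv_zero _ key hx
  simp only [Hh_zero, Pp_zero, Ff_zero] at this
  norm_num at this
  linarith [this]

lemma Gg_eq (x : ℝ) (hx : x ∈ Set.Ioo (-1:ℝ) 1) : Gg x = Real.arcsin x ^ 2 / 2 := by
  have key : ∀ y ∈ Set.Ioo (-1:ℝ) 1,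
      HasDerivAt (fun y => Gg y - Ff y ^ 2 / 2) 0 y := by
    intro y hy
    have hy' := mem_abs hy
    have hG := hasDerivAt_Gg hy'
    have hF := hasDerivAt_Ff hy'
    have h1 : HasDerivAt (fun y => Ff y ^ 2 / 2) (2 * Ff y * Hh y / 2) y := by
      simpa using (hF.pow 2).div_const 2
    have h2 := hG.sub h1
    have hpsi := psi_eq y hy
    have hsq := Hh_sq y hy
    refine HasDerivAt.congr_deriv h2 (Eq.symm ?_)
    linear_combination (Pp y) * hsq - (Hh y) * hpsi
  have := eq_at_zero_of_deriv_zero _ key hx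
  simp only [Gg_zero, Ff_zero] at this
  norm_num at this
  rw [← Ff_eq x hx]
  linarith [this]

open Filter Topology

lemma tendsto_Ff : Tendsto Ff (𝓝[<] (1:ℝ)) (𝓝 (∑' k, uu k)) := by
  have h := tendsto_tsum_of_dominated_convergence (𝓕 := 𝓝[<] (1:ℝ))
    (f := fun x k => uu k * x ^ (2 * k + 1)) (g := uu) (bound := MM) summable_MM
    (fun k => ?_) ?_
  · exact h
  · have hc : Continuous (fun x : ℝ => uu k * x ^ (2 * k + 1)) := by continuity
    have := (hc.tendsto 1).mono_left (nhdsWithin_le_nhds (s := Set.Iio (1:ℝ)))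
    simpa using this
  · filter_upwards [Ioo_mem_nhdsLT_of_mem (show (1:ℝ) ∈ Set.Ioc 0 1 by norm_num)]
      with x hx k
    have h1 : 0 < x := hx.1
    have h2 : x ≤ 1 := hx.2.le
    have h3 : x ^ (2 * k + 1) ≤ 1 := pow_le_one₀ h1.le h2
    rw [norm_mul, norm_pow, Real.norm_eq_abs, Real.norm_eq_abs,
      abs_of_pos (uu_pos k), abs_of_pos h1]
    calc uu k * x ^ (2 * k + 1) ≤ uu k * 1 := by
          exact mul_le_mul_of_nonneg_left h3 (uu_pos k).le
      _ = uu k := mul_one _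
      _ ≤ MM k := uu_le_MM k

lemma tendsto_Gg : Tendsto Gg (𝓝[<] (1:ℝ)) (𝓝 (∑' k, ww k)) := by
  have h := tendsto_tsum_of_dominated_convergence (𝓕 := 𝓝[<] (1:ℝ))
    (f := fun x k => ww k * x ^ (2 * k + 2)) (g := ww) (bound := MM) summable_MM
    (fun k => ?_) ?_
  · exact h
  · have hc : Continuous (fun x : ℝ => ww k * x ^ (2 * k + 2)) := by continuity
    have := (hc.tendsto 1).mono_left (nhdsWithin_le_nhds (s := Set.Iio (1:ℝ)))
    simpa using this
  · filter_upwards [Ioo_mem_nhdsLT_of_mem (show (1:ℝ) ∈ Set.Ioc 0 1 by norm_num)]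
      with x hx k
    have h1 : 0 < x := hx.1
    have h2 : x ≤ 1 := hx.2.le
    have h3 : x ^ (2 * k + 2) ≤ 1 := pow_le_one₀ h1.le h2
    rw [norm_mul, norm_pow, Real.norm_eq_abs, Real.norm_eq_abs,
      abs_of_pos (ww_pos k), abs_of_pos h1]
    calc ww k * x ^ (2 * k + 2) ≤ ww k * 1 := by
          exact mul_le_mul_of_nonneg_left h3 (ww_pos k).le
      _ = ww k := mul_one _
      _ ≤ MM k := ww_le_MM k

lemma hasSum_uu : HasSum uu (π / 2) := by
  have hev : Ff =ᶠ[𝓝[<] (1:ℝ)] Real.arcsin := by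
    filter_upwards [Ioo_mem_nhdsLT_of_mem (show (1:ℝ) ∈ Set.Ioc 0 1 by norm_num)]
      with x hx
    exact Ff_eq x ⟨by linarith [hx.1], hx.2⟩
  have h1 : Tendsto Ff (𝓝[<] (1:ℝ)) (𝓝 (Real.arcsin 1)) := by
    refine Tendsto.congr' hev.symm ?_
    exact (Real.continuous_arcsin.tendsto 1).mono_left nhdsWithin_le_nhds
  have h2 := tendsto_nhds_unique tendsto_Ff h1
  rw [Real.arcsin_one] at h2
  rw [← h2]
  exact summable_uu.hasSum

lemma hasSum_ww : HasSum ww (π ^ 2 / 8) := by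
  have hev : Gg =ᶠ[𝓝[<] (1:ℝ)] (fun x => Real.arcsin x ^ 2 / 2) := by
    filter_upwards [Ioo_mem_nhdsLT_of_mem (show (1:ℝ) ∈ Set.Ioc 0 1 by norm_num)]
      with x hx
    exact Gg_eq x ⟨by linarith [hx.1], hx.2⟩
  have h1 : Tendsto Gg (𝓝[<] (1:ℝ)) (𝓝 (Real.arcsin 1 ^ 2 / 2)) := by
    refine Tendsto.congr' hev.symm ?_
    exact ((Real.continuous_arcsin.pow 2).div_const 2).tendsto 1 |>.mono_left nhdsWithin_le_nhds
  have h2 := tendsto_nhds_unique tendsto_Gg h1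
  rw [Real.arcsin_one] at h2
  rw [← show ((π/2) ^ 2 / 2 : ℝ) = π ^ 2 / 8 by ring, ← h2]
  exact summable_ww.hasSum

end IsingAux

open IsingAux

/-- The series `∑_{n≥1} Iₙ/(n! (2π)ⁿ)` of the Ising intermediate-state integrals
(`I₁ = 1`, `I₂ = -4`, `Iₙ = (n-2)² · 4π² · I_{n-2}` for `n ≥ 3`) converges
absolutely and equals `1/8`, so that `Δ = 1/16`. -/
theorem ising_delta_sum (I : ℕ → ℝ) (h1 : I 1 = 1) (h2 : I 2 = -4)
    (hrec : ∀ n, 3 ≤ n → I n = ((n : ℝ) - 2) ^ 2 * (4 * π ^ 2) * I (n - 2)) :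
    (Summable fun n : ℕ => |I (n + 1) / (Nat.factorial (n + 1) * (2 * π) ^ (n + 1))|) ∧
    ∑' n : ℕ, I (n + 1) / (Nat.factorial (n + 1) * (2 * π) ^ (n + 1)) = 1 / 8 := by
  have hpi := Real.pi_pos
  set a : ℕ → ℝ := fun n => I (n + 1) / (Nat.factorial (n + 1) * (2 * π) ^ (n + 1)) with ha
  -- closed form for odd indices
  have Iodd : ∀ k, I (2 * k + 1) = (Nat.centralBinom k : ℝ) * (Nat.factorial (2 * k)) * π ^ (2 * k) := by
    intro k
    induction k with
    | zero => simpa [Nat.centralBinom] using h1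
    | succ k ih =>
      have h3 : I (2 * (k + 1) + 1) = ((2 * (k:ℝ) + 3) - 2) ^ 2 * (4 * π ^ 2) * I (2 * k + 1) := by
        have := hrec (2 * k + 3) (by omega)
        rw [show 2 * k + 3 - 2 = 2 * k + 1 by omega] at this
        rw [show 2 * (k + 1) + 1 = 2 * k + 3 by omega, this]
        push_cast
        ring
      rw [h3, ih]
      have hCB : ((k:ℝ) + 1) * (Nat.centralBinom (k + 1) : ℝ)
          = 2 * (2 * k + 1) * (Nat.centralBinom k : ℝ) := by
        exact_mod_cast Nat.succ_mul_centralBinom_succ k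
      have hfac : (Nat.factorial (2 * (k + 1)) : ℝ)
          = (2 * k + 2) * ((2 * k + 1) * Nat.factorial (2 * k)) := by
        rw [show 2 * (k + 1) = (2 * k + 1) + 1 by omega, Nat.factorial_succ, Nat.factorial_succ]
        push_cast
        ring
      rw [hfac]
      rw [show 2 * (k + 1) = 2 * k + 2 by omega]
      rw [show π ^ (2 * k + 2) = π ^ (2 * k) * π ^ 2 by ring]
      push_cast
      linear_combination (-(2 * (2 * (k:ℝ) + 1)) * π ^ (2 * k) * π ^ 2 * (Nat.factorial (2 * k) : ℝ)) * hCB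
  -- closed form for even indices
  have Ieven : ∀ k, I (2 * k + 2) = -4 * ((Nat.factorial k : ℝ)) ^ 2 * (4 * π) ^ (2 * k) := by
    intro k
    induction k with
    | zero => simpa using h2
    | succ k ih =>
      have h3 : I (2 * (k + 1) + 2) = ((2 * (k:ℝ) + 4) - 2) ^ 2 * (4 * π ^ 2) * I (2 * k + 2) := by
        have := hrec (2 * k + 4) (by omega)
        rw [show 2 * k + 4 - 2 = 2 * k + 2 by omega] at this
        rw [show 2 * (k + 1) + 2 = 2 * k + 4 by omega, this]
        push_cast
        ring
      rw [h3, ih]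
      rw [show 2 * (k + 1) = 2 * k + 2 by omega, Nat.factorial_succ]
      rw [show (4 * π) ^ (2 * k + 2) = (4 * π) ^ (2 * k) * 16 * π ^ 2 by ring]
      push_cast
      ring
  -- term values
  have heven : ∀ k, a (2 * k) = uu k / (2 * π) := by
    intro k
    have hIk := Iodd k
    have hfac : (Nat.factorial (2 * k + 1) : ℝ) = (2 * k + 1) * Nat.factorial (2 * k) := by
      rw [Nat.factorial_succ]; push_cast; ring
    have hCBpos : (0:ℝ) < (Nat.centralBinom k : ℝ) := by
      exact_mod_cast Nat.centralBinom_pos k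
    have hfpos : (0:ℝ) < (Nat.factorial (2 * k) : ℝ) := by
      exact_mod_cast Nat.factorial_pos (2 * k)
    rw [ha]
    simp only
    rw [show 2 * k + 1 = 2 * k + 1 from rfl, hIk, hfac]
    unfold uu cc
    rw [show (2 * π) ^ (2 * k + 1) = 2 * π * (4 ^ k * π ^ (2 * k)) by
      rw [pow_succ']
      congr 1
      rw [mul_pow, pow_mul]
      norm_num]
    field_simp
  have hodd : ∀ k, a (2 * k + 1) = -(ww k / π ^ 2) := by
    intro k
    have hIk := Ieven k
    have hfac : (Nat.factorial (2 * k + 2) : ℝ)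
        = (2 * k + 2) * ((2 * k + 1) * Nat.factorial (2 * k)) := by
      rw [Nat.factorial_succ, Nat.factorial_succ]; push_cast; ring
    have hfac2 : (Nat.factorial (2 * k) : ℝ) = (Nat.centralBinom k : ℝ)
        * (Nat.factorial k : ℝ) ^ 2 := by
      have := Nat.choose_mul_factorial_mul_factorial (show k ≤ 2 * k by omega)
      have h4 : (Nat.centralBinom k : ℝ) * (Nat.factorial k : ℝ) * (Nat.factorial (2 * k - k) : ℝ)
          = Nat.factorial (2 * k) := by
        rw [Nat.centralBinom]
        exact_mod_cast this
      rw [show 2 * k - k = k by omega] at h4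
      rw [← h4]; ring
    have hCBpos : (0:ℝ) < (Nat.centralBinom k : ℝ) := by
      exact_mod_cast Nat.centralBinom_pos k
    have hfpos : (0:ℝ) < (Nat.factorial k : ℝ) := by
      exact_mod_cast Nat.factorial_pos k
    rw [ha]
    simp only
    rw [show 2 * k + 1 + 1 = 2 * k + 2 from rfl, hIk, hfac, hfac2]
    unfold ww cc
    rw [show (2 * π) ^ (2 * k + 2) = 4 * π ^ 2 * (4 ^ k * π ^ (2 * k)) by
      rw [mul_pow]
      rw [show (2:ℝ) ^ (2 * k + 2) = 4 * 4 ^ k by rw [pow_add, pow_mul]; norm_num; ring]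
      rw [show (π:ℝ) ^ (2 * k + 2) = π ^ 2 * π ^ (2 * k) by rw [pow_add]; ring]
      ring]
    rw [show (4 * π) ^ (2 * k) = ((4:ℝ) ^ k) ^ 2 * π ^ (2 * k) by
      rw [mul_pow, ← pow_mul, mul_comm k 2]]
    field_simp
  -- assemble
  have hs_even : HasSum (fun k => a (2 * k)) (1 / 4) := by
    have := hasSum_uu.div_const (2 * π)
    have he : π / 2 / (2 * π) = 1 / 4 := by
      field_simp; ring
    rw [he] at this
    exact this.congr_fun fun k => heven k
  have hs_odd : HasSum (fun k => a (2 * k + 1)) (-(1 / 8)) := by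
    have := (hasSum_ww.div_const (π ^ 2)).neg
    have he : -(π ^ 2 / 8 / π ^ 2) = -(1/8) := by
      field_simp
    rw [he] at this
    exact this.congr_fun fun k => hodd k
  have hs : HasSum a (1 / 8) := by
    have := HasSum.even_add_odd (f := a) hs_even hs_odd
    norm_num at this
    exact this
  constructor
  · -- summability of absolute values
    have habs_even : HasSum (fun k => |a (2 * k)|) (1 / 4) := by
      refine hs_even.congr_fun fun k => ?_
      rw [heven k, abs_of_pos (by have := uu_pos k; positivity)]
    have habs_odd : HasSum (fun k => |a (2 * k + 1)|) (1 / 8) := by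
      have h4 : HasSum (fun k => ww k / π ^ 2) (1/8) := by
        have := hasSum_ww.div_const (π ^ 2)
        have he : π ^ 2 / 8 / π ^ 2 = 1/8 := by field_simp
        rwa [he] at this
      refine h4.congr_fun fun k => ?_
      rw [hodd k, abs_neg, abs_of_pos (by have := ww_pos k; positivity)]
    exact ⟨_, HasSum.even_add_odd (f := fun n => |a n|) habs_even habs_odd⟩
  · exact hs.tsum_eq
end

section
/- Exponential formula: let a : N -> Q with a_0 = 0, and for each n >= 0 define b_n = sum over set partitions pi of {1, ..., n} of the product over blocks B of pi of a_{|B|} (with b_0 = 1). Then, as an identity of formal power series over Q, sum over n of b_n * x^n / n! = exp( sum over n >= 1 of a_n * x^n / n! ). -/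
/-- The finite set of all set partitions of a finite set `J`: collections of
nonempty, pairwise disjoint subsets of `J` whose union is `J`. -/
def setPartitionsOf {α : Type*} [DecidableEq α] (J : Finset α) :
    Finset (Finset (Finset α)) :=
  J.powerset.powerset.filter fun P =>
    ∅ ∉ P ∧ P.sup id = J ∧ ∀ B ∈ P, ∀ C ∈ P, B ≠ C → Disjoint B C

/-- `partitionSum a n = ∑_{set partitions π of {1,…,n}} ∏_{B ∈ π} a_{|B|}`. -/
def partitionSum (a : ℕ → ℚ) (n : ℕ) : ℚ :=
  ∑ P ∈ setPartitionsOf (Finset.univ : Finset (Fin n)), ∏ B ∈ P, a B.card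

/-- The exponential of a formal power series `F` with zero constant term,
namely `∑_{k} F^k / k!`; since the coefficient of `xⁿ` in `F^k` vanishes for
`k > n`, the `n`-th coefficient is the finite sum `∑_{k ≤ n} coeff n (F^k)/k!`. -/
noncomputable def expOfSeries (F : PowerSeries ℚ) : PowerSeries ℚ :=
  PowerSeries.mk fun n =>
    ∑ k ∈ Finset.range (n + 1), PowerSeries.coeff (R := ℚ) n (F ^ k) / Nat.factorial k

open PowerSeries Finset

lemma coeff_pow_eq_zero {F : PowerSeries ℚ} (h : constantCoeff (R := ℚ) F = 0) {n k : ℕ}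
    (hk : n < k) : coeff (R := ℚ) n (F ^ k) = 0 := by
  have : X ∣ F := X_dvd_iff.mpr h
  exact (X_pow_dvd_iff.mp (pow_dvd_pow_of_dvd this k)) n hk

lemma coeff_expOfSeries {F : PowerSeries ℚ} (h : constantCoeff (R := ℚ) F = 0) {m n : ℕ} (hmn : m ≤ n) :
    coeff (R := ℚ) m (expOfSeries F) = ∑ k ∈ Finset.range (n + 1), coeff (R := ℚ) m (F ^ k) / Nat.factorial k := by
  rw [expOfSeries, coeff_mk]
  refine Finset.sum_subset (by intro k hk; simp_all; omega) ?_
  intro k hk hk2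
  simp only [mem_range] at hk hk2
  rw [coeff_pow_eq_zero h (by omega), zero_div]

lemma coeff_zero_expOfSeries {F : PowerSeries ℚ} : coeff (R := ℚ) 0 (expOfSeries F) = 1 := by
  simp [expOfSeries, coeff_mk]

lemma expOfSeries_rec {F : PowerSeries ℚ} (h : constantCoeff (R := ℚ) F = 0) (n : ℕ) :
    ((n : ℚ) + 1) * coeff (R := ℚ) (n + 1) (expOfSeries F) =
      ∑ k ∈ Finset.range (n + 1),
        ((n - k : ℕ) + 1 : ℚ) * coeff (R := ℚ) ((n - k) + 1) F * coeff (R := ℚ) k (expOfSeries F) := by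
  have key : ∀ k : ℕ, ((n : ℚ) + 1) * coeff (R := ℚ) (n + 1) (F ^ (k + 1)) =
      ((k : ℚ) + 1) * ∑ p ∈ Finset.HasAntidiagonal.antidiagonal n,
        coeff (R := ℚ) p.1 (F ^ k) * (coeff (R := ℚ) (p.2 + 1) F * ((p.2 : ℚ) + 1)) := by
    intro k
    calc ((n:ℚ)+1) * coeff (R := ℚ) (n+1) (F ^ (k+1)) = coeff (R := ℚ) n (d⁄dX ℚ (F^(k+1))) := by
          rw [coeff_derivative]; ring
      _ = ((k:ℚ)+1) * ∑ p ∈ Finset.HasAntidiagonal.antidiagonal n,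
            coeff (R := ℚ) p.1 (F^k) * coeff (R := ℚ) p.2 (d⁄dX ℚ F) := by
          rw [Derivation.leibniz_pow, Nat.add_sub_cancel, smul_eq_mul, map_nsmul,
            nsmul_eq_mul, coeff_mul]
          push_cast; ring
      _ = _ := by
          rw [Finset.mul_sum, Finset.mul_sum]
          exact Finset.sum_congr rfl fun p _ => by rw [coeff_derivative]
  calc ((n : ℚ) + 1) * coeff (R := ℚ) (n + 1) (expOfSeries F)
      = ∑ k ∈ Finset.range (n + 1), ((n:ℚ)+1) * coeff (R := ℚ) (n+1) (F ^ (k+1)) / Nat.factorial (k+1) := by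
        rw [expOfSeries, coeff_mk, Finset.mul_sum, Finset.sum_range_succ']
        simp [coeff_one, mul_div_assoc]
    _ = ∑ k ∈ Finset.range (n + 1), (∑ p ∈ Finset.HasAntidiagonal.antidiagonal n,
          coeff (R := ℚ) p.1 (F ^ k) * (coeff (R := ℚ) (p.2 + 1) F * ((p.2 : ℚ) + 1))) / Nat.factorial k := by
        refine Finset.sum_congr rfl fun k _ => ?_
        rw [key k, Nat.factorial_succ]
        push_cast
        exact mul_div_mul_left _ _ (by positivity)
    _ = ∑ p ∈ Finset.HasAntidiagonal.antidiagonal n, ((p.2:ℚ)+1) * coeff (R := ℚ) (p.2+1) F *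
          (∑ k ∈ Finset.range (n + 1), coeff (R := ℚ) p.1 (F ^ k) / Nat.factorial k) := by
        simp_rw [Finset.sum_div]
        rw [Finset.sum_comm]
        refine Finset.sum_congr rfl fun p _ => ?_
        rw [Finset.mul_sum]
        refine Finset.sum_congr rfl fun k _ => ?_
        rw [div_eq_mul_inv, div_eq_mul_inv]
        ring
    _ = ∑ p ∈ Finset.HasAntidiagonal.antidiagonal n, ((p.2:ℚ)+1) * coeff (R := ℚ) (p.2+1) F * coeff (R := ℚ) p.1 (expOfSeries F) := by
        refine Finset.sum_congr rfl fun p hp => ?_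
        rw [← coeff_expOfSeries h (Finset.HasAntidiagonal.antidiagonal.fst_le hp)]
    _ = _ := by
        rw [Finset.Nat.sum_antidiagonal_eq_sum_range_succ_mk]

open Finset

variable {α : Type*} [DecidableEq α] {β : Type*} [DecidableEq β]

lemma mem_setPartitionsOf {J : Finset α} {P : Finset (Finset α)} :
    P ∈ setPartitionsOf J ↔
      ∅ ∉ P ∧ P.sup id = J ∧ ∀ B ∈ P, ∀ C ∈ P, B ≠ C → Disjoint B C := by
  constructor
  · exact fun h => (Finset.mem_filter.mp h).2
  · rintro ⟨h1, h2, h3⟩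
    refine Finset.mem_filter.mpr ⟨?_, h1, h2, h3⟩
    rw [Finset.mem_powerset]
    intro B hB
    rw [Finset.mem_powerset]
    exact h2 ▸ Finset.le_sup (f := id) hB

lemma subset_of_mem_setPartitionsOf {J : Finset α} {P : Finset (Finset α)}
    (hP : P ∈ setPartitionsOf J) {B : Finset α} (hB : B ∈ P) : B ⊆ J :=
  (mem_setPartitionsOf.mp hP).2.1 ▸ Finset.le_sup (f := id) hB

lemma exists_block {J : Finset α} {P : Finset (Finset α)} (hP : P ∈ setPartitionsOf J)
    {x : α} (hx : x ∈ J) : ∃ B ∈ P, x ∈ B := by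
  have := (mem_setPartitionsOf.mp hP).2.1
  rw [← this] at hx
  simpa using Finset.mem_sup.mp hx

lemma filter_mem_eq_singleton {J : Finset α} {P : Finset (Finset α)}
    (hP : P ∈ setPartitionsOf J) {B : Finset α} (hB : B ∈ P) {x : α} (hx : x ∈ B) :
    P.filter (fun C => x ∈ C) = {B} := by
  ext C
  simp only [Finset.mem_filter, Finset.mem_singleton]
  constructor
  · rintro ⟨hC, hxC⟩
    by_contra hne
    exact Finset.disjoint_left.mp ((mem_setPartitionsOf.mp hP).2.2 C hC B hB hne) hxC hx
  · rintro rfl; exact ⟨hB, hx⟩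

/-- the block of `P` containing `x` (junk value if none). -/
def blk (x : α) (P : Finset (Finset α)) : Finset α := (P.filter (fun C => x ∈ C)).sup id

lemma blk_eq {J : Finset α} {P : Finset (Finset α)} (hP : P ∈ setPartitionsOf J)
    {B : Finset α} (hB : B ∈ P) {x : α} (hx : x ∈ B) : blk x P = B := by
  rw [blk, filter_mem_eq_singleton hP hB hx, Finset.sup_singleton, id]

lemma setPartitionsOf_empty : setPartitionsOf (∅ : Finset α) = {∅} := by
  ext P
  simp only [mem_setPartitionsOf, Finset.mem_singleton]
  constructor
  · rintro ⟨h1, h2, _⟩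
    ext B
    simp only [Finset.notMem_empty, iff_false]
    intro hB
    have hBsub : B ⊆ ∅ := h2 ▸ Finset.le_sup (f := id) hB
    exact h1 (by rwa [Finset.subset_empty.mp hBsub] at hB)
  · rintro rfl
    simp

def pSum (a : ℕ → ℚ) (J : Finset α) : ℚ :=
  ∑ P ∈ setPartitionsOf J, ∏ B ∈ P, a B.card

lemma erase_mem_setPartitionsOf {J : Finset α} {P : Finset (Finset α)}
    (hP : P ∈ setPartitionsOf J) {B : Finset α} (hB : B ∈ P) :
    P.erase B ∈ setPartitionsOf (J \ B) := by
  obtain ⟨h1, h2, h3⟩ := mem_setPartitionsOf.mp hP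
  refine mem_setPartitionsOf.mpr ⟨fun h => h1 (Finset.mem_of_mem_erase h), ?_, ?_⟩
  · ext y
    rw [Finset.mem_sup]
    simp only [Finset.mem_erase, id_eq]
    constructor
    · rintro ⟨C, ⟨hCB, hC⟩, hyC⟩
      refine Finset.mem_sdiff.mpr ⟨subset_of_mem_setPartitionsOf hP hC hyC, fun hyB =>
        Finset.disjoint_left.mp (h3 C hC B hB hCB) hyC hyB⟩
    · intro hy
      obtain ⟨hyJ, hyB⟩ := Finset.mem_sdiff.mp hy
      obtain ⟨C, hC, hyC⟩ := exists_block hP hyJ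
      exact ⟨C, ⟨fun h => hyB (h ▸ hyC), hC⟩, hyC⟩
  · intro C hC D hD hne
    exact h3 C (Finset.mem_of_mem_erase hC) D (Finset.mem_of_mem_erase hD) hne

lemma insert_mem_setPartitionsOf {J : Finset α} {B : Finset α} (hBJ : B ⊆ J)
    (hBne : B.Nonempty) {Q : Finset (Finset α)} (hQ : Q ∈ setPartitionsOf (J \ B)) :
    insert B Q ∈ setPartitionsOf J := by
  obtain ⟨h1, h2, h3⟩ := mem_setPartitionsOf.mp hQ
  have hdisj : ∀ C ∈ Q, Disjoint B C := by
    intro C hC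
    have : C ⊆ J \ B := subset_of_mem_setPartitionsOf hQ hC
    refine Finset.disjoint_left.mpr ?_
    intro y hyB hyC
    exact (Finset.mem_sdiff.mp (this hyC)).2 hyB
  refine mem_setPartitionsOf.mpr ⟨?_, ?_, ?_⟩
  · intro h
    rcases Finset.mem_insert.mp h with h | h
    · exact hBne.ne_empty h.symm
    · exact h1 h
  · rw [Finset.sup_insert, h2, id_eq]
    exact Finset.union_sdiff_of_subset hBJ
  · intro C hC D hD hne
    rcases Finset.mem_insert.mp hC with hCB | hC <;> rcases Finset.mem_insert.mp hD with hDB | hD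
    · exact absurd (hCB.trans hDB.symm) hne
    · rw [hCB]; exact hdisj D hD
    · rw [hDB]; exact (hdisj C hC).symm
    · exact h3 C hC D hD hne

lemma not_mem_of_partition_sdiff {J B : Finset α} {x : α} (hx : x ∈ B)
    {Q : Finset (Finset α)} (hQ : Q ∈ setPartitionsOf (J \ B)) : B ∉ Q := by
  intro h
  have : B ⊆ J \ B := subset_of_mem_setPartitionsOf hQ h
  exact (Finset.mem_sdiff.mp (this hx)).2 hx

lemma pSum_rec (a : ℕ → ℚ) {J : Finset α} {x : α} (hx : x ∈ J) :
    pSum a J = ∑ B ∈ J.powerset.filter (fun B => x ∈ B),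
      a B.card * pSum a (J \ B) := by
  rw [pSum, ← Finset.sum_fiberwise_of_maps_to (g := blk x)
    (t := J.powerset.filter (fun B => x ∈ B)) ?_]
  · refine Finset.sum_congr rfl fun B hB => ?_
    rw [Finset.mem_filter, Finset.mem_powerset] at hB
    obtain ⟨hBJ, hxB⟩ := hB
    rw [pSum, Finset.mul_sum]
    refine Finset.sum_nbij' (fun P => P.erase B) (fun Q => insert B Q) ?_ ?_ ?_ ?_ ?_
    · intro P hP
      rw [Finset.mem_filter] at hP
      obtain ⟨hP, hblk⟩ := hP
      obtain ⟨B', hB', hxB'⟩ := exists_block hP hx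
      have : B' = B := by rw [← blk_eq hP hB' hxB', hblk]
      subst this
      exact erase_mem_setPartitionsOf hP hB'
    · intro Q hQ
      rw [Finset.mem_filter]
      have h1 : insert B Q ∈ setPartitionsOf J :=
        insert_mem_setPartitionsOf hBJ ⟨x, hxB⟩ hQ
      exact ⟨h1, blk_eq h1 (Finset.mem_insert_self B Q) hxB⟩
    · intro P hP
      rw [Finset.mem_filter] at hP
      obtain ⟨hP, hblk⟩ := hP
      obtain ⟨B', hB', hxB'⟩ := exists_block hP hx
      have : B' = B := by rw [← blk_eq hP hB' hxB', hblk]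
      subst this
      exact Finset.insert_erase hB'
    · intro Q hQ
      exact Finset.erase_insert (not_mem_of_partition_sdiff hxB hQ)
    · intro P hP
      rw [Finset.mem_filter] at hP
      obtain ⟨hP, hblk⟩ := hP
      obtain ⟨B', hB', hxB'⟩ := exists_block hP hx
      have : B' = B := by rw [← blk_eq hP hB' hxB', hblk]
      subst this
      exact (Finset.mul_prod_erase P _ hB').symm
  · intro P hP
    obtain ⟨B, hB, hxB⟩ := exists_block hP hx
    rw [blk_eq hP hB hxB, Finset.mem_filter, Finset.mem_powerset]
    exact ⟨subset_of_mem_setPartitionsOf hP hB, hxB⟩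

lemma map_sup_blocks (f : α ↪ β) (P : Finset (Finset α)) :
    (P.image (fun B => B.map f)).sup id = (P.sup id).map f := by
  classical
  induction P using Finset.induction_on with
  | empty => simp
  | insert _ _ h ih => simp [Finset.sup_insert, ih, Finset.map_union]

lemma pSum_map (a : ℕ → ℚ) (f : α ↪ β) (J : Finset α) :
    pSum a (J.map f) = pSum a J := by
  classical
  rw [pSum, pSum]
  symm
  refine Finset.sum_nbij (fun P => P.image (fun B => B.map f)) ?_ ?_ ?_ ?_
  · -- maps to
    intro P hP
    obtain ⟨h1, h2, h3⟩ := mem_setPartitionsOf.mp hP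
    refine mem_setPartitionsOf.mpr ⟨?_, ?_, ?_⟩
    · intro h
      obtain ⟨B, hB, hBe⟩ := Finset.mem_image.mp h
      exact h1 (by rwa [Finset.map_eq_empty.mp hBe] at hB)
    · rw [map_sup_blocks, h2]
    · intro B' hB' C' hC' hne
      obtain ⟨B, hB, rfl⟩ := Finset.mem_image.mp hB'
      obtain ⟨C, hC, rfl⟩ := Finset.mem_image.mp hC'
      exact (Finset.disjoint_map f).mpr (h3 B hB C hC (fun h => hne (h ▸ rfl)))
  · -- inj on
    intro P _ P' _ h
    exact Finset.image_injective (Finset.map_injective f) h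
  · -- surj on
    intro Q hQ
    obtain ⟨h1, h2, h3⟩ := mem_setPartitionsOf.mp hQ
    set Ψ : Finset β → Finset α := fun C => J.filter (fun x => f x ∈ C) with hΨ
    have hkey : ∀ C ∈ Q, (Ψ C).map f = C := by
      intro C hC
      have hCJ : C ⊆ J.map f := subset_of_mem_setPartitionsOf hQ hC
      ext y
      simp only [hΨ, Finset.mem_map, Finset.mem_filter]
      constructor
      · rintro ⟨x, ⟨_, hfx⟩, rfl⟩; exact hfx
      · intro hy
        obtain ⟨x, hxJ, rfl⟩ := Finset.mem_map.mp (hCJ hy)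
        exact ⟨x, ⟨hxJ, hy⟩, rfl⟩
    have hmem : Q.image Ψ ∈ setPartitionsOf J := by
      refine mem_setPartitionsOf.mpr ⟨?_, ?_, ?_⟩
      · intro h
        obtain ⟨C, hC, hCe⟩ := Finset.mem_image.mp h
        have : C = ∅ := by rw [← hkey C hC, hCe, Finset.map_empty]
        exact h1 (this ▸ hC)
      · ext y
        rw [Finset.mem_sup]
        constructor
        · rintro ⟨D, hD, hyD⟩
          obtain ⟨C, hC, rfl⟩ := Finset.mem_image.mp hD
          exact (Finset.mem_filter.mp hyD).1
        · intro hy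
          have : f y ∈ Q.sup id := h2 ▸ Finset.mem_map_of_mem f hy
          obtain ⟨C, hC, hfy⟩ := Finset.mem_sup.mp this
          exact ⟨Ψ C, Finset.mem_image_of_mem Ψ hC, Finset.mem_filter.mpr ⟨hy, hfy⟩⟩
      · intro D hD D' hD' hne
        obtain ⟨C, hC, rfl⟩ := Finset.mem_image.mp hD
        obtain ⟨C', hC', rfl⟩ := Finset.mem_image.mp hD'
        have hCC' : C ≠ C' := fun h => hne (h ▸ rfl)
        refine Finset.disjoint_left.mpr ?_
        intro x hx hx'
        exact Finset.disjoint_left.mp (h3 C hC C' hC' hCC')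
          (Finset.mem_filter.mp hx).2 (Finset.mem_filter.mp hx').2
    refine ⟨Q.image Ψ, hmem, ?_⟩
    show (Q.image Ψ).image (fun B => B.map f) = Q
    rw [Finset.image_image]
    calc Q.image ((fun B => B.map f) ∘ Ψ) = Q.image id := Finset.image_congr fun C hC => hkey C hC
      _ = Q := Finset.image_id
  · -- values
    intro P hP
    rw [Finset.prod_image]
    · exact Finset.prod_congr rfl fun B _ => by rw [Finset.card_map]
    · intro B _ C _ h
      exact Finset.map_injective f h

lemma pSum_univ_fin (a : ℕ → ℚ) (n : ℕ) :
    pSum a (Finset.univ : Finset (Fin n)) = partitionSum a n := rfl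

lemma pSum_eq_partitionSum {α : Type*} [DecidableEq α] [LinearOrder α] (a : ℕ → ℚ)
    (J : Finset α) : pSum a J = partitionSum a J.card := by
  have e := J.orderEmbOfFin rfl
  have hmap : (Finset.univ : Finset (Fin J.card)).map (J.orderEmbOfFin rfl).toEmbedding = J := by
    ext y
    simp only [Finset.mem_map, Finset.mem_univ, true_and, RelEmbedding.coe_toEmbedding]
    constructor
    · rintro ⟨i, rfl⟩; exact J.orderEmbOfFin_mem rfl i
    · intro hy
      have : y ∈ Set.range (J.orderEmbOfFin rfl) := by
        rw [Finset.range_orderEmbOfFin]; exact hy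
      obtain ⟨i, hi⟩ := this
      exact ⟨i, hi⟩
  conv_lhs => rw [← hmap]
  rw [pSum_map, pSum_univ_fin]

lemma partitionSum_rec (a : ℕ → ℚ) (n : ℕ) :
    partitionSum a (n + 1) = ∑ j ∈ Finset.range (n + 1),
      (n.choose j : ℚ) * (a (j + 1) * partitionSum a (n - j)) := by
  have h := pSum_rec a (J := (Finset.univ : Finset (Fin (n+1)))) (x := 0) (Finset.mem_univ 0)
  rw [pSum_univ_fin] at h
  rw [h]
  have step1 : ∑ B ∈ Finset.univ.powerset.filter (fun B => (0 : Fin (n+1)) ∈ B),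
      a B.card * pSum a (Finset.univ \ B)
      = ∑ T ∈ (Finset.univ.erase (0 : Fin (n+1))).powerset,
        a (T.card + 1) * partitionSum a (n - T.card) := by
    refine Finset.sum_nbij' (fun B => B.erase 0) (fun T => insert 0 T) ?_ ?_ ?_ ?_ ?_
    · intro B hB
      rw [Finset.mem_filter] at hB
      rw [Finset.mem_powerset]
      exact Finset.erase_subset_erase 0 (Finset.subset_univ B)
    · intro T hT
      rw [Finset.mem_powerset] at hT
      rw [Finset.mem_filter]
      exact ⟨Finset.mem_powerset.mpr (Finset.subset_univ _), Finset.mem_insert_self 0 T⟩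
    · intro B hB
      rw [Finset.mem_filter] at hB
      exact Finset.insert_erase hB.2
    · intro T hT
      rw [Finset.mem_powerset] at hT
      refine Finset.erase_insert fun h0 => ?_
      exact (Finset.mem_erase.mp (hT h0)).1 rfl
    · intro B hB
      rw [Finset.mem_filter] at hB
      have hc : (B.erase 0).card + 1 = B.card := by
        rw [Finset.card_erase_of_mem hB.2]
        have : 1 ≤ B.card := Finset.card_pos.mpr ⟨0, hB.2⟩
        omega
      have hsd : (Finset.univ \ B).card = n - (B.erase 0).card := by
        rw [Finset.card_sdiff_of_subset (Finset.subset_univ B), Finset.card_univ, Fintype.card_fin]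
        omega
      rw [pSum_eq_partitionSum, hsd, hc]
  rw [step1, Finset.sum_powerset]
  have hcard : (Finset.univ.erase (0 : Fin (n+1))).card = n := by
    rw [Finset.card_erase_of_mem (Finset.mem_univ 0), Finset.card_univ, Fintype.card_fin]
    omega
  rw [hcard]
  refine Finset.sum_congr rfl fun j hj => ?_
  rw [Finset.mem_range] at hj
  have : ∀ T ∈ (Finset.univ.erase (0 : Fin (n+1))).powersetCard j,
      a (T.card + 1) * partitionSum a (n - T.card) = a (j + 1) * partitionSum a (n - j) := by
    intro T hT
    rw [(Finset.mem_powersetCard.mp hT).2]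
  rw [Finset.sum_congr rfl this, Finset.sum_const, Finset.card_powersetCard, hcard,
    nsmul_eq_mul]

/-- Exponential formula: if `a₀ = 0` and
`bₙ = ∑_{set partitions π of {1,…,n}} ∏_{B ∈ π} a_{|B|}` (with `b₀ = 1`), then as
formal power series over `ℚ`: `∑ₙ bₙ xⁿ/n! = exp (∑_{n≥1} aₙ xⁿ/n!)`. -/
theorem exponential_formula (a : ℕ → ℚ) (ha : a 0 = 0) :
    (PowerSeries.mk fun n => partitionSum a n / Nat.factorial n) =
      expOfSeries (PowerSeries.mk fun n => a n / Nat.factorial n) := by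
  set F : PowerSeries ℚ := PowerSeries.mk fun n => a n / Nat.factorial n with hF
  have hF0 : PowerSeries.constantCoeff (R := ℚ) F = 0 := by
    rw [hF, ← PowerSeries.coeff_zero_eq_constantCoeff_apply, PowerSeries.coeff_mk, ha]
    simp
  have hcF : ∀ j : ℕ, PowerSeries.coeff (R := ℚ) j F = a j / Nat.factorial j := fun j =>
    PowerSeries.coeff_mk j _
  have key : ∀ n : ℕ, partitionSum a n / Nat.factorial n
      = PowerSeries.coeff (R := ℚ) n (expOfSeries F) := by
    intro n
    induction n using Nat.strong_induction_on with
    | _ n ih =>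
      match n with
      | 0 =>
        rw [coeff_zero_expOfSeries]
        have : partitionSum a 0 = 1 := by
          rw [partitionSum, Finset.univ_eq_empty, setPartitionsOf_empty]
          simp
        rw [this]
        simp
      | Nat.succ m =>
        have hne : ((m : ℚ) + 1) ≠ 0 := by positivity
        refine mul_left_cancel₀ hne ?_
        rw [expOfSeries_rec hF0 m]
        have hR : ∑ k ∈ Finset.range (m + 1),
            ((m - k : ℕ) + 1 : ℚ) * PowerSeries.coeff (R := ℚ) ((m - k) + 1) F *
              PowerSeries.coeff (R := ℚ) k (expOfSeries F)
            = ∑ j ∈ Finset.range (m + 1),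
              ((j : ℚ) + 1) * (a (j + 1) / Nat.factorial (j + 1)) *
                (partitionSum a (m - j) / Nat.factorial (m - j)) := by
          rw [← Finset.sum_range_reflect]
          refine Finset.sum_congr rfl fun j hj => ?_
          rw [Finset.mem_range] at hj
          have h1 : m + 1 - 1 - j = m - j := by omega
          have h2 : m - (m - j) = j := by omega
          rw [h1, h2, hcF, ← ih (m - j) (by omega)]
        rw [hR, partitionSum_rec a m, Finset.sum_div, Finset.mul_sum]
        refine Finset.sum_congr rfl fun j hj => ?_
        rw [Finset.mem_range] at hj
        have hj' : j ≤ m := by omega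
        rw [Nat.cast_choose ℚ hj', Nat.factorial_succ (m : ℕ)]
        have f1 : (Nat.factorial j : ℚ) ≠ 0 := by positivity
        have f2 : (Nat.factorial (m - j) : ℚ) ≠ 0 := by positivity
        have f3 : (Nat.factorial m : ℚ) ≠ 0 := by positivity
        rw [Nat.factorial_succ j]
        push_cast
        field_simp
  ext n
  rw [PowerSeries.coeff_mk, key n]
end

section
/- Symmetry and periodicity of the breather K-function (part of Theorem 1): fix n >= 2, nu in R, and a function p : C^n x {0,1}^n -> C. Define K(theta) = sum over l in {0,1}^n of (-1)^{l_1 + ... + l_n} * ( product over 1 <= i < j <= n of (1 + (l_i - l_j)*i*sin(pi*nu)/sinh(theta_i - theta_j)) ) * p(theta, l), for theta in C^n with sinh(theta_i - theta_j) != 0 for all i < j. Then: (a) if p is invariant under the simultaneous exchange of (theta_i, l_i) and (theta_j, l_j) for all i, j, then K(theta) is a symmetric function of (theta_1, ..., theta_n); (b) if moreover p(theta_1 - 2*pi*i, theta_2, ..., theta_n, l) = p(theta_1, ..., theta_n, l), then K(theta_1 - 2*pi*i, theta_2, ..., theta_n) = K(theta_1, ..., theta_n). -/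
open scoped Real

private lemma prod_pairs_perm {n : ℕ} (σ : Equiv.Perm (Fin n)) (f : Fin n → Fin n → ℂ)
    (hf : ∀ a b, f a b = f b a) :
    ∏ q ∈ Finset.univ.filter (fun q : Fin n × Fin n => q.1 < q.2), f (σ q.1) (σ q.2)
      = ∏ q ∈ Finset.univ.filter (fun q : Fin n × Fin n => q.1 < q.2), f q.1 q.2 := by
  refine Finset.prod_nbij'
    (fun q => if σ q.1 < σ q.2 then (σ q.1, σ q.2) else (σ q.2, σ q.1))
    (fun q => if σ⁻¹ q.1 < σ⁻¹ q.2 then (σ⁻¹ q.1, σ⁻¹ q.2) else (σ⁻¹ q.2, σ⁻¹ q.1))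
    ?_ ?_ ?_ ?_ ?_
  · intro q hq
    simp only [Finset.mem_filter, Finset.mem_univ, true_and] at hq ⊢
    split_ifs with h
    · exact h
    · have : σ q.1 ≠ σ q.2 := fun hc => (hq.ne (σ.injective hc))
      exact lt_of_le_of_ne (not_lt.mp h) (Ne.symm this)
  · intro q hq
    simp only [Finset.mem_filter, Finset.mem_univ, true_and] at hq ⊢
    split_ifs with h
    · exact h
    · have : σ⁻¹ q.1 ≠ σ⁻¹ q.2 := fun hc => (hq.ne (σ⁻¹.injective hc))
      exact lt_of_le_of_ne (not_lt.mp h) (Ne.symm this)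
  · intro q hq
    simp only [Finset.mem_filter, Finset.mem_univ, true_and] at hq
    split_ifs <;> simp_all [Equiv.Perm.inv_def, Equiv.symm_apply_apply] <;>
      exact absurd (lt_trans hq ‹q.2 < q.1›) (lt_irrefl _)
  · intro q hq
    simp only [Finset.mem_filter, Finset.mem_univ, true_and] at hq
    split_ifs <;> simp_all [Equiv.Perm.inv_def, Equiv.apply_symm_apply] <;>
      exact absurd (lt_trans hq ‹q.2 < q.1›) (lt_irrefl _)
  · intro q hq
    split_ifs with h
    · rfl
    · exact hf _ _

private lemma sinh_sub_two_pi_I (z : ℂ) :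
    Complex.sinh (z - 2 * (π : ℂ) * Complex.I) = Complex.sinh z := by
  have h1 : Complex.exp (z - 2 * (π : ℂ) * Complex.I) = Complex.exp z := by
    rw [Complex.exp_sub, Complex.exp_two_pi_mul_I, div_one]
  have h2 : Complex.exp (-(z - 2 * (π : ℂ) * Complex.I)) = Complex.exp (-z) := by
    rw [show -(z - 2 * (π : ℂ) * Complex.I) = -z + 2 * π * Complex.I by ring,
      Complex.exp_add, Complex.exp_two_pi_mul_I, mul_one]
  rw [Complex.sinh, Complex.sinh, h1, h2]


/-- Symmetry and `2πi`-periodicity of the breather K-function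
`K(θ) = ∑_{l ∈ {0,1}ⁿ} (-1)^{∑ lᵢ} ∏_{i<j} (1 + (lᵢ-lⱼ) i sin(πν)/sinh(θᵢ-θⱼ)) p(θ,l)`:
(a) if `p` is invariant under simultaneous exchange of `(θᵢ,lᵢ)` and `(θⱼ,lⱼ)`,
then `K` is symmetric; (b) if moreover `p` is `2πi`-periodic in `θ₁`, then so
is `K`. -/
theorem breather_K_function_symmetry_periodicity (n : ℕ) (hn : 2 ≤ n) (ν : ℝ)
    (p : (Fin n → ℂ) → (Fin n → Fin 2) → ℂ) (K : (Fin n → ℂ) → ℂ)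
    (hK : ∀ θ : Fin n → ℂ, K θ =
      ∑ l : Fin n → Fin 2, (-1 : ℂ) ^ (∑ i, (l i : ℕ)) *
        (∏ q ∈ Finset.univ.filter (fun q : Fin n × Fin n => q.1 < q.2),
          (1 + (((l q.1 : ℕ) : ℂ) - ((l q.2 : ℕ) : ℂ)) * Complex.I * (Real.sin (π * ν) : ℂ) /
            Complex.sinh (θ q.1 - θ q.2))) * p θ l) :
    ((∀ (i j : Fin n) (θ : Fin n → ℂ) (l : Fin n → Fin 2),
        p (θ ∘ Equiv.swap i j) (l ∘ Equiv.swap i j) = p θ l) →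
      ∀ θ : Fin n → ℂ, (∀ i j, i ≠ j → Complex.sinh (θ i - θ j) ≠ 0) →
        ∀ i j : Fin n, K (θ ∘ Equiv.swap i j) = K θ) ∧
    ((∀ (i j : Fin n) (θ : Fin n → ℂ) (l : Fin n → Fin 2),
        p (θ ∘ Equiv.swap i j) (l ∘ Equiv.swap i j) = p θ l) →
      (∀ (θ : Fin n → ℂ) (l : Fin n → Fin 2),
        p (Function.update θ ⟨0, by omega⟩ (θ ⟨0, by omega⟩ - 2 * (π : ℂ) * Complex.I)) l
          = p θ l) →
      ∀ θ : Fin n → ℂ,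
        K (Function.update θ ⟨0, by omega⟩ (θ ⟨0, by omega⟩ - 2 * (π : ℂ) * Complex.I)) = K θ) := by
  constructor
  · intro hp θ _ i j
    rw [hK, hK]
    have hbij : Function.Bijective (fun l : Fin n → Fin 2 => l ∘ Equiv.swap i j) :=
      Function.Involutive.bijective fun l => by
        funext x; simp [Function.comp, Equiv.swap_apply_self]
    refine (Fintype.sum_bijective (fun l : Fin n → Fin 2 => l ∘ Equiv.swap i j) hbij _ _
      fun l => ?_).symm
    have h1 : (∑ k, (((l ∘ Equiv.swap i j) k : Fin 2) : ℕ)) = ∑ k, ((l k : ℕ)) :=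
      Equiv.sum_comp (Equiv.swap i j) (fun k => ((l k : ℕ)))
    have h2 := prod_pairs_perm (Equiv.swap i j)
      (fun a b => 1 + (((l a : ℕ) : ℂ) - ((l b : ℕ) : ℂ)) * Complex.I *
        (Real.sin (π * ν) : ℂ) / Complex.sinh (θ a - θ b))
      (fun a b => by
        rw [show θ b - θ a = -(θ a - θ b) by ring, Complex.sinh_neg]
        ring)
    simp only [Function.comp_apply] at h1 h2 ⊢
    rw [hp i j θ l, h1, h2]
  · intro hp hp2 θ
    rw [hK, hK]
    refine Finset.sum_congr rfl fun l _ => ?_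
    rw [hp2 θ l]
    congr 2
    refine Finset.prod_congr rfl fun q hq => ?_
    simp only [Finset.mem_filter, Finset.mem_univ, true_and] at hq
    have h2 : q.2 ≠ ⟨0, by omega⟩ := by
      intro h
      rw [h] at hq
      exact absurd hq (by simp [Fin.lt_def])
    by_cases h1 : q.1 = ⟨0, by omega⟩
    · rw [h1, Function.update_self, Function.update_of_ne h2,
        show θ ⟨0, by omega⟩ - 2 * (π : ℂ) * Complex.I - θ q.2
          = (θ ⟨0, by omega⟩ - θ q.2) - 2 * (π : ℂ) * Complex.I by ring,
        sinh_sub_two_pi_I]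
    · rw [Function.update_of_ne h1, Function.update_of_ne h2]
end

section
/- Decay of cumulants from clustering of moments: let n >= 2 and let I = {1, ..., n}. For each nonempty subset J of I not containing 1, let g_J be a complex constant (g_empty = 1); for each subset J containing 1, let g_J : R -> C be a function. Define the cumulants h by the partition relations: for each J containing 1, g_J(theta) = sum over set partitions pi of J of the product of h_B(theta) over blocks B of pi containing 1 times the product of h_B over the remaining blocks (constants), and similarly for J not containing 1 with constant cumulants h_B. Suppose for every J containing 1: lim as theta -> infinity of g_J(theta) = h_{{1}} * g_{J \ {1}}, where h_{{1}} = g_{{1}} is the limit constant of the one-element function. Then for every J containing 1 with |J| >= 2: lim as theta -> infinity of h_J(theta) = 0. -/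
open Filter

lemma mem_spo {J : Finset ℕ} {P : Finset (Finset ℕ)} :
    P ∈ setPartitionsOf J ↔
      ∅ ∉ P ∧ P.sup id = J ∧ ∀ B ∈ P, ∀ C ∈ P, B ≠ C → Disjoint B C := by
  simp only [setPartitionsOf, Finset.mem_filter, Finset.mem_powerset]
  constructor
  · tauto
  · intro hP
    refine ⟨fun B hB => ?_, hP⟩
    rw [Finset.mem_powerset]
    simpa using Finset.le_sup (f := id) hB |>.trans hP.2.1.le

lemma spo_singleton : setPartitionsOf ({1} : Finset ℕ) = {{{1}}} := by decide

lemma top_mem_spo {J : Finset ℕ} (hJ : J.Nonempty) : {J} ∈ setPartitionsOf J := by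
  rw [mem_spo]
  refine ⟨by simp [hJ.ne_empty.symm], by simp, by simp⟩

/-- Partitions of `J` containing the block `{1}` biject with partitions of `J \ {1}`. -/
lemma sum_filter_singleton (J : Finset ℕ) (h1 : (1:ℕ) ∈ J) (f : Finset ℕ → ℂ) :
    ∑ P ∈ (setPartitionsOf J).filter (fun P => ({1} : Finset ℕ) ∈ P), ∏ B ∈ P, f B
      = f {1} * ∑ P ∈ setPartitionsOf (J \ {1}), ∏ B ∈ P, f B := by
  rw [Finset.mul_sum]
  refine Finset.sum_nbij' (fun P => P.erase {1}) (fun P => insert ({1} : Finset ℕ) P)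
    ?_ ?_ ?_ ?_ ?_
  · -- maps into partitions of J \ {1}
    intro P hP
    rw [Finset.mem_filter] at hP
    obtain ⟨hP, hmem⟩ := hP
    rw [mem_spo] at hP ⊢
    obtain ⟨hne, hsup, hdisj⟩ := hP
    refine ⟨fun hc => hne (Finset.mem_of_mem_erase hc), ?_, ?_⟩
    · ext x
      rw [Finset.mem_sup, Finset.mem_sdiff]
      constructor
      · rintro ⟨B, hB, hxB⟩
        have hBP := Finset.mem_of_mem_erase hB
        have hBne := Finset.ne_of_mem_erase hB
        constructor
        · rw [← hsup, Finset.mem_sup]; exact ⟨B, hBP, hxB⟩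
        · intro hx1
          exact Finset.disjoint_left.1 (hdisj B hBP {1} hmem hBne) hxB hx1
      · rintro ⟨hxJ, hx1⟩
        rw [← hsup, Finset.mem_sup] at hxJ
        obtain ⟨B, hB, hxB⟩ := hxJ
        refine ⟨B, Finset.mem_erase.2 ⟨?_, hB⟩, hxB⟩
        rintro rfl
        exact hx1 (by simpa using hxB)
    · intro B hB C hC hBC
      exact hdisj B (Finset.mem_of_mem_erase hB) C (Finset.mem_of_mem_erase hC) hBC
  · -- inverse maps into the filtered set
    intro P hP
    rw [mem_spo] at hP
    obtain ⟨hne, hsup, hdisj⟩ := hP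
    have hblock : ∀ B ∈ P, (1:ℕ) ∉ B := by
      intro B hB hxB
      have : (1:ℕ) ∈ P.sup id := Finset.mem_sup.2 ⟨B, hB, hxB⟩
      rw [hsup, Finset.mem_sdiff] at this
      exact this.2 (by simp)
    have hnot : ({1} : Finset ℕ) ∉ P := fun hc => hblock _ hc (by simp)
    rw [Finset.mem_filter, mem_spo]
    refine ⟨⟨?_, ?_, ?_⟩, by simp⟩
    · simp only [Finset.mem_insert]
      rintro (hc | hc)
      · exact absurd hc.symm (Finset.singleton_ne_empty 1)
      · exact hne hc
    · rw [Finset.sup_insert, hsup]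
      have h2 := Finset.sdiff_union_of_subset (Finset.singleton_subset_iff.2 h1)
      rw [Finset.union_comm] at h2
      simpa [Finset.sup_eq_union] using h2
    · intro B hB C hC hBC
      simp only [Finset.mem_insert] at hB hC
      rcases hB with rfl | hB <;> rcases hC with rfl | hC
      · exact absurd rfl hBC
      · exact Finset.disjoint_singleton_left.2 (hblock C hC)
      · exact (Finset.disjoint_singleton_left.2 (hblock B hB)).symm
      · exact hdisj B hB C hC hBC
  · intro P hP
    rw [Finset.mem_filter] at hP
    exact Finset.insert_erase hP.2
  · intro P hP
    rw [mem_spo] at hP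
    have hblock : ∀ B ∈ P, (1:ℕ) ∉ B := by
      intro B hB hxB
      have : (1:ℕ) ∈ P.sup id := Finset.mem_sup.2 ⟨B, hB, hxB⟩
      rw [hP.2.1, Finset.mem_sdiff] at this
      exact this.2 (by simp)
    exact Finset.erase_insert fun hc => hblock _ hc (by simp)
  · intro P hP
    rw [Finset.mem_filter] at hP
    exact (Finset.mul_prod_erase P f hP.2).symm


/-- Decay of cumulants from clustering of moments: on `I = {1,…,n}` let the
moments `g J` be given by the partition relations
`g J (θ) = ∑_{partitions P of J} ∏_{B ∈ P} h B (θ)`, where `g J` and `h J` are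
constant in `θ` whenever `1 ∉ J`.  If `g {1} (θ) → c` and, for every `J ∋ 1`
with `|J| ≥ 2`, `g J (θ) → c · g (J \ {1})` as `θ → ∞` (cluster property), then
every cumulant `h J` with `1 ∈ J` and `|J| ≥ 2` tends to `0` as `θ → ∞`. -/
theorem cumulant_decay_of_clustering (n : ℕ) (hn : 2 ≤ n)
    (I : Finset ℕ) (hI : I = Finset.Icc 1 n)
    (g h : Finset ℕ → ℝ → ℂ)
    (hconstg : ∀ J ⊆ I, 1 ∉ J → ∀ θ θ' : ℝ, g J θ = g J θ')
    (hconsth : ∀ J ⊆ I, 1 ∉ J → ∀ θ θ' : ℝ, h J θ = h J θ')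
    (hrel : ∀ J ⊆ I, ∀ θ : ℝ, g J θ = ∑ P ∈ setPartitionsOf J, ∏ B ∈ P, h B θ)
    (c : ℂ) (hc : Tendsto (g {1}) atTop (nhds c))
    (hcluster : ∀ J ⊆ I, 1 ∈ J → 2 ≤ J.card →
      Tendsto (g J) atTop (nhds (c * g (J \ {1}) 0))) :
    ∀ J ⊆ I, 1 ∈ J → 2 ≤ J.card → Tendsto (h J) atTop (nhds 0) := by
  -- h {1} = g {1}
  have h1I : ({1} : Finset ℕ) ⊆ I := by
    simp [hI, Finset.singleton_subset_iff, Finset.mem_Icc]; omega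
  have hone : ∀ θ, h {1} θ = g {1} θ := by
    intro θ
    rw [hrel {1} h1I θ, spo_singleton]
    simp
  have hhc : Tendsto (h {1}) atTop (nhds c) := hc.congr fun θ => (hone θ).symm
  intro J
  induction J using Finset.strongInduction with
  | _ J ih =>
    intro hJI h1J hcard
    have hKI : J \ {1} ⊆ I := (Finset.sdiff_subset).trans hJI
    have h1K : (1:ℕ) ∉ J \ {1} := by simp
    -- the partition sum splits
    set S₂ := (setPartitionsOf J).filter (fun P => ({1} : Finset ℕ) ∉ P) with hS₂
    have hJne : J.Nonempty := ⟨1, h1J⟩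
    have hJne1 : J ≠ {1} := by
      intro hc; rw [hc] at hcard; simp at hcard
    have htop : ({J} : Finset (Finset ℕ)) ∈ S₂ := by
      rw [hS₂, Finset.mem_filter]
      exact ⟨top_mem_spo hJne, by simp [Ne.symm hJne1]⟩
    -- key equation
    have key : ∀ θ, h J θ =
        g J θ - h {1} θ * g (J \ {1}) 0
          - ∑ P ∈ S₂.erase {J}, ∏ B ∈ P, h B θ := by
      intro θ
      have e1 := hrel J hJI θ
      rw [← Finset.sum_filter_add_sum_filter_not (setPartitionsOf J)
        (fun P => ({1} : Finset ℕ) ∈ P), sum_filter_singleton J h1J (fun B => h B θ)] at e1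
      have e2 : ∑ P ∈ setPartitionsOf (J \ {1}), ∏ B ∈ P, h B θ = g (J \ {1}) 0 := by
        rw [← hrel (J \ {1}) hKI θ]
        exact hconstg _ hKI h1K θ 0
      rw [e2] at e1
      have e3 : ∑ P ∈ S₂, ∏ B ∈ P, h B θ
          = h J θ + ∑ P ∈ S₂.erase {J}, ∏ B ∈ P, h B θ := by
        rw [← Finset.add_sum_erase S₂ _ htop]
        simp
      rw [← hS₂, e3] at e1
      rw [e1]; ring
    -- each remaining partition's product tends to 0
    have hrest : Tendsto (fun θ => ∑ P ∈ S₂.erase {J}, ∏ B ∈ P, h B θ) atTop (nhds 0) := by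
      have : Tendsto (fun θ => ∑ P ∈ S₂.erase {J}, ∏ B ∈ P, h B θ) atTop
          (nhds (∑ P ∈ S₂.erase {J}, (0:ℂ))) := by
        refine tendsto_finset_sum _ ?_
        intro P hPe
        have hPne : P ≠ {J} := (Finset.mem_erase.1 hPe).1
        have hPS : P ∈ S₂ := Finset.mem_of_mem_erase hPe
        rw [hS₂, Finset.mem_filter] at hPS
        obtain ⟨hPpart, hP1not⟩ := hPS
        rw [mem_spo] at hPpart
        obtain ⟨hne, hsup, hdisj⟩ := hPpart
        -- block containing 1
        have : (1:ℕ) ∈ P.sup id := by rw [hsup]; exact h1J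
        rw [Finset.mem_sup] at this
        obtain ⟨B₀, hB₀P, h1B₀⟩ := this
        have hB₀J : B₀ ⊆ J := by
          intro x hx
          rw [← hsup]; exact Finset.mem_sup.2 ⟨B₀, hB₀P, hx⟩
        have hB₀ne1 : B₀ ≠ {1} := fun hc => hP1not (hc ▸ hB₀P)
        have hB₀card : 2 ≤ B₀.card := by
          have hss : ({1} : Finset ℕ) ⊂ B₀ :=
            Finset.ssubset_iff_subset_ne.2
              ⟨Finset.singleton_subset_iff.2 h1B₀, Ne.symm hB₀ne1⟩
          have := Finset.card_lt_card hss
          simp at this; omega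
        have hB₀neJ : B₀ ≠ J := by
          intro heq
          apply hPne
          ext C
          simp only [Finset.mem_singleton]
          constructor
          · intro hC
            by_contra hCne
            have hCneB : C ≠ B₀ := fun hc => hCne (hc.trans heq)
            have hd := hdisj C hC B₀ hB₀P hCneB
            have hCJ : C ⊆ J := fun x hx => by
              rw [← hsup]; exact Finset.mem_sup.2 ⟨C, hC, hx⟩
            have hCe : C = ∅ := Finset.eq_empty_of_forall_notMem fun x hx =>
              Finset.disjoint_left.1 hd hx (heq ▸ hCJ hx)
            exact hne (hCe ▸ hC)
          · intro hc; rw [hc, ← heq]; exact hB₀P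
        have hB₀sub : B₀ ⊂ J := Finset.ssubset_iff_subset_ne.2 ⟨hB₀J, hB₀neJ⟩
        have hB₀tend : Tendsto (h B₀) atTop (nhds 0) :=
          ih B₀ hB₀sub (hB₀J.trans hJI) h1B₀ hB₀card
        -- other blocks are constant
        have hconst : ∀ B ∈ P.erase B₀, ∀ θ, h B θ = h B 0 := by
          intro B hB θ
          have hBP := Finset.mem_of_mem_erase hB
          have hBne := Finset.ne_of_mem_erase hB
          have h1B : (1:ℕ) ∉ B :=
            fun hc => Finset.disjoint_left.1 (hdisj B hBP B₀ hB₀P hBne) hc h1B₀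
          have hBJ : B ⊆ J := fun x hx => by
            rw [← hsup]; exact Finset.mem_sup.2 ⟨B, hBP, hx⟩
          exact hconsth B (hBJ.trans hJI) h1B θ 0
        have heq : ∀ θ, ∏ B ∈ P, h B θ = h B₀ θ * ∏ B ∈ P.erase B₀, h B 0 := by
          intro θ
          rw [← Finset.mul_prod_erase P _ hB₀P]
          congr 1
          exact Finset.prod_congr rfl fun B hB => hconst B hB θ
        rw [show (0:ℂ) = 0 * ∏ B ∈ P.erase B₀, h B 0 by ring]
        exact (hB₀tend.mul_const _).congr fun θ => (heq θ).symm
      simpa using this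
    have hg : Tendsto (g J) atTop (nhds (c * g (J \ {1}) 0)) :=
      hcluster J hJI h1J hcard
    have := (hg.sub (hhc.mul_const (g (J \ {1}) 0))).sub hrest
    rw [show c * g (J \ {1}) 0 - c * g (J \ {1}) 0 - 0 = 0 by ring] at this
    exact this.congr fun θ => (key θ).symm
end
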